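/- arXiv:1906.06488 — 5 statements merged into one kernel-verified Lean document; each statement's English description precedes it below -/
import Mathlib

section
/- For every integer n ≥ 6, the super-connectivity of the Johnson graph J(n,2) equals 3(n−3); that is, there exists a super vertex-cut of J(n,2) of size 3(n−3), and every super vertex-cut of J(n,2) has at least 3(n−3) vertices. -/
open SimpleGraph Finset

/-- Vertex type of the Johnson graph `J(n,k)`: the `k`-element subsets of `[n]`. -/
abbrev JV (n k : ℕ) := {s : Finset (Fin n) // s.card = k}

/-- The Johnson graph `J(n,k)`: two `k`-subsets are adjacent iff their
intersection has exactly `k-1` elements. -/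
def johnsonGraph (n k : ℕ) : SimpleGraph (JV n k) where
  Adj u v := u ≠ v ∧ (u.val ∩ v.val).card = k - 1
  symm := by
    constructor
    intro u v h
    exact ⟨h.1.symm, by rw [Finset.inter_comm]; exact h.2⟩
  loopless := by
    constructor
    intro u h
    exact h.1 rfl

/-- `S` is a vertex-cut of `G` if deleting `S` disconnects `G`. -/
def IsVertexCut {V : Type*} (G : SimpleGraph V) (S : Set V) : Prop :=
  ¬ (G.induce Sᶜ).Preconnected

/-- `S` is a super vertex-cut of `G` if deleting `S` disconnects `G` and
leaves no isolated vertex. -/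
def IsSuperVertexCut {V : Type*} (G : SimpleGraph V) (S : Set V) : Prop :=
  IsVertexCut G S ∧ ∀ v : ↥Sᶜ, ∃ w : ↥Sᶜ, (G.induce Sᶜ).Adj v w

/-- The super-connectivity of `G`: the least cardinality of a super vertex-cut,
or `⊤` if none exists. -/
noncomputable def superConnectivity {V : Type*} [Fintype V] (G : SimpleGraph V) : ℕ∞ :=
  sInf {m : ℕ∞ | ∃ S : Finset V, IsSuperVertexCut G ↑S ∧ (S.card : ℕ∞) = m}

/-- `S` is a minimum super vertex-cut of `G`. -/
def IsMinSuperVertexCut {V : Type*} [Fintype V] (G : SimpleGraph V) (S : Finset V) : Prop :=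
  IsSuperVertexCut G ↑S ∧ ∀ T : Finset V, IsSuperVertexCut G ↑T → S.card ≤ T.card

lemma inter_card_le_one {n : ℕ} {a b : Finset (Fin n)} (ha : a.card = 2) (hb : b.card = 2)
    (hne : a ≠ b) : (a ∩ b).card ≤ 1 := by
  by_contra h
  push_neg at h
  have h1 : a ∩ b = a := eq_of_subset_of_card_le inter_subset_left (by omega)
  have h2 : a ∩ b = b := eq_of_subset_of_card_le inter_subset_right (by omega)
  exact hne (h1.symm.trans h2)

lemma adj_of_shared {n : ℕ} {p q : JV n 2} (hne : p ≠ q) {x : Fin n}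
    (hxp : x ∈ p.val) (hxq : x ∈ q.val) : (johnsonGraph n 2).Adj p q := by
  refine ⟨hne, ?_⟩
  have h1 : (p.val ∩ q.val).card ≤ 1 :=
    inter_card_le_one p.2 q.2 (fun h => hne (Subtype.ext h))
  have h2 : 0 < (p.val ∩ q.val).card :=
    Finset.card_pos.mpr ⟨x, Finset.mem_inter.mpr ⟨hxp, hxq⟩⟩
  omega

lemma cross_card {n : ℕ} (X : Finset (Fin n)) :
    (univ.filter (fun p : {s : Finset (Fin n) // s.card = 2} => (p.val ∩ X).card = 1)).card
      = X.card * Xᶜ.card := by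
  rw [← Finset.card_product X Xᶜ]
  symm
  apply Finset.card_bij (fun a ha => (⟨{a.1, a.2}, by
    have := Finset.mem_product.mp ha
    rw [Finset.card_pair]
    intro h
    exact (Finset.mem_compl.mp this.2) (h ▸ this.1)⟩ : {s : Finset (Fin n) // s.card = 2}))
  · rintro ⟨x, y⟩ ha
    have hm := Finset.mem_product.mp ha
    simp only [mem_filter, mem_univ, true_and]
    have : ({x, y} : Finset (Fin n)) ∩ X = {x} := by
      ext z
      simp only [mem_inter, mem_insert, mem_singleton]
      constructor
      · rintro ⟨(rfl | rfl), hz⟩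
        · rfl
        · exact absurd hz (Finset.mem_compl.mp hm.2)
      · rintro rfl; exact ⟨Or.inl rfl, hm.1⟩
    rw [this, Finset.card_singleton]
  · rintro ⟨x, y⟩ ha ⟨x', y'⟩ hb heq
    have hma := Finset.mem_product.mp ha
    have hmb := Finset.mem_product.mp hb
    have h : ({x, y} : Finset (Fin n)) = {x', y'} := congrArg Subtype.val heq
    have hx : x' = x := by
      have : x' ∈ ({x, y} : Finset (Fin n)) := h ▸ (by simp)
      rcases Finset.mem_insert.mp this with h1 | h1
      · exact h1
      · exfalso; rw [Finset.mem_singleton] at h1; subst h1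
        exact (Finset.mem_compl.mp hma.2) hmb.1
    have hy : y' = y := by
      have : y' ∈ ({x, y} : Finset (Fin n)) := h ▸ (by simp)
      rcases Finset.mem_insert.mp this with h1 | h1
      · exfalso; subst h1; exact (Finset.mem_compl.mp hmb.2) hma.1
      · exact (Finset.mem_singleton.mp h1)
    simp [hx, hy]
  · rintro ⟨p, hp⟩ hmem
    simp only [mem_filter, mem_univ, true_and] at hmem
    obtain ⟨x, hx⟩ := Finset.card_eq_one.mp hmem
    have hxp : x ∈ p := (Finset.mem_of_mem_inter_left (hx ▸ Finset.mem_singleton_self x))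
    have hxX : x ∈ X := (Finset.mem_of_mem_inter_right (hx ▸ Finset.mem_singleton_self x))
    obtain ⟨a, b, hab, hpab⟩ := Finset.card_eq_two.mp hp
    have hxab : x = a ∨ x = b := by
      rw [hpab] at hxp; simpa using hxp
    -- y is the other element
    obtain ⟨y, hy1, hy2⟩ : ∃ y, p = {x, y} ∧ x ≠ y := by
      rcases hxab with rfl | rfl
      · exact ⟨b, hpab, hab⟩
      · exact ⟨a, by rw [hpab, Finset.pair_comm], hab.symm⟩
    have hyX : y ∉ X := by
      intro hyX
      have : y ∈ p ∩ X := Finset.mem_inter.mpr ⟨by rw [hy1]; simp, hyX⟩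
      rw [hx, Finset.mem_singleton] at this
      exact hy2 this.symm
    refine ⟨(x, y), Finset.mem_product.mpr ⟨hxX, Finset.mem_compl.mpr hyX⟩, ?_⟩
    exact Subtype.ext (by simp [hy1])

lemma lower_bound {n : ℕ} (hn : 6 ≤ n) (S : Finset (JV n 2))
    (h : IsSuperVertexCut (johnsonGraph n 2) ↑S) : 3 * (n - 3) ≤ S.card := by
  classical
  obtain ⟨hcut, hiso⟩ := h
  rw [IsVertexCut, SimpleGraph.Preconnected] at hcut
  push_neg at hcut
  obtain ⟨u, v, huv⟩ := hcut
  set G' := (johnsonGraph n 2).induce (↑S : Set (JV n 2))ᶜ with hG'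
  set X : Finset (Fin n) :=
    univ.filter (fun x => ∃ w : ↥(↑S : Set (JV n 2))ᶜ,
      G'.Reachable u w ∧ x ∈ (w : JV n 2).val) with hXdef
  have memX : ∀ x : Fin n, x ∈ X ↔ ∃ w : ↥(↑S : Set (JV n 2))ᶜ,
      G'.Reachable u w ∧ x ∈ (w : JV n 2).val := by
    intro x; simp [hXdef]
  -- closure
  have closure : ∀ p : ↥(↑S : Set (JV n 2))ᶜ,
      (∃ x ∈ (p : JV n 2).val, x ∈ X) → G'.Reachable u p := by
    rintro p ⟨x, hxp, hxX⟩
    obtain ⟨w, hw, hxw⟩ := (memX x).mp hxX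
    by_cases hpw : w = p
    · exact hpw ▸ hw
    · refine hw.trans (SimpleGraph.Adj.reachable ?_)
      show (johnsonGraph n 2).Adj (w : JV n 2) (p : JV n 2)
      exact adj_of_shared (fun h => hpw (Subtype.ext h)) hxw hxp
  have reach_sub : ∀ w : ↥(↑S : Set (JV n 2))ᶜ, G'.Reachable u w →
      (w : JV n 2).val ⊆ X := by
    intro w hw x hx
    exact (memX x).mpr ⟨w, hw, hx⟩
  -- cross pairs are in S
  have cross_sub : ∀ p : JV n 2, (p.val ∩ X).card = 1 → p ∈ S := by
    intro p hp
    by_contra hpS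
    have hpS' : p ∈ (↑S : Set (JV n 2))ᶜ := by simpa using hpS
    obtain ⟨x, hx⟩ := Finset.card_eq_one.mp hp
    have hxp : x ∈ p.val := Finset.mem_of_mem_inter_left (hx ▸ Finset.mem_singleton_self x)
    have hxX : x ∈ X := Finset.mem_of_mem_inter_right (hx ▸ Finset.mem_singleton_self x)
    have hreach := closure ⟨p, hpS'⟩ ⟨x, hxp, hxX⟩
    have hsub := reach_sub ⟨p, hpS'⟩ hreach
    have : p.val ∩ X = p.val := Finset.inter_eq_left.mpr hsub
    rw [this, p.2] at hp
    omega
  -- |X| ≥ 3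
  have card_union_three : ∀ a b : ↥(↑S : Set (JV n 2))ᶜ, G'.Adj a b →
      ((a : JV n 2).val ∪ (b : JV n 2).val).card = 3 := by
    intro a b hab
    have hadj : (johnsonGraph n 2).Adj (a : JV n 2) (b : JV n 2) := hab
    have h1 := Finset.card_union_add_card_inter (a : JV n 2).val (b : JV n 2).val
    have h2 := hadj.2
    have h3 := (a : JV n 2).2
    have h4 := (b : JV n 2).2
    omega
  have hX3 : 3 ≤ X.card := by
    obtain ⟨w, hw⟩ := hiso u
    have hreachw : G'.Reachable u w := SimpleGraph.Adj.reachable hw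
    have hsub : (u : JV n 2).val ∪ (w : JV n 2).val ⊆ X :=
      Finset.union_subset (reach_sub u (SimpleGraph.Reachable.refl u)) (reach_sub w hreachw)
    calc 3 = ((u : JV n 2).val ∪ (w : JV n 2).val).card := (card_union_three u w hw).symm
    _ ≤ X.card := Finset.card_le_card hsub
  -- v side
  have disjX : ∀ p : ↥(↑S : Set (JV n 2))ᶜ, G'.Reachable v p →
      (p : JV n 2).val ⊆ Xᶜ := by
    intro p hp x hx
    rw [Finset.mem_compl]
    intro hxX
    exact huv ((closure p ⟨x, hx, hxX⟩).trans hp.symm)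
  have hXc3 : 3 ≤ Xᶜ.card := by
    obtain ⟨w, hw⟩ := hiso v
    have hsub : (v : JV n 2).val ∪ (w : JV n 2).val ⊆ Xᶜ :=
      Finset.union_subset (disjX v (SimpleGraph.Reachable.refl v))
        (disjX w (SimpleGraph.Adj.reachable hw))
    calc 3 = ((v : JV n 2).val ∪ (w : JV n 2).val).card := (card_union_three v w hw).symm
    _ ≤ Xᶜ.card := Finset.card_le_card hsub
  -- counting
  have hcount : X.card * Xᶜ.card ≤ S.card := by
    rw [← cross_card X]
    apply Finset.card_le_card
    intro p hp
    simp only [mem_filter] at hp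
    exact cross_sub p hp.2
  have hXcompl : X.card + Xᶜ.card = n := by
    have := Finset.card_add_card_compl X
    simpa using this
  -- arithmetic
  obtain ⟨s, hs⟩ : ∃ s, X.card = 3 + s := ⟨X.card - 3, by omega⟩
  obtain ⟨t, ht⟩ : ∃ t, Xᶜ.card = 3 + t := ⟨Xᶜ.card - 3, by omega⟩
  have hab : X.card * Xᶜ.card = 9 + 3*s + 3*t + s*t := by rw [hs, ht]; ring
  have h1 : 3 * (n - 3) = 9 + 3*s + 3*t := by omega
  omega

lemma upper_bound {n : ℕ} (hn : 6 ≤ n) :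
    ∃ S : Finset (JV n 2), IsSuperVertexCut (johnsonGraph n 2) ↑S ∧ S.card = 3 * (n - 3) := by
  classical
  set e0 : Fin n := ⟨0, by omega⟩
  set e1 : Fin n := ⟨1, by omega⟩
  set e2 : Fin n := ⟨2, by omega⟩
  set e3 : Fin n := ⟨3, by omega⟩
  set e4 : Fin n := ⟨4, by omega⟩
  set T : Finset (Fin n) := {e0, e1, e2} with hT
  have hTcard : T.card = 3 := by
    rw [hT, Finset.card_insert_of_notMem, Finset.card_insert_of_notMem, Finset.card_singleton]
    · simp [e1, e2, Fin.ext_iff]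
    · simp [e0, e1, e2, Fin.ext_iff]
  set S : Finset (JV n 2) := univ.filter (fun p : JV n 2 => (p.val ∩ T).card = 1) with hS
  have memSc : ∀ p : JV n 2, p ∈ (↑S : Set (JV n 2))ᶜ ↔ (p.val ∩ T).card ≠ 1 := by
    intro p; simp [hS]
  -- step: adjacency preserves ⊆ T
  have step : ∀ a b : ↥(↑S : Set (JV n 2))ᶜ,
      ((johnsonGraph n 2).induce (↑S : Set (JV n 2))ᶜ).Adj a b →
      (a : JV n 2).val ⊆ T → (b : JV n 2).val ⊆ T := by
    intro a b hab haT
    have hadj : (johnsonGraph n 2).Adj (a : JV n 2) (b : JV n 2) := hab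
    obtain ⟨x, hx⟩ := Finset.card_pos.mp (by rw [hadj.2]; omega :
      0 < ((a : JV n 2).val ∩ (b : JV n 2).val).card)
    rw [Finset.mem_inter] at hx
    have h1 : 0 < ((b : JV n 2).val ∩ T).card :=
      Finset.card_pos.mpr ⟨x, Finset.mem_inter.mpr ⟨hx.2, haT hx.1⟩⟩
    have h2 : ((b : JV n 2).val ∩ T).card ≠ 1 := (memSc _).mp b.2
    have h3 : ((b : JV n 2).val ∩ T).card ≤ 2 := by
      calc ((b : JV n 2).val ∩ T).card ≤ (b : JV n 2).val.card :=
        Finset.card_le_card Finset.inter_subset_left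
      _ = 2 := (b : JV n 2).2
    have h4 : ((b : JV n 2).val ∩ T) = (b : JV n 2).val := by
      apply eq_of_subset_of_card_le Finset.inter_subset_left
      rw [(b : JV n 2).2]; omega
    rw [← h4]
    exact Finset.inter_subset_right
  refine ⟨S, ?_, ?_⟩
  · refine ⟨?_, ?_⟩
    · -- not preconnected
      intro hpre
      have h01 : ({e0, e1} : Finset (Fin n)).card = 2 :=
        Finset.card_pair (by simp [e0, e1, Fin.ext_iff])
      have h34 : ({e3, e4} : Finset (Fin n)).card = 2 :=
        Finset.card_pair (by simp [e3, e4, Fin.ext_iff])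
      have ht0 : (⟨{e0, e1}, h01⟩ : JV n 2) ∈ (↑S : Set (JV n 2))ᶜ := by
        rw [memSc]
        have : ({e0, e1} : Finset (Fin n)) ∩ T = {e0, e1} := by
          apply Finset.inter_eq_left.mpr
          intro z hz
          rw [hT]
          rcases Finset.mem_insert.mp hz with rfl | hz
          · simp
          · rw [Finset.mem_singleton] at hz; subst hz; simp
        rw [this, h01]; omega
      have ho : (⟨{e3, e4}, h34⟩ : JV n 2) ∈ (↑S : Set (JV n 2))ᶜ := by
        rw [memSc]
        have : ({e3, e4} : Finset (Fin n)) ∩ T = ∅ := by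
          rw [Finset.eq_empty_iff_forall_notMem]
          intro z hz
          rw [Finset.mem_inter] at hz
          have h1 := hz.1
          have h2 := hz.2
          rw [hT] at h2
          simp only [Finset.mem_insert, Finset.mem_singleton] at h1 h2
          rcases h1 with rfl | rfl <;> rcases h2 with h | h | h <;>
            simp_all [e0, e1, e2, e3, e4, Fin.ext_iff]
        rw [this]; simp
      obtain ⟨p⟩ := hpre ⟨_, ht0⟩ ⟨_, ho⟩
      have inv : ∀ (a b : ↥(↑S : Set (JV n 2))ᶜ)
          (q : ((johnsonGraph n 2).induce (↑S : Set (JV n 2))ᶜ).Walk a b),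
          (a : JV n 2).val ⊆ T → (b : JV n 2).val ⊆ T := by
        intro a b q
        induction q with
        | nil => exact id
        | cons h q ih => intro ha; exact ih (step _ _ h ha)
      have h34T : ({e3, e4} : Finset (Fin n)) ⊆ T := inv _ _ p (by
        intro z hz
        rw [hT]
        rcases Finset.mem_insert.mp hz with rfl | hz
        · simp
        · rw [Finset.mem_singleton] at hz; subst hz; simp)
      have : e3 ∈ T := h34T (by simp)
      rw [hT] at this
      simp only [Finset.mem_insert, Finset.mem_singleton] at this
      rcases this with h | h | h <;>
        exact absurd (congrArg Fin.val h) (by simp [e0, e1, e2, e3])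
    · -- no isolated vertex
      intro p
      have hp2 : ((p : JV n 2).val ∩ T).card ≠ 1 := (memSc _).mp p.2
      have hple : ((p : JV n 2).val ∩ T).card ≤ 2 := by
        calc _ ≤ (p : JV n 2).val.card := Finset.card_le_card Finset.inter_subset_left
        _ = 2 := (p : JV n 2).2
      obtain ⟨a, ha⟩ := Finset.card_pos.mp (by rw [(p : JV n 2).2]; omega :
        0 < (p : JV n 2).val.card)
      rcases Nat.lt_or_ge ((p : JV n 2).val ∩ T).card 1 with hc | hc
      · -- card 0 : disjoint from T
        have hdisj : (p : JV n 2).val ∩ T = ∅ := Finset.card_eq_zero.mp (by omega)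
        -- pick c outside T ∪ p.val
        have hcompl : (T ∪ (p : JV n 2).val)ᶜ.Nonempty := by
          rw [← Finset.card_pos, Finset.card_compl]
          have h1 : (T ∪ (p : JV n 2).val).card ≤ 5 := by
            calc _ ≤ T.card + (p : JV n 2).val.card := Finset.card_union_le _ _
            _ = 5 := by rw [hTcard, (p : JV n 2).2]
          simp only [Fintype.card_fin]
          omega
        obtain ⟨c, hc'⟩ := hcompl
        rw [Finset.mem_compl, Finset.mem_union, not_or] at hc'
        have hac : a ≠ c := fun h => hc'.2 (h ▸ ha)
        have hw2 : ({a, c} : Finset (Fin n)).card = 2 := Finset.card_pair hac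
        have hwS : (⟨{a, c}, hw2⟩ : JV n 2) ∈ (↑S : Set (JV n 2))ᶜ := by
          rw [memSc]
          have : ({a, c} : Finset (Fin n)) ∩ T = ∅ := by
            rw [Finset.eq_empty_iff_forall_notMem]
            intro z hz
            rw [Finset.mem_inter, Finset.mem_insert, Finset.mem_singleton] at hz
            rcases hz.1 with rfl | rfl
            · exact absurd (Finset.mem_inter.mpr ⟨ha, hz.2⟩) (by rw [hdisj]; simp)
            · exact hc'.1 hz.2
          rw [this]; simp
        refine ⟨⟨_, hwS⟩, ?_⟩
        show (johnsonGraph n 2).Adj (p : JV n 2) _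
        refine adj_of_shared ?_ ha (by simp : a ∈ ({a, c} : Finset (Fin n)))
        intro h
        have : c ∈ (p : JV n 2).val := by
          rw [congrArg Subtype.val h]; simp
        exact hc'.2 this
      · -- card 2 : p.val ⊆ T
        have h4 : ((p : JV n 2).val ∩ T) = (p : JV n 2).val := by
          apply eq_of_subset_of_card_le Finset.inter_subset_left
          rw [(p : JV n 2).2]; omega
        have hpT : (p : JV n 2).val ⊆ T := by rw [← h4]; exact Finset.inter_subset_right
        -- pick c in T \ p.val
        have hTp : (T \ (p : JV n 2).val).Nonempty := by
          rw [← Finset.card_pos, Finset.card_sdiff_of_subset hpT, hTcard, (p : JV n 2).2]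
          omega
        obtain ⟨c, hc'⟩ := hTp
        rw [Finset.mem_sdiff] at hc'
        have hac : a ≠ c := fun h => hc'.2 (h ▸ ha)
        have hw2 : ({a, c} : Finset (Fin n)).card = 2 := Finset.card_pair hac
        have hwS : (⟨{a, c}, hw2⟩ : JV n 2) ∈ (↑S : Set (JV n 2))ᶜ := by
          rw [memSc]
          have : ({a, c} : Finset (Fin n)) ∩ T = {a, c} := by
            apply Finset.inter_eq_left.mpr
            intro z hz
            rw [Finset.mem_insert, Finset.mem_singleton] at hz
            rcases hz with rfl | rfl
            · exact hpT ha
            · exact hc'.1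
          rw [this, hw2]; omega
        refine ⟨⟨_, hwS⟩, ?_⟩
        show (johnsonGraph n 2).Adj (p : JV n 2) _
        refine adj_of_shared ?_ ha (by simp : a ∈ ({a, c} : Finset (Fin n)))
        intro h
        have : c ∈ (p : JV n 2).val := by
          rw [congrArg Subtype.val h]; simp
        exact hc'.2 this
  · -- cardinality
    rw [hS, cross_card, hTcard, Finset.card_compl, hTcard, Fintype.card_fin]

/-- For `n ≥ 6`, the super-connectivity of `J(n,2)` equals `3(n-3)`:
there is a super vertex-cut of this size, and every super vertex-cut is at
least this large. -/
theorem superConnectivity_johnson_two (n : ℕ) (hn : 6 ≤ n) :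
    superConnectivity (johnsonGraph n 2) = ((3 * (n - 3) : ℕ) : ℕ∞) ∧
    (∃ S : Finset (JV n 2),
        IsSuperVertexCut (johnsonGraph n 2) ↑S ∧ S.card = 3 * (n - 3)) ∧
    (∀ S : Finset (JV n 2),
        IsSuperVertexCut (johnsonGraph n 2) ↑S → 3 * (n - 3) ≤ S.card) := by
  obtain ⟨S₀, hS₀, hcard⟩ := upper_bound hn
  refine ⟨?_, ⟨S₀, hS₀, hcard⟩, fun S hS => lower_bound hn S hS⟩
  apply le_antisymm
  · exact sInf_le ⟨S₀, hS₀, by rw [hcard]⟩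
  · apply le_sInf
    rintro m ⟨S, hS, rfl⟩
    exact_mod_cast lower_bound hn S hS
end

section
/- Let k ≥ 3 and n ≥ k+3 be integers, and let S be a minimum super vertex-cut of the Johnson graph J(n,k). Then for every element r ∈ [n] there is at least one vertex of S (a k-subset of [n]) that contains r. -/
open SimpleGraph Finset

lemma swap_card {n k : ℕ} (u : JV n k) {a b : Fin n} (ha : a ∈ u.val) (hb : b ∉ u.val) :
    (insert b (u.val.erase a)).card = k := by
  rw [Finset.card_insert_of_notMem (fun h => hb (Finset.mem_of_mem_erase h)),
    Finset.card_erase_of_mem ha, u.2]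
  have : 1 ≤ k := u.2 ▸ Finset.card_pos.2 ⟨a, ha⟩
  omega

lemma swap_adj {n k : ℕ} (u : JV n k) {a b : Fin n} (ha : a ∈ u.val) (hb : b ∉ u.val) :
    (johnsonGraph n k).Adj u ⟨insert b (u.val.erase a), swap_card u ha hb⟩ := by
  constructor
  · intro h
    have : b ∈ u.val := by rw [h]; exact Finset.mem_insert_self _ _
    exact hb this
  · have : u.val ∩ insert b (u.val.erase a) = u.val.erase a := by
      ext x
      simp only [Finset.mem_inter, Finset.mem_insert, Finset.mem_erase]
      constructor
      · rintro ⟨hx, (rfl | h)⟩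
        · exact absurd hx hb
        · exact ⟨h.1, h.2⟩
      · rintro ⟨hxa, hx⟩; exact ⟨hx, Or.inr ⟨hxa, hx⟩⟩
    rw [this, Finset.card_erase_of_mem ha, u.2]

lemma reach_layer {n k : ℕ} (S : Finset (JV n k)) (r : Fin n)
    (hSr : ∀ x ∈ S, r ∉ x.val) :
    ∀ m : ℕ, ∀ u v : JV n k, (u.val \ v.val).card = m → r ∈ u.val → r ∈ v.val →
      ∀ (hu : u ∈ (↑S : Set (JV n k))ᶜ) (hv : v ∈ (↑S : Set (JV n k))ᶜ),
      ((johnsonGraph n k).induce (↑S : Set (JV n k))ᶜ).Reachable ⟨u, hu⟩ ⟨v, hv⟩ := by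
  intro m
  induction m with
  | zero =>
    intro u v hm hru hrv hu hv
    have hsub : u.val ⊆ v.val := by
      rw [← Finset.sdiff_eq_empty_iff_subset]
      exact Finset.card_eq_zero.1 hm
    have : u.val = v.val := Finset.eq_of_subset_of_card_le hsub (by rw [u.2, v.2])
    have : u = v := Subtype.ext this
    subst this
    exact Reachable.refl _
  | succ m ih =>
    intro u v hm hru hrv hu hv
    -- u ≠ v, pick a ∈ u \ v, b ∈ v \ u
    have hne : (u.val \ v.val).Nonempty := by
      rw [← Finset.card_pos, hm]; omega
    obtain ⟨a, ha⟩ := hne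
    have hau : a ∈ u.val := (Finset.mem_sdiff.1 ha).1
    have hav : a ∉ v.val := (Finset.mem_sdiff.1 ha).2
    have hne2 : (v.val \ u.val).Nonempty := by
      by_contra h
      rw [Finset.not_nonempty_iff_eq_empty, Finset.sdiff_eq_empty_iff_subset] at h
      have : v.val = u.val := Finset.eq_of_subset_of_card_le h (by rw [u.2, v.2])
      rw [this] at hav
      exact hav hau
    obtain ⟨b, hb⟩ := hne2
    have hbv : b ∈ v.val := (Finset.mem_sdiff.1 hb).1
    have hbu : b ∉ u.val := (Finset.mem_sdiff.1 hb).2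
    set u' : JV n k := ⟨insert b (u.val.erase a), swap_card u hau hbu⟩ with hu'def
    have hru' : r ∈ u'.val := by
      apply Finset.mem_insert_of_mem
      apply Finset.mem_erase.2 ⟨?_, hru⟩
      intro h; subst h; exact hav hrv
    have hu'S : u' ∈ (↑S : Set (JV n k))ᶜ := fun h => hSr u' h hru'
    have hadj : ((johnsonGraph n k).induce (↑S : Set (JV n k))ᶜ).Adj ⟨u, hu⟩ ⟨u', hu'S⟩ :=
      swap_adj u hau hbu
    have hcard : (u'.val \ v.val).card = m := by
      have : u'.val \ v.val = (u.val \ v.val).erase a := by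
        ext x
        simp only [hu'def, Finset.mem_sdiff, Finset.mem_insert, Finset.mem_erase]
        constructor
        · rintro ⟨(rfl | ⟨hxa, hxu⟩), hxv⟩
          · exact absurd hbv hxv
          · exact ⟨hxa, hxu, hxv⟩
        · rintro ⟨hxa, hxu, hxv⟩
          exact ⟨Or.inr ⟨hxa, hxu⟩, hxv⟩
      rw [this, Finset.card_erase_of_mem ha, hm]; omega
    exact hadj.reachable.trans (ih u' v hcard hru' hrv hu'S hv)

private theorem mem_vertex_aux (n k : ℕ) (hk : 3 ≤ k) (hn : k + 3 ≤ n)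
    (S : Finset (JV n k))
    (hcut : ¬ ((johnsonGraph n k).induce (↑S : Set (JV n k))ᶜ).Preconnected) :
    ∀ r : Fin n, ∃ x ∈ S, r ∈ x.val := by
  intro r
  by_contra h
  push_neg at h
  apply hcut
  -- helper: every vertex in Sᶜ reaches a vertex containing r
  have step : ∀ (u : JV n k) (hu : u ∈ (↑S : Set (JV n k))ᶜ),
      ∃ (u' : JV n k) (hu' : u' ∈ (↑S : Set (JV n k))ᶜ), r ∈ u'.val ∧
        ((johnsonGraph n k).induce (↑S : Set (JV n k))ᶜ).Reachable ⟨u, hu⟩ ⟨u', hu'⟩ := by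
    intro u hu
    by_cases hru : r ∈ u.val
    · exact ⟨u, hu, hru, Reachable.refl _⟩
    · have hne : u.val.Nonempty := by
        rw [← Finset.card_pos, u.2]; omega
      obtain ⟨a, ha⟩ := hne
      set w : JV n k := ⟨insert r (u.val.erase a), swap_card u ha hru⟩ with hwdef
      have hwS : w ∈ (↑S : Set (JV n k))ᶜ := fun hmem => h _ hmem (Finset.mem_insert_self _ _)
      have hadj : ((johnsonGraph n k).induce (↑S : Set (JV n k))ᶜ).Adj ⟨u, hu⟩ ⟨w, hwS⟩ :=
        swap_adj u ha hru
      exact ⟨w, hwS, Finset.mem_insert_self _ _, hadj.reachable⟩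
  intro u v
  obtain ⟨u0, hu0⟩ := u
  obtain ⟨v0, hv0⟩ := v
  obtain ⟨u', hu', hru', hRu⟩ := step u0 hu0
  obtain ⟨v', hv', hrv', hRv⟩ := step v0 hv0
  exact hRu.trans ((reach_layer S r h _ u' v' rfl hru' hrv' hu' hv').trans hRv.symm)

/-- Every element `r ∈ [n]` is contained in at least one vertex of a minimum
super vertex-cut of `J(n,k)`, for `k ≥ 3` and `n ≥ k+3`. -/
theorem mem_vertex_of_minSuperVertexCut (n k : ℕ) (hk : 3 ≤ k) (hn : k + 3 ≤ n)
    (S : Finset (JV n k)) (hS : IsMinSuperVertexCut (johnsonGraph n k) S) :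
    ∀ r : Fin n, ∃ x ∈ S, r ∈ x.val :=
  mem_vertex_aux n k hk hn S hS.1.1
end

section
/- Let k ≥ 3 and n ≥ k+3 be integers, let S be a minimum super vertex-cut of the Johnson graph G = J(n,k), let C be a smallest connected component of G−S, and let C* denote the union of the remaining components of G−S. Then there exists an element r ∈ [n] such that some vertex of C does not contain r and some vertex of C* does not contain r. -/
open SimpleGraph Finset

/-- number of `k`-subsets containing a fixed set `A`. -/
lemma count_supersets {n k : ℕ} (A : Finset (Fin n)) (hA : A.card ≤ k) :
    ((univ : Finset (JV n k)).filter fun v => A ⊆ v.val).card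
      = (n - A.card).choose (k - A.card) := by
  have hpc := Finset.card_powersetCard (k - A.card) Aᶜ
  rw [Finset.card_compl, Fintype.card_fin] at hpc
  rw [← hpc]
  apply Finset.card_bij' (i := fun v _ => v.val \ A)
    (j := fun w hw => (⟨w ∪ A, by
      rw [mem_powersetCard] at hw
      have hd : Disjoint w A := Finset.disjoint_left.mpr
        (fun x hx => Finset.mem_compl.mp (hw.1 hx))
      rw [card_union_of_disjoint hd, hw.2]
      omega⟩ : JV n k))
  case hi =>
    intro v hv
    rw [mem_filter] at hv
    rw [mem_powersetCard]
    constructor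
    · intro x hx
      exact Finset.mem_compl.mpr (Finset.mem_sdiff.mp hx).2
    · rw [card_sdiff_of_subset hv.2, v.prop]
  case hj =>
    intro w hw
    rw [mem_filter]
    exact ⟨mem_univ _, Finset.subset_union_right⟩
  case left_inv =>
    intro v hv
    rw [mem_filter] at hv
    exact Subtype.ext (Finset.sdiff_union_of_subset hv.2)
  case right_inv =>
    intro w hw
    rw [mem_powersetCard] at hw
    have hd : Disjoint w A := Finset.disjoint_left.mpr
      (fun x hx => Finset.mem_compl.mp (hw.1 hx))
    show (w ∪ A) \ A = w
    rw [Finset.union_sdiff_right, Finset.sdiff_eq_self_of_disjoint hd]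

/-- number of `k`-subsets disjoint from a fixed set `A`. -/
lemma count_disjoints {n k : ℕ} (A : Finset (Fin n)) :
    ((univ : Finset (JV n k)).filter fun v => Disjoint v.val A).card
      = (n - A.card).choose k := by
  have hpc := Finset.card_powersetCard k Aᶜ
  rw [Finset.card_compl, Fintype.card_fin] at hpc
  rw [← hpc]
  apply Finset.card_bij' (i := fun v _ => v.val)
    (j := fun w hw => (⟨w, (mem_powersetCard.mp hw).2⟩ : JV n k))
  case hi =>
    intro v hv
    rw [mem_filter] at hv
    rw [mem_powersetCard]
    exact ⟨fun x hx => Finset.mem_compl.mpr (Finset.disjoint_left.mp hv.2 hx), v.prop⟩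
  case hj =>
    intro w hw
    rw [mem_powersetCard] at hw
    rw [mem_filter]
    exact ⟨mem_univ _, Finset.disjoint_left.mpr fun x hx => Finset.mem_compl.mp (hw.1 hx)⟩
  case left_inv => intro v hv; rfl
  case right_inv => intro w hw; rfl

lemma swap_card_s3 {n k : ℕ} (v : JV n k) {e f : Fin n} (he : e ∈ v.val) (hf : f ∉ v.val) :
    (insert f (v.val.erase e)).card = k := by
  have hpos : 0 < k := v.prop ▸ Finset.card_pos.mpr ⟨e, he⟩
  rw [Finset.card_insert_of_notMem (fun h => hf (Finset.mem_of_mem_erase h)),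
    Finset.card_erase_of_mem he, v.prop]
  omega

lemma swap_adj_s3 {n k : ℕ} (v : JV n k) {e f : Fin n} (he : e ∈ v.val) (hf : f ∉ v.val) :
    (johnsonGraph n k).Adj v ⟨insert f (v.val.erase e), swap_card_s3 v he hf⟩ := by
  constructor
  · intro h
    apply hf
    rw [show v.val = insert f (v.val.erase e) from congrArg Subtype.val h]
    exact Finset.mem_insert_self _ _
  · have hinter : v.val ∩ insert f (v.val.erase e) = v.val.erase e := by
      ext x
      simp only [Finset.mem_inter, Finset.mem_insert, Finset.mem_erase]
      constructor
      · rintro ⟨hv, hx | hx⟩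
        · exact absurd (hx ▸ hv) hf
        · exact hx
      · rintro ⟨hne, hv⟩
        exact ⟨hv, Or.inr ⟨hne, hv⟩⟩
    rw [hinter, Finset.card_erase_of_mem he, v.prop]

lemma card2_cases {α : Type*} [DecidableEq α] {P v : Finset α} (hP : P.card = 2)
    (h : (v ∩ P).card ≠ 1) : P ⊆ v ∨ Disjoint v P := by
  have h2 : (v ∩ P).card ≤ 2 := hP ▸ Finset.card_le_card Finset.inter_subset_right
  rcases Nat.lt_or_ge (v ∩ P).card 1 with h0 | h1
  · right
    rw [Finset.disjoint_iff_inter_eq_empty, ← Finset.card_eq_zero]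
    omega
  · left
    have : (v ∩ P) = P := Finset.eq_of_subset_of_card_le Finset.inter_subset_right (by omega)
    rw [← this]
    exact Finset.inter_subset_left

/-- lower bound for binomial coefficients -/
lemma choose_lb : ∀ (j N : ℕ), 1 ≤ j → j ≤ N → N - j + 1 ≤ N.choose j := by
  intro j
  induction j with
  | zero => omega
  | succ j ih =>
    intro N h1 hN
    rcases Nat.eq_or_lt_of_le h1 with h | h
    · rw [← h, Nat.choose_one_right]; omega
    · obtain ⟨N', rfl⟩ : ∃ N', N = N' + 1 := ⟨N - 1, by omega⟩
      rw [Nat.choose_succ_succ]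
      have := ih N' (by omega) (by omega)
      omega

/-- exchange lemma: pushing mass to the extremes increases the sum of binomials -/
lemma choose_exchange (m : ℕ) (hm : 1 ≤ m) : ∀ (s t : ℕ), m + 1 ≤ s → s ≤ t →
    s.choose m + t.choose m ≤ (m + 1) + (s + t - (m + 1)).choose m := by
  intro s
  induction s using Nat.strong_induction_on with
  | _ s ih =>
    intro t hs hst
    rcases Nat.eq_or_lt_of_le hs with h | h
    · rw [← h]
      have : m + 1 + t - (m + 1) = t := by omega
      rw [show (m+1) + t - (m+1) = t by omega, Nat.choose_succ_self_right]
    · obtain ⟨s', rfl⟩ : ∃ s', s = s' + 1 := ⟨s - 1, by omega⟩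
      obtain ⟨m', rfl⟩ : ∃ m', m = m' + 1 := ⟨m - 1, by omega⟩
      have pascal : (s' + 1).choose (m' + 1) = s'.choose m' + s'.choose (m' + 1) :=
        Nat.choose_succ_succ _ _
      have hmono : s'.choose m' ≤ t.choose m' := Nat.choose_le_choose _ (by omega)
      have pascal2 : (t + 1).choose (m' + 1) = t.choose m' + t.choose (m' + 1) :=
        Nat.choose_succ_succ _ _
      have hrec := ih s' (by omega) (t + 1) (by omega) (by omega)
      rw [show s' + (t + 1) - (m' + 1 + 1) = s' + 1 + t - (m' + 1 + 1) by omega] at hrec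
      omega

/-- the main arithmetic contradiction -/
lemma arith_main (n k a b : ℕ) (hk : 3 ≤ k) (hn : k + 3 ≤ n)
    (hak : a + 1 ≤ k) (hbk : b + 1 ≤ k) (hab : n ≤ a + b) :
    (n - a).choose (k - a) + (n - b).choose (k - b)
      < (n - 2).choose (k - 2) + (n - 2).choose k := by
  set m := n - k with hm
  have hm3 : 3 ≤ m := by omega
  have hkm : m + 2 ≤ k := by omega
  set s := n - a with hsdef
  set t := n - b with htdef
  have hs1 : m + 1 ≤ s := by omega
  have ht1 : m + 1 ≤ t := by omega
  have hstn : s + t ≤ n := by omega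
  have e1 : (n - a).choose (k - a) = s.choose m := by
    rw [← Nat.choose_symm (show k - a ≤ n - a by omega)]
    congr 1; omega
  have e2 : (n - b).choose (k - b) = t.choose m := by
    rw [← Nat.choose_symm (show k - b ≤ n - b by omega)]
    congr 1; omega
  have e3 : (n - 2).choose (k - 2) = (n - 2).choose m := by
    rw [← Nat.choose_symm (show k - 2 ≤ n - 2 by omega)]
    congr 1; omega
  have e4 : (n - 2).choose k = (n - 2).choose (m - 2) := by
    rw [← Nat.choose_symm (show k ≤ n - 2 by omega)]
    congr 1; omega
  rw [e1, e2, e3, e4]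
  have key : s.choose m + t.choose m ≤ (m + 1) + (n - (m + 1)).choose m := by
    rcases Nat.le_total s t with h | h
    · have := choose_exchange m (by omega) s t hs1 h
      have hmono : (s + t - (m+1)).choose m ≤ (n - (m+1)).choose m :=
        Nat.choose_le_choose _ (by omega)
      omega
    · have := choose_exchange m (by omega) t s ht1 h
      have hmono : (t + s - (m+1)).choose m ≤ (n - (m+1)).choose m :=
        Nat.choose_le_choose _ (by omega)
      omega
  have h5 : (n - (m + 1)).choose m ≤ (n - 2).choose m :=
    Nat.choose_le_choose _ (by omega)
  have h6 : m + 1 < (n - 2).choose (m - 2) := by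
    have := choose_lb (m - 2) (n - 2) (by omega) (by omega)
    omega
  omega

section Cut

variable (n k : ℕ)

/-- An explicit super vertex-cut of the Johnson graph with known cardinality defect. -/
lemma johnson_exists_cut (hk : 3 ≤ k) (hn : k + 3 ≤ n) :
    ∃ T : Finset (JV n k), IsSuperVertexCut (johnsonGraph n k) ↑T ∧
      T.card + ((n - 2).choose (k - 2) + (n - 2).choose k) = n.choose k := by
  classical
  have hn2 : 2 ≤ n := by omega
  set p0 : Fin n := ⟨0, by omega⟩ with hp0
  set p1 : Fin n := ⟨1, by omega⟩ with hp1
  have hp01 : p0 ≠ p1 := by simp [hp0, hp1, Fin.ext_iff]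
  set P : Finset (Fin n) := {p0, p1} with hP
  have hPcard : P.card = 2 := by
    rw [hP, card_insert_of_notMem (by simp [hp01]), card_singleton]
  set T : Finset (JV n k) := univ.filter (fun v => (v.val ∩ P).card = 1) with hT
  have hmemTc : ∀ v : JV n k, v ∈ (↑T : Set (JV n k))ᶜ ↔ (v.val ∩ P).card ≠ 1 := by
    intro v; simp [hT]
  -- vertices of the two sides
  obtain ⟨u2, hu2P, -, hu2card⟩ :=
    Finset.exists_subsuperset_card_eq (n := k) (Finset.subset_univ P) (by rw [hPcard]; omega)
      (by rw [Finset.card_univ, Fintype.card_fin]; omega)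
  obtain ⟨w0, -, hw0sub, hw0card⟩ :=
    Finset.exists_subsuperset_card_eq (n := k) (Finset.empty_subset Pᶜ) (by simp)
      (by rw [Finset.card_compl, Fintype.card_fin, hPcard]; omega)
  have hw0disj : Disjoint w0 P :=
    Finset.disjoint_left.mpr fun x hx => Finset.mem_compl.mp (hw0sub hx)
  have hu2mem : (⟨u2, hu2card⟩ : JV n k) ∈ (↑T : Set (JV n k))ᶜ := by
    rw [hmemTc]
    rw [Finset.inter_eq_right.mpr hu2P, hPcard]
    omega
  have hw0mem : (⟨w0, hw0card⟩ : JV n k) ∈ (↑T : Set (JV n k))ᶜ := by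
    rw [hmemTc]
    rw [Finset.disjoint_iff_inter_eq_empty.mp hw0disj]
    simp
  refine ⟨T, ⟨?_, ?_⟩, ?_⟩
  · -- vertex cut
    intro hpre
    -- invariant: reachability preserves containing P
    have step : ∀ u v : ↥(↑T : Set (JV n k))ᶜ,
        ((johnsonGraph n k).induce (↑T : Set (JV n k))ᶜ).Adj u v →
        P ⊆ u.val.val → P ⊆ v.val.val := by
      intro u v huv hPu
      have hadj : (johnsonGraph n k).Adj u.val v.val := huv
      rcases card2_cases hPcard ((hmemTc v.val).mp v.prop) with h | h
      · exact h
      · exfalso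
        have hsub : u.val.val ∩ v.val.val ⊆ u.val.val \ P := by
          intro x hx
          rw [Finset.mem_inter] at hx
          exact Finset.mem_sdiff.mpr ⟨hx.1, Finset.disjoint_left.mp h hx.2⟩
        have hc := Finset.card_le_card hsub
        rw [hadj.2, Finset.card_sdiff_of_subset hPu, u.val.prop, hPcard] at hc
        omega
    have key : ∀ (x y : ↥(↑T : Set (JV n k))ᶜ)
        (w : ((johnsonGraph n k).induce (↑T : Set (JV n k))ᶜ).Walk x y),
        P ⊆ x.val.val → P ⊆ y.val.val := by
      intro x y w
      induction w with
      | nil => exact id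
      | cons h p ih => exact fun hPx => ih (step _ _ h hPx)
    obtain ⟨w⟩ := hpre ⟨⟨u2, hu2card⟩, hu2mem⟩ ⟨⟨w0, hw0card⟩, hw0mem⟩
    have hPw0 : P ⊆ w0 := key _ _ w hu2P
    have hp0P : p0 ∈ P := by rw [hP]; exact Finset.mem_insert_self _ _
    exact Finset.disjoint_left.mp hw0disj (hPw0 hp0P) hp0P
  · -- no isolated vertices
    intro v
    rcases card2_cases hPcard ((hmemTc v.val).mp v.prop) with h | h
    · -- P ⊆ v : swap an element outside P
      have he : (v.val.val \ P).Nonempty := by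
        rw [← Finset.card_pos, Finset.card_sdiff_of_subset h, v.val.prop, hPcard]
        omega
      obtain ⟨e, he'⟩ := he
      rw [Finset.mem_sdiff] at he'
      have hf : (v.val.valᶜ).Nonempty := by
        rw [← Finset.card_pos, Finset.card_compl, Fintype.card_fin, v.val.prop]
        omega
      obtain ⟨f, hf'⟩ := hf
      rw [Finset.mem_compl] at hf'
      have hfP : f ∉ P := fun hfp => hf' (h hfp)
      have hPw : P ⊆ insert f (v.val.val.erase e) := by
        intro x hx
        exact Finset.mem_insert_of_mem (Finset.mem_erase.mpr
          ⟨fun hxe => he'.2 (hxe ▸ hx), h hx⟩)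
      refine ⟨⟨⟨insert f (v.val.val.erase e), swap_card_s3 v.val he'.1 hf'⟩, ?_⟩, ?_⟩
      · rw [hmemTc]
        rw [Finset.inter_eq_right.mpr hPw, hPcard]
        omega
      · exact swap_adj_s3 v.val he'.1 hf'
    · -- disjoint from P : swap, avoiding P
      have he : v.val.val.Nonempty := by
        rw [← Finset.card_pos, v.val.prop]; omega
      obtain ⟨e, he'⟩ := he
      have hf : (v.val.val ∪ P)ᶜ.Nonempty := by
        rw [← Finset.card_pos, Finset.card_compl, Fintype.card_fin]
        have := Finset.card_union_le v.val.val P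
        rw [v.val.prop, hPcard] at this
        omega
      obtain ⟨f, hf'⟩ := hf
      rw [Finset.mem_compl, Finset.mem_union] at hf'
      push_neg at hf'
      have hdisj : Disjoint (insert f (v.val.val.erase e)) P := by
        rw [Finset.disjoint_left]
        intro x hx
        rcases Finset.mem_insert.mp hx with rfl | hx'
        · exact hf'.2
        · exact Finset.disjoint_left.mp h (Finset.mem_of_mem_erase hx')
      refine ⟨⟨⟨insert f (v.val.val.erase e), swap_card_s3 v.val he' hf'.1⟩, ?_⟩, ?_⟩
      · rw [hmemTc]
        rw [Finset.disjoint_iff_inter_eq_empty.mp hdisj]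
        simp
      · exact swap_adj_s3 v.val he' hf'.1
  · -- cardinality
    have h1 := Finset.card_filter_add_card_filter_not
      (s := (univ : Finset (JV n k))) (p := fun v => (v.val ∩ P).card = 1)
    have h2 : (univ : Finset (JV n k)).filter (fun v => ¬ (v.val ∩ P).card = 1)
        = univ.filter (fun v => P ⊆ v.val) ∪ univ.filter (fun v => Disjoint v.val P) := by
      ext v
      simp only [Finset.mem_filter, Finset.mem_union, Finset.mem_univ, true_and]
      constructor
      · exact fun h => card2_cases hPcard h
      · rintro (h | h)
        · rw [Finset.inter_eq_right.mpr h, hPcard]; omega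
        · rw [Finset.disjoint_iff_inter_eq_empty.mp h]; simp
    have hdisj2 : Disjoint ((univ : Finset (JV n k)).filter (fun v => P ⊆ v.val))
        (univ.filter (fun v => Disjoint v.val P)) := by
      rw [Finset.disjoint_left]
      intro v hv hv'
      rw [Finset.mem_filter] at hv hv'
      exact Finset.disjoint_left.mp hv'.2 (hv.2 (Finset.mem_insert_self p0 {p1}))
        (Finset.mem_insert_self p0 {p1})
    rw [h2, Finset.card_union_of_disjoint hdisj2,
      count_supersets P (by omega), count_disjoints P, hPcard] at h1
    rw [Finset.card_univ] at h1
    have htot : Fintype.card (JV n k) = n.choose k := by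
      simpa using Fintype.card_finset_len (α := Fin n) k
    rw [htot] at h1
    exact h1

end Cut

/-- If `S` is a minimum super vertex-cut of `J(n,k)` (`k ≥ 3`, `n ≥ k+3`),
`C` is a smallest component of `G - S`, and `C*` the union of the remaining
components, then some `r ∈ [n]` is omitted by a vertex of `C` and by a vertex
of `C*`. -/
theorem exists_elem_omitted_in_both (n k : ℕ) (hk : 3 ≤ k) (hn : k + 3 ≤ n)
    (S : Finset (JV n k)) (hS : IsMinSuperVertexCut (johnsonGraph n k) S)
    (C : ((johnsonGraph n k).induce ((↑S : Set (JV n k))ᶜ)).ConnectedComponent)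
    (hC : ∀ D : ((johnsonGraph n k).induce ((↑S : Set (JV n k))ᶜ)).ConnectedComponent,
      {v | ((johnsonGraph n k).induce ((↑S : Set (JV n k))ᶜ)).connectedComponentMk v = C}.ncard ≤
      {v | ((johnsonGraph n k).induce ((↑S : Set (JV n k))ᶜ)).connectedComponentMk v = D}.ncard) :
    ∃ r : Fin n,
      (∃ x : ↥((↑S : Set (JV n k))ᶜ),
        ((johnsonGraph n k).induce ((↑S : Set (JV n k))ᶜ)).connectedComponentMk x = C ∧
        r ∉ x.val.val) ∧
      (∃ y : ↥((↑S : Set (JV n k))ᶜ),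
        ((johnsonGraph n k).induce ((↑S : Set (JV n k))ᶜ)).connectedComponentMk y ≠ C ∧
        r ∉ y.val.val) := by
  classical
  by_contra hcon
  push_neg at hcon
  obtain ⟨⟨hcut, hiso⟩, hmin⟩ := hS
  -- the sets A and B of elements contained in every vertex of C resp. C*
  set A : Finset (Fin n) := univ.filter
    (fun r => ∀ x : ↥((↑S : Set (JV n k))ᶜ), ((johnsonGraph n k).induce ((↑S : Set (JV n k))ᶜ)).connectedComponentMk x = C → r ∈ x.val.val)
    with hA
  set B : Finset (Fin n) := univ.filter
    (fun r => ∀ y : ↥((↑S : Set (JV n k))ᶜ), ((johnsonGraph n k).induce ((↑S : Set (JV n k))ᶜ)).connectedComponentMk y ≠ C → r ∈ y.val.val)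
    with hB
  have hABunion : ∀ r : Fin n, r ∈ A ∨ r ∈ B := by
    intro r
    by_cases hall : ∀ x : ↥((↑S : Set (JV n k))ᶜ), ((johnsonGraph n k).induce ((↑S : Set (JV n k))ᶜ)).connectedComponentMk x = C → r ∈ x.val.val
    · left; rw [hA, mem_filter]; exact ⟨mem_univ _, hall⟩
    · right
      push_neg at hall
      rw [hB, mem_filter]
      exact ⟨mem_univ _, hcon r hall⟩
  have hcardAB : n ≤ A.card + B.card := by
    have hsub : (univ : Finset (Fin n)) ⊆ A ∪ B :=
      fun r _ => Finset.mem_union.mpr (hABunion r)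
    have := Finset.card_le_card hsub
    rw [Finset.card_univ, Fintype.card_fin] at this
    exact le_trans this (Finset.card_union_le _ _)
  -- a vertex of C and a neighbor
  obtain ⟨x0, hx0⟩ := C.exists_rep
  obtain ⟨x1, hx01⟩ := hiso x0
  have hx1 : ((johnsonGraph n k).induce ((↑S : Set (JV n k))ᶜ)).connectedComponentMk x1 = C := by
    rw [← hx0]
    exact SimpleGraph.ConnectedComponent.sound hx01.symm.reachable
  have hadjx : (johnsonGraph n k).Adj x0.val x1.val := hx01
  have hAsub : A ⊆ x0.val.val ∩ x1.val.val := by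
    intro r hr
    rw [hA, mem_filter] at hr
    exact Finset.mem_inter.mpr ⟨hr.2 x0 hx0, hr.2 x1 hx1⟩
  have hAcard : A.card + 1 ≤ k := by
    have h1 := Finset.card_le_card hAsub
    rw [hadjx.2] at h1
    omega
  -- a vertex outside C and a neighbor
  have hnp : ∃ u v : ↥((↑S : Set (JV n k))ᶜ), ¬ ((johnsonGraph n k).induce ((↑S : Set (JV n k))ᶜ)).Reachable u v := by
    by_contra hall
    push_neg at hall
    exact hcut hall
  obtain ⟨u, v, huv⟩ := hnp
  have hne : ((johnsonGraph n k).induce ((↑S : Set (JV n k))ᶜ)).connectedComponentMk u ≠ ((johnsonGraph n k).induce ((↑S : Set (JV n k))ᶜ)).connectedComponentMk v :=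
    fun h => huv (SimpleGraph.ConnectedComponent.exact h)
  obtain ⟨y0, hy0⟩ : ∃ y0 : ↥((↑S : Set (JV n k))ᶜ), ((johnsonGraph n k).induce ((↑S : Set (JV n k))ᶜ)).connectedComponentMk y0 ≠ C := by
    by_cases hu : ((johnsonGraph n k).induce ((↑S : Set (JV n k))ᶜ)).connectedComponentMk u = C
    · exact ⟨v, fun hv => hne (hu.trans hv.symm)⟩
    · exact ⟨u, hu⟩
  obtain ⟨y1, hy01⟩ := hiso y0
  have hy1 : ((johnsonGraph n k).induce ((↑S : Set (JV n k))ᶜ)).connectedComponentMk y1 ≠ C := by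
    rw [← SimpleGraph.ConnectedComponent.sound hy01.reachable]
    exact hy0
  have hadjy : (johnsonGraph n k).Adj y0.val y1.val := hy01
  have hBsub : B ⊆ y0.val.val ∩ y1.val.val := by
    intro r hr
    rw [hB, mem_filter] at hr
    exact Finset.mem_inter.mpr ⟨hr.2 y0 hy0, hr.2 y1 hy1⟩
  have hBcard : B.card + 1 ≤ k := by
    have h1 := Finset.card_le_card hBsub
    rw [hadjy.2] at h1
    omega
  -- the explicit super cut
  obtain ⟨T, hTsuper, hTcard⟩ := johnson_exists_cut n k hk hn
  have hST : S.card ≤ T.card := hmin T hTsuper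
  -- counting the components
  set CF : Finset ↥((↑S : Set (JV n k))ᶜ) :=
    univ.filter (fun v => ((johnsonGraph n k).induce ((↑S : Set (JV n k))ᶜ)).connectedComponentMk v = C) with hCF
  set CF' : Finset ↥((↑S : Set (JV n k))ᶜ) :=
    univ.filter (fun v => ¬ ((johnsonGraph n k).induce ((↑S : Set (JV n k))ᶜ)).connectedComponentMk v = C) with hCF'
  have hpart : S.card + (CF.card + CF'.card) = n.choose k := by
    have h1 := Finset.card_filter_add_card_filter_not
      (s := (univ : Finset ↥((↑S : Set (JV n k))ᶜ)))
      (p := fun v => ((johnsonGraph n k).induce ((↑S : Set (JV n k))ᶜ)).connectedComponentMk v = C)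
    rw [Finset.card_univ] at h1
    have h2 := Set.ncard_add_ncard_compl (↑S : Set (JV n k))
    rw [Set.ncard_coe_finset] at h2
    have h3 : Fintype.card ↥((↑S : Set (JV n k))ᶜ) = ((↑S : Set (JV n k))ᶜ).ncard := by
      rw [← Nat.card_coe_set_eq, Nat.card_eq_fintype_card]
    have h4 : Nat.card (JV n k) = n.choose k := by
      rw [Nat.card_eq_fintype_card]
      simpa using Fintype.card_finset_len (α := Fin n) k
    rw [hCF, hCF', h1, h3]
    omega
  have hCFle : CF.card ≤ (n - A.card).choose (k - A.card) := by
    rw [← count_supersets A (by omega)]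
    apply Finset.card_le_card_of_injOn (fun v => v.val)
    · intro v hv
      rw [hCF, Finset.mem_coe, mem_filter] at hv
      rw [Finset.mem_coe, mem_filter]
      refine ⟨mem_univ _, ?_⟩
      intro r hr
      rw [hA, mem_filter] at hr
      exact hr.2 v hv.2
    · exact fun a _ b _ h => Subtype.ext h
  have hCF'le : CF'.card ≤ (n - B.card).choose (k - B.card) := by
    rw [← count_supersets B (by omega)]
    apply Finset.card_le_card_of_injOn (fun v => v.val)
    · intro v hv
      rw [hCF', Finset.mem_coe, mem_filter] at hv
      rw [Finset.mem_coe, mem_filter]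
      refine ⟨mem_univ _, ?_⟩
      intro r hr
      rw [hB, mem_filter] at hr
      exact hr.2 v hv.2
    · exact fun a _ b _ h => Subtype.ext h
  have harith := arith_main n k A.card B.card hk hn hAcard hBcard hcardAB
  omega
end

section
/- For all integers k ≥ 3 and n ≥ k+3, the super-connectivity of the Johnson graph J(n,k) is at most (2k−1)(n−k)−k; that is, J(n,k) admits a super vertex-cut of size (2k−1)(n−k)−k. -/
open SimpleGraph Finset

section JohnsonAux

variable {n : ℕ}

lemma swap_sub1 (C A' : Finset (Fin n)) (x y : Fin n) :
    (insert y (C.erase x)) ∩ A' ⊆ insert y ((C ∩ A').erase x) := by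
  intro z hz
  simp only [mem_inter, mem_insert, mem_erase] at hz ⊢
  rcases hz with ⟨hz1 | hz2, hzA⟩
  · exact Or.inl hz1
  · exact Or.inr ⟨hz2.1, hz2.2, hzA⟩

lemma swap_sub2 {A' : Finset (Fin n)} {y : Fin n} (C : Finset (Fin n)) (x : Fin n) (hy : y ∉ A') :
    (insert y (C.erase x)) ∩ A' ⊆ (C ∩ A').erase x := by
  intro z hz
  simp only [mem_inter, mem_insert, mem_erase] at hz ⊢
  rcases hz with ⟨hz1 | hz2, hzA⟩
  · exact absurd (hz1 ▸ hzA) hy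
  · exact ⟨hz2.1, hz2.2, hzA⟩

-- card bound: generic +1
lemma swap_card3 (C A' : Finset (Fin n)) (x y : Fin n) :
    ((insert y (C.erase x)) ∩ A').card ≤ (C ∩ A').card + 1 := by
  calc ((insert y (C.erase x)) ∩ A').card ≤ (insert y ((C ∩ A').erase x)).card :=
        card_le_card (swap_sub1 C A' x y)
    _ ≤ ((C ∩ A').erase x).card + 1 := card_insert_le _ _
    _ ≤ (C ∩ A').card + 1 := by
        exact Nat.add_le_add_right (card_le_card (erase_subset _ _)) 1

-- card bound when x ∈ C ∩ A'
lemma swap_card2 {C A' : Finset (Fin n)} {x : Fin n} (y : Fin n) (hx : x ∈ C ∩ A') :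
    ((insert y (C.erase x)) ∩ A').card ≤ (C ∩ A').card := by
  have h1 : ((insert y (C.erase x)) ∩ A').card ≤ ((C ∩ A').erase x).card + 1 :=
    le_trans (card_le_card (swap_sub1 C A' x y)) (card_insert_le _ _)
  have h2 : ((C ∩ A').erase x).card = (C ∩ A').card - 1 := card_erase_of_mem hx
  have h3 : 1 ≤ (C ∩ A').card := card_pos.mpr ⟨x, hx⟩
  omega

-- card bound when y ∉ A'
lemma swap_card1 {A' : Finset (Fin n)} {y : Fin n} (C : Finset (Fin n)) (x : Fin n) (hy : y ∉ A') :
    ((insert y (C.erase x)) ∩ A').card ≤ (C ∩ A').card :=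
  le_trans (card_le_card (swap_sub2 C x hy)) (card_le_card (erase_subset _ _))

lemma inter_card_le {k : ℕ} {C A' : Finset (Fin n)} (hC : C.card = k) (hA : A'.card = k)
    (hne : C ≠ A') (h1 : (C ∩ A').card ≠ k - 1) : (C ∩ A').card ≤ k - 2 := by
  have h2 : (C ∩ A').card ≤ k := hA ▸ card_le_card inter_subset_right
  have h3 : (C ∩ A').card ≠ k := by
    intro h
    have h4 : C ∩ A' = A' := eq_of_subset_of_card_le inter_subset_right (by omega)
    have h5 : A' ⊆ C := h4 ▸ inter_subset_left
    exact hne (eq_of_subset_of_card_le h5 (by omega)).symm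
  omega


lemma deg_count {n k : ℕ} (hk : 1 ≤ k) (A : Finset (Fin n)) (hA : A.card = k) :
    ((univ : Finset (Finset (Fin n))).filter
      (fun C => C.card = k ∧ (C ∩ A).card = k - 1)).card = k * (n - k) := by
  have h := Finset.card_bij (s := A ×ˢ Aᶜ)
    (t := (univ : Finset (Finset (Fin n))).filter
      (fun C => C.card = k ∧ (C ∩ A).card = k - 1))
    (fun p _ => insert p.2 (A.erase p.1)) ?_ ?_ ?_
  · rw [← h, card_product, card_compl, Fintype.card_fin, hA]
  · -- maps into
    rintro ⟨x, y⟩ hp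
    simp only [mem_product, mem_compl] at hp
    obtain ⟨hx, hy⟩ := hp
    have hyE : y ∉ A.erase x := fun h => hy (mem_of_mem_erase h)
    have hcard : (insert y (A.erase x)).card = k := by
      rw [card_insert_of_notMem hyE, card_erase_of_mem hx, hA]; omega
    have hint : insert y (A.erase x) ∩ A = A.erase x := by
      rw [insert_inter_of_notMem hy, inter_eq_left.mpr (erase_subset _ _)]
    simp only [mem_filter, mem_univ, true_and]
    exact ⟨hcard, by rw [hint, card_erase_of_mem hx, hA]⟩
  · -- inj
    rintro ⟨x, y⟩ hp ⟨x', y'⟩ hp' h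
    simp only [mem_product, mem_compl] at hp hp'
    obtain ⟨hx, hy⟩ := hp; obtain ⟨hx', hy'⟩ := hp'
    dsimp only at h
    have hyy : y = y' := by
      have : y ∈ insert y' (A.erase x') := h ▸ mem_insert_self y (A.erase x)
      rcases mem_insert.mp this with h' | h'
      · exact h'
      · exact absurd (mem_of_mem_erase h') hy
    subst hyy
    have hEE : A.erase x = A.erase x' := by
      have h1 : (insert y (A.erase x)).erase y = (insert y (A.erase x')).erase y := by rw [h]
      rwa [erase_insert (fun hc => hy (mem_of_mem_erase hc)),
        erase_insert (fun hc => hy (mem_of_mem_erase hc))] at h1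
    have : x = x' := by
      by_contra hne
      have : x ∈ A.erase x' := mem_erase.mpr ⟨hne, hx⟩
      rw [← hEE] at this
      exact (mem_erase.mp this).1 rfl
    simp [this]
  · -- surj
    intro C hC
    simp only [mem_filter, mem_univ, true_and] at hC
    obtain ⟨hCk, hCA⟩ := hC
    have h1 : (A \ C).card = 1 := by
      have := card_sdiff_add_card_inter A C
      rw [hA, inter_comm, hCA] at this; omega
    have h2 : (C \ A).card = 1 := by
      have := card_sdiff_add_card_inter C A
      rw [hCk, hCA] at this; omega
    obtain ⟨x, hx⟩ := card_eq_one.mp h1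
    obtain ⟨y, hy⟩ := card_eq_one.mp h2
    have hxA : x ∈ A := (mem_sdiff.mp (hx ▸ mem_singleton_self x)).1
    have hyA : y ∉ A := (mem_sdiff.mp (hy ▸ mem_singleton_self y)).2
    refine ⟨⟨x, y⟩, by simp [mem_product, hxA, hyA], ?_⟩
    show insert y (A.erase x) = C
    have hAx : A.erase x = A ∩ C := by
      rw [erase_eq, ← hx, sdiff_sdiff_self_left]
    rw [hAx, insert_eq, inter_comm A C, ← hy, sdiff_union_inter]


lemma common_count {n k : ℕ} (hk : 3 ≤ k) (hn : k + 3 ≤ n)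
    (T : Finset (Fin n)) (a b : Fin n) (hT : T.card = k - 1)
    (ha : a ∉ T) (hb : b ∉ T) (hab : a ≠ b) :
    ((univ : Finset (Finset (Fin n))).filter
      (fun C => C.card = k ∧ (C ∩ insert a T).card = k - 1 ∧ (C ∩ insert b T).card = k - 1)).card
      = n - 2 := by
  set A := insert a T with hAdef
  set B := insert b T with hBdef
  have haA : a ∈ A := mem_insert_self a T
  have hbB : b ∈ B := mem_insert_self b T
  have haB : a ∉ B := by simp [hBdef, hab, ha]
  have hbA : b ∉ A := by simp [hAdef, hab.symm, hb]
  have hTA : T ⊆ A := subset_insert a T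
  have hTB : T ⊆ B := subset_insert b T
  have hbIns : ∀ z, b ∉ insert a (T.erase z) := fun z h' => by
    rcases mem_insert.mp h' with h'' | h''
    · exact hab h''.symm
    · exact hb (mem_of_mem_erase h'')
  have hUcard : (A ∪ B).card = k + 1 := by
    have : A ∪ B = insert a (insert b T) := by
      rw [hAdef, hBdef]; ext z; simp [mem_insert]; tauto
    rw [this, card_insert_of_notMem (by simp [hab, ha]), card_insert_of_notMem hb, hT]
    omega
  have h := Finset.card_bij (s := (A ∪ B)ᶜ ∪ T)
    (t := (univ : Finset (Finset (Fin n))).filter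
      (fun C => C.card = k ∧ (C ∩ A).card = k - 1 ∧ (C ∩ B).card = k - 1))
    (fun c _ => if c ∈ T then insert b (insert a (T.erase c)) else insert c T) ?_ ?_ ?_
  · rw [← h, card_union_of_disjoint, card_compl, Fintype.card_fin, hUcard, hT]
    · omega
    · rw [Finset.disjoint_left]
      intro z hz hzT
      exact (mem_compl.mp hz) (mem_union_left B (hTA hzT))
  · -- maps into target
    intro c hc
    by_cases hcT : c ∈ T
    · simp only [hcT, if_true, mem_filter, mem_univ, true_and]
      have haE : a ∉ T.erase c := fun h => ha (mem_of_mem_erase h)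
      have hbE : b ∉ insert a (T.erase c) := hbIns c
      refine ⟨?_, ?_, ?_⟩
      · rw [card_insert_of_notMem hbE, card_insert_of_notMem haE,
          card_erase_of_mem hcT, hT]; omega
      · have : insert b (insert a (T.erase c)) ∩ A = insert a (T.erase c) := by
          rw [insert_inter_of_notMem hbA, inter_eq_left.mpr]
          exact insert_subset haA ((erase_subset _ _).trans hTA)
        rw [this, card_insert_of_notMem haE, card_erase_of_mem hcT, hT]; omega
      · have hcomm : insert b (insert a (T.erase c)) = insert a (insert b (T.erase c)) := by
          ext z; simp only [mem_insert]; tauto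
        have hbE' : b ∉ T.erase c := fun h => hb (mem_of_mem_erase h)
        have : insert a (insert b (T.erase c)) ∩ B = insert b (T.erase c) := by
          rw [insert_inter_of_notMem haB, inter_eq_left.mpr]
          exact insert_subset hbB ((erase_subset _ _).trans hTB)
        rw [hcomm, this, card_insert_of_notMem hbE', card_erase_of_mem hcT, hT]; omega
    · have hcU : c ∉ A ∪ B := mem_compl.mp ((mem_union.mp hc).resolve_right hcT)
      have hcA : c ∉ A := fun h => hcU (mem_union_left _ h)
      have hcB : c ∉ B := fun h => hcU (mem_union_right _ h)
      simp only [hcT, if_false, mem_filter, mem_univ, true_and]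
      refine ⟨?_, ?_, ?_⟩
      · rw [card_insert_of_notMem hcT, hT]; omega
      · rw [insert_inter_of_notMem hcA, inter_eq_left.mpr hTA, hT]
      · rw [insert_inter_of_notMem hcB, inter_eq_left.mpr hTB, hT]
  · -- injective
    intro c hc c' hc' h
    by_cases hcT : c ∈ T <;> by_cases hcT' : c' ∈ T <;>
      simp only [hcT, hcT', if_true, if_false] at h
    · -- both in T
      have haE : ∀ z, z ∈ T → a ∉ T.erase z := fun z _ h' => ha (mem_of_mem_erase h')
      have hbE : ∀ z, z ∈ T → b ∉ insert a (T.erase z) := fun z _ => hbIns z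
      have h1 : insert a (T.erase c) = insert a (T.erase c') := by
        have := congrArg (fun s => s.erase b) h
        simpa [erase_insert (hbE c hcT), erase_insert (hbE c' hcT')] using this
      have h2 : T.erase c = T.erase c' := by
        have := congrArg (fun s => s.erase a) h1
        simpa [erase_insert (haE c hcT), erase_insert (haE c' hcT')] using this
      by_contra hne
      have : c ∈ T.erase c' := mem_erase.mpr ⟨hne, hcT⟩
      rw [← h2] at this
      exact (mem_erase.mp this).1 rfl
    · -- c ∈ T, c' ∉ T : image contains a vs not
      exfalso
      have hcU' : c' ∉ A ∪ B := mem_compl.mp ((mem_union.mp hc').resolve_right hcT')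
      have haI : a ∈ insert b (insert a (T.erase c)) :=
        mem_insert_of_mem (mem_insert_self a _)
      rw [h] at haI
      rcases mem_insert.mp haI with h' | h'
      · exact hcU' (h' ▸ mem_union_left _ (mem_insert_self a T))
      · exact ha h'
    · exfalso
      have hcU : c ∉ A ∪ B := mem_compl.mp ((mem_union.mp hc).resolve_right hcT)
      have haI : a ∈ insert b (insert a (T.erase c')) :=
        mem_insert_of_mem (mem_insert_self a _)
      rw [← h] at haI
      rcases mem_insert.mp haI with h' | h'
      · exact hcU (h' ▸ mem_union_left _ (mem_insert_self a T))
      · exact ha h'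
    · -- both ∉ T
      have : c ∈ insert c' T := h ▸ mem_insert_self c T
      rcases mem_insert.mp this with h' | h'
      · exact h'
      · exact absurd h' hcT
  · -- surjective
    intro C hC
    simp only [mem_filter, mem_univ, true_and] at hC
    obtain ⟨hCk, hCA, hCB⟩ := hC
    have hCT : C ∩ T = (C ∩ A) ∩ (C ∩ B) := by
      have hTab : T = A ∩ B := by
        rw [hAdef, hBdef]; ext z
        simp only [mem_inter, mem_insert]
        constructor
        · intro h; exact ⟨Or.inr h, Or.inr h⟩
        · rintro ⟨h1 | h1, h2 | h2⟩
          · exact absurd (h1.symm.trans h2) hab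
          · exact h2
          · exact h1
          · exact h1
      rw [hTab]; ext z; simp only [mem_inter]; tauto
    have hCTcard : k - 2 ≤ (C ∩ T).card := by
      have h1 : ((C ∩ A) ∪ (C ∩ B)).card ≤ k := by
        rw [← hCk]
        exact card_le_card (union_subset inter_subset_left inter_subset_left)
      have h2 := card_union_add_card_inter (C ∩ A) (C ∩ B)
      rw [hCA, hCB, ← hCT] at h2
      omega
    by_cases hsub : T ⊆ C
    · -- C = insert c T with c ∉ A ∪ B
      have h1 : (C \ T).card = 1 := by
        rw [card_sdiff_of_subset hsub, hCk, hT]; omega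
      obtain ⟨c, hc⟩ := card_eq_one.mp h1
      have hcC : c ∈ C := (mem_sdiff.mp (hc ▸ mem_singleton_self c)).1
      have hcT : c ∉ T := (mem_sdiff.mp (hc ▸ mem_singleton_self c)).2
      have hCeq : C = insert c T := by
        rw [insert_eq, ← hc, sdiff_union_of_subset hsub]
      have hcA : c ∉ A := by
        intro hcA
        have : C ∩ A = insert c T := by
          rw [hCeq, insert_inter_of_mem hcA, inter_eq_left.mpr hTA]
        rw [this, card_insert_of_notMem hcT, hT] at hCA
        omega
      have hcB : c ∉ B := by
        intro hcB
        have : C ∩ B = insert c T := by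
          rw [hCeq, insert_inter_of_mem hcB, inter_eq_left.mpr hTB]
        rw [this, card_insert_of_notMem hcT, hT] at hCB
        omega
      refine ⟨c, mem_union_left _ (mem_compl.mpr (by simp [hcA, hcB])), ?_⟩
      rw [if_neg hcT, ← hCeq]
    · -- C = insert b (insert a (T.erase c)) with c ∈ T \ C
      have hCTcard' : (C ∩ T).card = k - 2 := by
        have h1 : (C ∩ T).card ≤ T.card := card_le_card inter_subset_right
        have h2 : (C ∩ T).card ≠ k - 1 := by
          intro h
          apply hsub
          have hCTT : C ∩ T = T := eq_of_subset_of_card_le inter_subset_right (by omega)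
          exact fun z hz => inter_subset_left (show z ∈ C ∩ T by rw [hCTT]; exact hz)
        rw [hT] at h1; omega
      have haC : a ∈ C := by
        by_contra haC
        have : C ∩ A = C ∩ T := by
          rw [hAdef, inter_insert_of_notMem haC]
        rw [this, hCTcard'] at hCA; omega
      have hbC : b ∈ C := by
        by_contra hbC
        have : C ∩ B = C ∩ T := by
          rw [hBdef, inter_insert_of_notMem hbC]
        rw [this, hCTcard'] at hCB; omega
      have h1 : (T \ C).card = 1 := by
        have := card_sdiff_add_card_inter T C
        rw [hT, inter_comm, hCTcard'] at this; omega
      obtain ⟨c, hc⟩ := card_eq_one.mp h1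
      have hcT : c ∈ T := (mem_sdiff.mp (hc ▸ mem_singleton_self c)).1
      have hcC : c ∉ C := (mem_sdiff.mp (hc ▸ mem_singleton_self c)).2
      refine ⟨c, mem_union_right _ hcT, ?_⟩
      rw [if_pos hcT]
      have hTe : T.erase c = C ∩ T := by
        rw [erase_eq, ← hc, sdiff_sdiff_self_left, inter_comm]
      have hsub2 : insert b (insert a (T.erase c)) ⊆ C := by
        rw [hTe]
        exact insert_subset hbC (insert_subset haC inter_subset_left)
      have hcard2 : (insert b (insert a (T.erase c))).card = k := by
        rw [card_insert_of_notMem (hbIns c),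
          card_insert_of_notMem (fun h => ha (mem_of_mem_erase h)),
          card_erase_of_mem hcT, hT]
        omega
      exact eq_of_subset_of_card_le hsub2 (by rw [hCk, hcard2])


lemma johnson_swap {n k : ℕ} (hk : 3 ≤ k) (hn : k + 3 ≤ n)
    (T : Finset (Fin n)) (a b : Fin n) (hT : T.card = k - 1)
    (ha : a ∉ T) (hb : b ∉ T) (hab : a ≠ b)
    (C : Finset (Fin n)) (hC : C.card = k)
    (hCA : (C ∩ insert a T).card ≤ k - 2) (hCB : (C ∩ insert b T).card ≤ k - 2) :
    ∃ D : Finset (Fin n), D.card = k ∧ (C ∩ D).card = k - 1 ∧ C ≠ D ∧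
      (D ∩ insert a T).card ≤ k - 2 ∧ (D ∩ insert b T).card ≤ k - 2 := by
  set A := insert a T with hAdef
  set B := insert b T with hBdef
  have haA : a ∈ A := mem_insert_self a T
  have hbB : b ∈ B := mem_insert_self b T
  have haB : a ∉ B := by simp [hBdef, hab, ha]
  have hbA : b ∉ A := by simp [hAdef, hab.symm, hb]
  have hTA : T ⊆ A := subset_insert a T
  have hTB : T ⊆ B := subset_insert b T
  have hCne : C.Nonempty := card_pos.mp (by omega)
  -- generic facts about the swap D = insert y (C.erase x)
  have hswap : ∀ x y : Fin n, x ∈ C → y ∉ C →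
      (insert y (C.erase x)).card = k ∧ (C ∩ insert y (C.erase x)).card = k - 1 ∧
        C ≠ insert y (C.erase x) := by
    intro x y hx hy
    have hyE : y ∉ C.erase x := fun h => hy (mem_of_mem_erase h)
    refine ⟨?_, ?_, ?_⟩
    · rw [card_insert_of_notMem hyE, card_erase_of_mem hx, hC]; omega
    · have : C ∩ insert y (C.erase x) = C.erase x := by
        rw [inter_insert_of_notMem hy, inter_eq_right.mpr (erase_subset _ _)]
      rw [this, card_erase_of_mem hx, hC]
    · intro h
      exact hy (h ▸ mem_insert_self y (C.erase x))
  by_cases h1 : ∃ y, y ∉ C ∪ A ∪ B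
  · -- Case 1 : swap in an element outside everything
    obtain ⟨y, hy⟩ := h1
    simp only [mem_union, not_or] at hy
    obtain ⟨⟨hyC, hyA⟩, hyB⟩ := hy
    obtain ⟨x, hx⟩ := hCne
    obtain ⟨hd1, hd2, hd3⟩ := hswap x y hx hyC
    refine ⟨insert y (C.erase x), hd1, hd2, hd3, ?_, ?_⟩
    · exact le_trans (swap_card1 C x hyA) hCA
    · exact le_trans (swap_card1 C x hyB) hCB
  · push_neg at h1
    -- every element is in C ∪ A ∪ B
    by_cases h2 : (C ∩ T).Nonempty
    · -- Case 2a : swap within T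
      have hTC : (T \ C).Nonempty := by
        by_contra hTC
        rw [not_nonempty_iff_eq_empty, sdiff_eq_empty_iff_subset] at hTC
        -- then univ \ C ⊆ (A ∪ B) \ T which has card 2, but univ \ C has card n - k ≥ 3
        have hs : univ \ C ⊆ (A ∪ B) \ T := by
          intro z hz
          rw [mem_sdiff] at hz ⊢
          refine ⟨?_, fun hzT => hz.2 (hTC hzT)⟩
          have := h1 z
          simp only [mem_union] at this
          rcases this with (h | h) | h
          · exact absurd h hz.2
          · exact mem_union_left _ h
          · exact mem_union_right _ h
        have hc1 : (univ \ C).card = n - k := by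
          rw [card_sdiff_of_subset (subset_univ C), card_univ, Fintype.card_fin, hC]
        have hUcard : (A ∪ B).card = k + 1 := by
          have : A ∪ B = insert a (insert b T) := by
            rw [hAdef, hBdef]; ext z; simp only [mem_union, mem_insert]; tauto
          rw [this, card_insert_of_notMem (by simp [hab, ha]),
            card_insert_of_notMem hb, hT]
          omega
        have hc2 : ((A ∪ B) \ T).card = 2 := by
          rw [card_sdiff_of_subset (hTA.trans subset_union_left), hUcard, hT]; omega
        have := card_le_card hs
        omega
      obtain ⟨x, hx⟩ := h2
      obtain ⟨y, hy⟩ := hTC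
      rw [mem_inter] at hx
      rw [mem_sdiff] at hy
      obtain ⟨hd1, hd2, hd3⟩ := hswap x y hx.1 hy.2
      refine ⟨insert y (C.erase x), hd1, hd2, hd3, ?_, ?_⟩
      · exact le_trans (swap_card2 y (mem_inter.mpr ⟨hx.1, hTA hx.2⟩)) hCA
      · exact le_trans (swap_card2 y (mem_inter.mpr ⟨hx.1, hTB hx.2⟩)) hCB
    · -- C ∩ T = ∅
      rw [not_nonempty_iff_eq_empty] at h2
      have hCTe : ∀ z, z ∈ C → z ∉ T := by
        intro z hzC hzT
        have : z ∈ C ∩ T := mem_inter.mpr ⟨hzC, hzT⟩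
        rw [h2] at this
        exact absurd this (notMem_empty z)
      have hCAcard : (C ∩ A).card ≤ 1 := by
        have : C ∩ A ⊆ {a} := by
          intro z hz
          rw [mem_inter, hAdef, mem_insert] at hz
          rcases hz.2 with h | h
          · simp [h]
          · exact absurd h (hCTe z hz.1)
        exact le_trans (card_le_card this) (by simp)
      have hCBcard : (C ∩ B).card ≤ 1 := by
        have : C ∩ B ⊆ {b} := by
          intro z hz
          rw [mem_inter, hBdef, mem_insert] at hz
          rcases hz.2 with h | h
          · simp [h]
          · exact absurd h (hCTe z hz.1)
        exact le_trans (card_le_card this) (by simp)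
      by_cases h3 : a ∈ C ∧ b ∈ C
      · -- Case 2c-ii : need k ≥ 4
        have hk4 : 4 ≤ k := by
          have hs : univ \ C ⊆ T := by
            intro z hz
            rw [mem_sdiff] at hz
            have := h1 z
            simp only [mem_union, hAdef, hBdef, mem_insert] at this
            rcases this with (h | h) | h
            · exact absurd h hz.2
            · rcases h with rfl | h
              · exact absurd h3.1 hz.2
              · exact h
            · rcases h with rfl | h
              · exact absurd h3.2 hz.2
              · exact h
          have hc1 : (univ \ C).card = n - k := by
            rw [card_sdiff_of_subset (subset_univ C), card_univ, Fintype.card_fin, hC]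
          have := card_le_card hs
          rw [hc1, hT] at this
          omega
        have hTne : T.Nonempty := card_pos.mp (by omega)
        obtain ⟨y, hy⟩ := hTne
        obtain ⟨x, hx⟩ := hCne
        have hyC : y ∉ C := fun h => hCTe y h hy
        obtain ⟨hd1, hd2, hd3⟩ := hswap x y hx hyC
        refine ⟨insert y (C.erase x), hd1, hd2, hd3, ?_, ?_⟩
        · exact le_trans (swap_card3 C A x y) (by omega)
        · exact le_trans (swap_card3 C B x y) (by omega)
      · -- Case 2c-i : a ∉ C or b ∉ C
        rw [not_and_or] at h3
        obtain ⟨x, hx⟩ := hCne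
        rcases h3 with h3 | h3
        · -- a ∉ C : swap in a
          have hCAe : C ∩ A = ∅ := by
            rw [eq_empty_iff_forall_notMem]
            intro z hz
            rw [mem_inter, hAdef, mem_insert] at hz
            rcases hz.2 with h | h
            · exact h3 (h ▸ hz.1)
            · exact hCTe z hz.1 h
          obtain ⟨hd1, hd2, hd3⟩ := hswap x a hx h3
          refine ⟨insert a (C.erase x), hd1, hd2, hd3, ?_, ?_⟩
          · have := swap_card3 C A x a
            rw [hCAe] at this
            simp only [card_empty] at this
            omega
          · exact le_trans (swap_card1 C x haB) hCB
        · -- b ∉ C : swap in b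
          have hCBe : C ∩ B = ∅ := by
            rw [eq_empty_iff_forall_notMem]
            intro z hz
            rw [mem_inter, hBdef, mem_insert] at hz
            rcases hz.2 with h | h
            · exact h3 (h ▸ hz.1)
            · exact hCTe z hz.1 h
          obtain ⟨hd1, hd2, hd3⟩ := hswap x b hx h3
          refine ⟨insert b (C.erase x), hd1, hd2, hd3, ?_, ?_⟩
          · exact le_trans (swap_card1 C x hbA) hCA
          · have := swap_card3 C B x b
            rw [hCBe] at this
            simp only [card_empty] at this
            omega


lemma c0_exists {n k : ℕ} (hk : 3 ≤ k) (hn : k + 3 ≤ n)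
    (T : Finset (Fin n)) (a b : Fin n) (hT : T.card = k - 1)
    (ha : a ∉ T) (hb : b ∉ T) (hab : a ≠ b) :
    ∃ C₀ : Finset (Fin n), C₀.card = k ∧
      (C₀ ∩ insert a T).card = k - 2 ∧ (C₀ ∩ insert b T).card = k - 2 := by
  classical
  set A := insert a T with hAdef
  set B := insert b T with hBdef
  have haA : a ∈ A := mem_insert_self a T
  have hbB : b ∈ B := mem_insert_self b T
  have haB : a ∉ B := by simp [hBdef, hab, ha]
  have hbA : b ∉ A := by simp [hAdef, hab.symm, hb]
  have hTA : T ⊆ A := subset_insert a T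
  have hTB : T ⊆ B := subset_insert b T
  obtain ⟨t₁, ht₁, t₂, ht₂, ht12⟩ := Finset.one_lt_card.mp
    (show 1 < T.card by rw [hT]; omega)
  have hUcard : (A ∪ B).card = k + 1 := by
    have hABU : A ∪ B = insert a (insert b T) := by
      rw [hAdef, hBdef]; ext z; simp only [mem_union, mem_insert]; tauto
    rw [hABU, card_insert_of_notMem (by simp [hab, ha]), card_insert_of_notMem hb, hT]
    omega
  have hc0ex : ((A ∪ B)ᶜ : Finset (Fin n)).Nonempty := by
    rw [← card_pos, card_compl, Fintype.card_fin, hUcard]; omega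
  obtain ⟨c₀, hc₀⟩ := hc0ex
  have hc₀U : c₀ ∉ A ∪ B := mem_compl.mp hc₀
  have hc₀A : c₀ ∉ A := fun h => hc₀U (mem_union_left _ h)
  have hc₀B : c₀ ∉ B := fun h => hc₀U (mem_union_right _ h)
  set T' := (T.erase t₁).erase t₂ with hT'def
  have hT' : T'.card = k - 3 := by
    rw [hT'def, card_erase_of_mem (mem_erase.mpr ⟨ht12.symm, ht₂⟩), card_erase_of_mem ht₁, hT]
    omega
  have hT'T : T' ⊆ T := (erase_subset _ _).trans (erase_subset _ _)
  have hc₀T' : c₀ ∉ T' := fun h => hc₀A (hTA (hT'T h))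
  have hbc₀ : b ≠ c₀ := fun h => hc₀B (h ▸ hbB)
  have hac₀ : a ≠ c₀ := fun h => hc₀A (h ▸ haA)
  have hbI : b ∉ insert c₀ T' := by
    simp only [mem_insert, not_or]
    exact ⟨hbc₀, fun h => hb (hT'T h)⟩
  have haI : a ∉ insert b (insert c₀ T') := by
    simp only [mem_insert, not_or]
    exact ⟨hab, hac₀, fun h => ha (hT'T h)⟩
  set C₀ := insert a (insert b (insert c₀ T')) with hC₀def
  have hC₀card : C₀.card = k := by
    rw [hC₀def, card_insert_of_notMem haI, card_insert_of_notMem hbI,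
      card_insert_of_notMem hc₀T', hT']
    omega
  have haT' : a ∉ T' := fun h => ha (hT'T h)
  have hbT' : b ∉ T' := fun h => hb (hT'T h)
  have hT'C₀ : T' ⊆ C₀ := by
    intro z hz
    rw [hC₀def]
    exact mem_insert_of_mem (mem_insert_of_mem (mem_insert_of_mem hz))
  refine ⟨C₀, hC₀card, ?_, ?_⟩
  · have heq : C₀ ∩ A = insert a T' := by
      apply Subset.antisymm
      · intro z hz
        rw [mem_inter] at hz
        obtain ⟨hz1, hz2⟩ := hz
        rw [hC₀def, mem_insert, mem_insert, mem_insert] at hz1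
        rcases hz1 with rfl | rfl | rfl | hz1
        · exact mem_insert_self _ _
        · exact absurd hz2 hbA
        · exact absurd hz2 hc₀A
        · exact mem_insert_of_mem hz1
      · intro z hz
        rcases mem_insert.mp hz with rfl | hz
        · exact mem_inter.mpr ⟨by rw [hC₀def]; exact mem_insert_self _ _, haA⟩
        · exact mem_inter.mpr ⟨hT'C₀ hz, hTA (hT'T hz)⟩
    rw [heq, card_insert_of_notMem haT', hT']
    omega
  · have heq : C₀ ∩ B = insert b T' := by
      apply Subset.antisymm
      · intro z hz
        rw [mem_inter] at hz
        obtain ⟨hz1, hz2⟩ := hz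
        rw [hC₀def, mem_insert, mem_insert, mem_insert] at hz1
        rcases hz1 with rfl | rfl | rfl | hz1
        · exact absurd hz2 haB
        · exact mem_insert_self _ _
        · exact absurd hz2 hc₀B
        · exact mem_insert_of_mem hz1
      · intro z hz
        rcases mem_insert.mp hz with rfl | hz
        · refine mem_inter.mpr ⟨?_, hbB⟩
          rw [hC₀def]
          exact mem_insert_of_mem (mem_insert_self _ _)
        · exact mem_inter.mpr ⟨hT'C₀ hz, hTB (hT'T hz)⟩
    rw [heq, card_insert_of_notMem hbT', hT']
    omega


set_option maxHeartbeats 2000000 in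
lemma exists_supercut (n k : ℕ) (hk : 3 ≤ k) (hn : k + 3 ≤ n) :
    ∃ S : Finset (JV n k), IsSuperVertexCut (johnsonGraph n k) ↑S ∧
      S.card = (2 * k - 1) * (n - k) - k := by
  classical
  -- choose T, a, b
  obtain ⟨T, -, hT⟩ := Finset.exists_subset_card_eq
    (show k - 1 ≤ (univ : Finset (Fin n)).card by rw [card_univ, Fintype.card_fin]; omega)
  have h2 : 1 < (Tᶜ : Finset (Fin n)).card := by
    rw [card_compl, Fintype.card_fin, hT]; omega
  obtain ⟨a, hac, b, hbc, hab⟩ := Finset.one_lt_card.mp h2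
  have ha : a ∉ T := mem_compl.mp hac
  have hb : b ∉ T := mem_compl.mp hbc
  set A := insert a T with hAdef
  set B := insert b T with hBdef
  have hA : A.card = k := by rw [hAdef, card_insert_of_notMem ha, hT]; omega
  have hB : B.card = k := by rw [hBdef, card_insert_of_notMem hb, hT]; omega
  have haA : a ∈ A := mem_insert_self a T
  have hbB : b ∈ B := mem_insert_self b T
  have haB : a ∉ B := by simp [hBdef, hab, ha]
  have hbA : b ∉ A := by simp [hAdef, hab.symm, hb]
  have hTA : T ⊆ A := subset_insert a T
  have hTB : T ⊆ B := subset_insert b T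
  have hABne : A ≠ B := fun h => haB (h ▸ haA)
  have hABinter : (A ∩ B).card = k - 1 := by
    have hTab : A ∩ B = T := by
      rw [hAdef, hBdef]; ext z
      simp only [mem_inter, mem_insert]
      constructor
      · rintro ⟨h1 | h1, h2 | h2⟩
        · exact absurd (h1.symm.trans h2) hab
        · exact h2
        · exact h1
        · exact h1
      · intro h; exact ⟨Or.inr h, Or.inr h⟩
    rw [hTab, hT]
  -- the cut
  set NA := (univ : Finset (Finset (Fin n))).filter
    (fun C => C.card = k ∧ (C ∩ A).card = k - 1) with hNAdef
  set NB := (univ : Finset (Finset (Fin n))).filter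
    (fun C => C.card = k ∧ (C ∩ B).card = k - 1) with hNBdef
  set S' := (NA ∪ NB) \ {A, B} with hS'def
  set S : Finset (JV n k) := S'.subtype (fun s => s.card = k) with hSdef
  have hmemS' : ∀ C : Finset (Fin n), C ∈ S' ↔
      (C.card = k ∧ ((C ∩ A).card = k - 1 ∨ (C ∩ B).card = k - 1)) ∧ C ≠ A ∧ C ≠ B := by
    intro C
    rw [hS'def, mem_sdiff, mem_union, hNAdef, hNBdef, mem_filter, mem_filter]
    simp only [mem_univ, true_and, mem_insert, mem_singleton, not_or]
    tauto
  have hmemS : ∀ v : JV n k, v ∈ S ↔ v.val ∈ S' := by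
    intro v; rw [hSdef]; exact Finset.mem_subtype
  -- cardinality
  have cardNA : NA.card = k * (n - k) := deg_count (by omega) A hA
  have cardNB : NB.card = k * (n - k) := by
    rw [hNBdef]; exact deg_count (by omega) B hB
  have cardInt : (NA ∩ NB).card = n - 2 := by
    have hINT : NA ∩ NB = (univ : Finset (Finset (Fin n))).filter
        (fun C => C.card = k ∧ (C ∩ A).card = k - 1 ∧ (C ∩ B).card = k - 1) := by
      ext C
      rw [mem_inter, hNAdef, hNBdef, mem_filter, mem_filter, mem_filter]
      simp only [mem_univ, true_and]
      tauto
    rw [hINT, hAdef, hBdef]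
    exact common_count hk hn T a b hT ha hb hab
  have hu := card_union_add_card_inter NA NB
  rw [cardNA, cardNB, cardInt] at hu
  have hABsub : ({A, B} : Finset (Finset (Fin n))) ⊆ NA ∪ NB := by
    intro C hC
    rcases mem_insert.mp hC with rfl | hC
    · refine mem_union_right _ ?_
      rw [hNBdef, mem_filter]
      exact ⟨mem_univ _, hA, hABinter⟩
    · rw [mem_singleton] at hC
      subst hC
      refine mem_union_left _ ?_
      rw [hNAdef, mem_filter]
      refine ⟨mem_univ _, hB, ?_⟩
      rw [inter_comm]; exact hABinter
  have cardS' : S'.card = (NA ∪ NB).card - 2 := by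
    rw [hS'def, card_sdiff_of_subset hABsub, card_insert_of_notMem (notMem_singleton.mpr hABne),
      card_singleton]
  have cardS : S.card = S'.card := by
    rw [hSdef, Finset.card_subtype, filter_true_of_mem]
    intro C hC
    exact ((hmemS' C).mp hC).1.1
  have cardfinal : S.card = (2 * k - 1) * (n - k) - k := by
    obtain ⟨K, hK⟩ : ∃ K, k * (n - k) = K := ⟨_, rfl⟩
    have m1 : 3 * (n - k) ≤ K := by rw [← hK]; exact Nat.mul_le_mul_right _ hk
    have m2 : k * 3 ≤ K := by rw [← hK]; exact Nat.mul_le_mul_left _ (by omega)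
    have hexp : (2 * k - 1) * (n - k) = 2 * K - (n - k) := by
      rw [← hK, Nat.sub_mul, one_mul, mul_assoc]
    rw [hK] at hu
    rw [cardS, cardS', hexp]
    omega
  clear_value NA NB S' S
  clear hNAdef hNBdef cardNA cardNB cardInt hu hABsub cardS' cardS hS'def hSdef
  -- the isolated edge {A, B} and the far vertex C₀
  set vA : JV n k := ⟨A, hA⟩ with hvAdef
  set vB : JV n k := ⟨B, hB⟩ with hvBdef
  have hvAS : vA ∉ S := by
    rw [hmemS, hmemS']
    rintro ⟨-, h, -⟩
    exact h rfl
  have hvBS : vB ∉ S := by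
    rw [hmemS, hmemS']
    rintro ⟨-, -, h⟩
    exact h rfl
  obtain ⟨C₀, hC₀card, hC₀A, hC₀B⟩ := c0_exists hk hn T a b hT ha hb hab
  rw [← hAdef] at hC₀A
  rw [← hBdef] at hC₀B
  have hcompl : ∀ v : JV n k, v ∈ ((↑S : Set (JV n k))ᶜ) ↔ v ∉ S := by
    intro v; simp [Set.mem_compl_iff]
  have hiff : ∀ (u w : ↥((↑S : Set (JV n k))ᶜ)),
      ((johnsonGraph n k).induce ((↑S : Set (JV n k))ᶜ)).Adj u w ↔
        (johnsonGraph n k).Adj u.val w.val := by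
    intro u w; simp [SimpleGraph.comap_adj]
  have hclosed : ∀ u w : JV n k, w ∉ S → (johnsonGraph n k).Adj u w →
      (u.val = A ∨ u.val = B) → (w.val = A ∨ w.val = B) := by
    intro u w hw hadj hu
    by_contra hcon
    push_neg at hcon
    apply hw
    rw [hmemS, hmemS']
    refine ⟨⟨w.prop, ?_⟩, hcon.1, hcon.2⟩
    rcases hu with h | h
    · left
      have h2 := hadj.2
      rw [h, inter_comm] at h2
      exact h2
    · right
      have h2 := hadj.2
      rw [h, inter_comm] at h2
      exact h2
  have hstep : ∀ (u w : ↥((↑S : Set (JV n k))ᶜ)),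
      ((johnsonGraph n k).induce ((↑S : Set (JV n k))ᶜ)).Adj u w →
      (u.val.val = A ∨ u.val.val = B) → (w.val.val = A ∨ w.val.val = B) := by
    intro u w hadj hu
    exact hclosed u.val w.val ((hcompl w.val).mp w.prop) ((hiff u w).mp hadj) hu
  have hwalk : ∀ (u v : ↥((↑S : Set (JV n k))ᶜ))
      (p : ((johnsonGraph n k).induce ((↑S : Set (JV n k))ᶜ)).Walk u v),
      (u.val.val = A ∨ u.val.val = B) → (v.val.val = A ∨ v.val.val = B) := by
    intro u v p
    induction p with
    | nil => exact id
    | cons h p ih => exact fun hu => ih (hstep _ _ h hu)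
  have hC₀neA : C₀ ≠ A := by
    intro h
    rw [h, inter_self, hA] at hC₀A
    omega
  have hC₀neB : C₀ ≠ B := by
    intro h
    rw [h, inter_self, hB] at hC₀B
    omega
  have hC₀S : (⟨C₀, hC₀card⟩ : JV n k) ∉ S := by
    rw [hmemS]
    show C₀ ∉ S'
    rw [hmemS']
    rintro ⟨⟨-, h | h⟩, -⟩ <;> omega
  -- assemble
  refine ⟨S, ⟨?_, ?_⟩, cardfinal⟩
  · -- vertex cut
    intro hpre
    have hr := hpre ⟨vA, (hcompl vA).mpr hvAS⟩ ⟨⟨C₀, hC₀card⟩, (hcompl _).mpr hC₀S⟩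
    obtain ⟨p⟩ := hr
    have := hwalk _ _ p (Or.inl rfl)
    rcases this with h | h
    · exact hC₀neA h
    · exact hC₀neB h
  · -- no isolated vertices
    intro v
    have hvS : v.val ∉ S := (hcompl v.val).mp v.prop
    by_cases hva : v.val = vA
    · refine ⟨⟨vB, (hcompl vB).mpr hvBS⟩, ?_⟩
      rw [hiff, hva]
      exact ⟨fun h => hABne (congrArg Subtype.val h), hABinter⟩
    · by_cases hvb : v.val = vB
      · refine ⟨⟨vA, (hcompl vA).mpr hvAS⟩, ?_⟩
        rw [hiff, hvb]
        refine ⟨fun h => hABne (congrArg Subtype.val h).symm, ?_⟩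
        rw [inter_comm]
        exact hABinter
      · have hCk : v.val.val.card = k := v.val.prop
        have hneA : v.val.val ≠ A := fun h => hva (Subtype.ext h)
        have hneB : v.val.val ≠ B := fun h => hvb (Subtype.ext h)
        have hnd : (v.val.val ∩ A).card ≠ k - 1 ∧ (v.val.val ∩ B).card ≠ k - 1 := by
          by_contra hcon
          rw [not_and_or, not_not, not_not] at hcon
          apply hvS
          rw [hmemS, hmemS']
          exact ⟨⟨hCk, hcon⟩, hneA, hneB⟩
        have hbA' : (v.val.val ∩ A).card ≤ k - 2 := inter_card_le hCk hA hneA hnd.1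
        have hbB' : (v.val.val ∩ B).card ≤ k - 2 := inter_card_le hCk hB hneB hnd.2
        rw [hAdef] at hbA'
        rw [hBdef] at hbB'
        obtain ⟨D, hD1, hD2, hD3, hD4, hD5⟩ :=
          johnson_swap hk hn T a b hT ha hb hab v.val.val hCk hbA' hbB'
        rw [← hAdef] at hD4
        rw [← hBdef] at hD5
        have hDS : (⟨D, hD1⟩ : JV n k) ∉ S := by
          rw [hmemS]
          show D ∉ S'
          rw [hmemS']
          rintro ⟨⟨-, h | h⟩, -⟩ <;> omega
        refine ⟨⟨⟨D, hD1⟩, (hcompl _).mpr hDS⟩, ?_⟩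
        rw [hiff]
        exact ⟨fun h => hD3 (congrArg Subtype.val h), hD2⟩


end JohnsonAux

/-- For `k ≥ 3` and `n ≥ k+3`, `κ'(J(n,k)) ≤ (2k-1)(n-k) - k`: the Johnson
graph admits a super vertex-cut of this size. -/
theorem superConnectivity_johnson_le (n k : ℕ) (hk : 3 ≤ k) (hn : k + 3 ≤ n) :
    superConnectivity (johnsonGraph n k) ≤ (((2 * k - 1) * (n - k) - k : ℕ) : ℕ∞) ∧
    ∃ S : Finset (JV n k),
      IsSuperVertexCut (johnsonGraph n k) ↑S ∧ S.card = (2 * k - 1) * (n - k) - k := by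
  obtain ⟨S, hS, hcard⟩ := exists_supercut n k hk hn
  exact ⟨sInf_le ⟨S, hS, Nat.cast_inj.mpr hcard⟩, S, hS, hcard⟩
end

section
/- Let k ≥ 3 and n ≥ k+3 be integers, let S be a minimum super vertex-cut of the Johnson graph G = J(n,k), and let r ∈ [n]. If there exists a vertex x of G−S with r ∉ x such that every neighbour of x in G−S contains r (equivalently, N_{G−S}(x) − β_r = ∅), then |S| ≥ (2k−1)(n−k)−k. -/
open Finset

namespace JS
attribute [local instance] Classical.propDecidable
variable {n : ℕ}

/-- Johnson-type adjacency at level `l` between finsets. -/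
def AdjL (l : ℕ) (s t : Finset (Fin n)) : Prop :=
  s.card = l ∧ t.card = l ∧ (s ∩ t).card = l - 1 ∧ s ≠ t

/-- One step inside universe `U` avoiding deleted set `T`. -/
def Step (U : Finset (Fin n)) (T : Finset (Finset (Fin n))) (l : ℕ)
    (s t : Finset (Fin n)) : Prop :=
  AdjL l s t ∧ s ⊆ U ∧ t ⊆ U ∧ s ∉ T ∧ t ∉ T

def Reach (U : Finset (Fin n)) (T : Finset (Finset (Fin n))) (l : ℕ) :
    Finset (Fin n) → Finset (Fin n) → Prop :=
  Relation.ReflTransGen (Step U T l)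

lemma AdjL.symm' {l : ℕ} {s t : Finset (Fin n)} (h : AdjL l s t) : AdjL l t s :=
  ⟨h.2.1, h.1, by rw [Finset.inter_comm]; exact h.2.2.1, h.2.2.2.symm⟩

lemma Step.symm' {U T l} {s t : Finset (Fin n)} (h : Step U T l s t) : Step U T l t s :=
  ⟨h.1.symm', h.2.2.1, h.2.1, h.2.2.2.2, h.2.2.2.1⟩

lemma Reach.symm' {U T l} {s t : Finset (Fin n)} (h : Reach U T l s t) : Reach U T l t s :=
  (haveI : Std.Symm (Step U T l) := ⟨fun _ _ hh => hh.symm'⟩; Std.Symm.symm (r := Relation.ReflTransGen (Step U T l)) _ _ h)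

lemma Reach.trans' {U T l} {s t u : Finset (Fin n)} (h : Reach U T l s t)
    (h' : Reach U T l t u) : Reach U T l s u := Relation.ReflTransGen.trans h h'

/-- swapping `i ∈ s` for `c ∉ s` keeps the cardinality. -/
lemma card_swap {s : Finset (Fin n)} {i c : Fin n} (hi : i ∈ s) (hc : c ∉ s) :
    (insert c (s.erase i)).card = s.card := by
  rw [card_insert_of_notMem (fun h => hc (mem_of_mem_erase h)), card_erase_of_mem hi]
  have : 1 ≤ s.card := card_pos.2 ⟨i, hi⟩
  omega

lemma inter_swap {s : Finset (Fin n)} {i c : Fin n} (hc : c ∉ s) :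
    (insert c (s.erase i)) ∩ s = s.erase i := by
  ext a
  simp only [mem_inter, mem_insert, mem_erase]
  constructor
  · rintro ⟨(rfl | ⟨h1, h2⟩), h3⟩
    · exact absurd h3 hc
    · exact ⟨h1, h3⟩
  · rintro ⟨h1, h2⟩
    exact ⟨Or.inr ⟨h1, h2⟩, h2⟩

lemma swap_ne {s : Finset (Fin n)} {i c : Fin n} (hi : i ∈ s) (hc : c ∉ s) :
    insert c (s.erase i) ≠ s := fun h => hc (h ▸ mem_insert_self c _)

lemma adjL_swap {l : ℕ} {s : Finset (Fin n)} {i c : Fin n} (hs : s.card = l)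
    (hi : i ∈ s) (hc : c ∉ s) : AdjL l (insert c (s.erase i)) s := by
  refine ⟨by rw [card_swap hi hc, hs], hs, ?_, swap_ne hi hc⟩
  rw [inter_swap hc, card_erase_of_mem hi, hs]

/-- the image of all swaps has full cardinality. -/
lemma swap_image_card {s c : Finset (Fin n)} (hdisj : ∀ a ∈ c, a ∉ s) :
    ((s ×ˢ c).image (fun p => insert p.2 (s.erase p.1))).card = s.card * c.card := by
  rw [card_image_of_injOn, card_product]
  rintro ⟨i, a⟩ hia ⟨j, b⟩ hjb h
  simp only [Finset.mem_coe, Finset.mem_product] at hia hjb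
  simp only at h
  have ha : a ∉ s := hdisj a hia.2
  have hb : b ∉ s := hdisj b hjb.2
  have hab : a = b := by
    have : a ∈ insert b (s.erase j) := h ▸ mem_insert_self a _
    rcases mem_insert.1 this with h' | h'
    · exact h'
    · exact absurd (mem_of_mem_erase h') ha
  subst hab
  have h2 : s.erase i = s.erase j := by
    have := congrArg (fun t => Finset.erase t a) h
    simpa [erase_insert (fun hh => ha (mem_of_mem_erase hh)),
      erase_insert (fun hh => hb (mem_of_mem_erase hh))] using this
  have hij : i = j := by
    by_contra hne
    have h3 : i ∈ s.erase j := mem_erase.2 ⟨hne, hia.1⟩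
    rw [← h2] at h3
    exact (mem_erase.1 h3).1 rfl
  rw [hij] at h ⊢

lemma erase_eq_erase_self {s : Finset (Fin n)} {i j : Fin n} (hi : i ∈ s)
    (h : s.erase i = s.erase j) : i = j := by
  by_contra hne
  have h3 : i ∈ s.erase j := mem_erase.2 ⟨hne, hi⟩
  rw [← h] at h3
  exact (mem_erase.1 h3).1 rfl

lemma step_mono_out {U : Finset (Fin n)} {T : Finset (Finset (Fin n))} {l : ℕ} {e : Fin n}
    {s t : Finset (Fin n)} (h : Step (U.erase e) (T.filter (fun t => e ∉ t)) l s t) :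
    Step U T l s t := by
  obtain ⟨ha, hsU, htU, hsT, htT⟩ := h
  have hes : e ∉ s := fun hh => (mem_erase.1 (hsU hh)).1 rfl
  have het : e ∉ t := fun hh => (mem_erase.1 (htU hh)).1 rfl
  refine ⟨ha, hsU.trans (erase_subset _ _), htU.trans (erase_subset _ _), ?_, ?_⟩
  · exact fun hh => hsT (mem_filter.2 ⟨hh, hes⟩)
  · exact fun hh => htT (mem_filter.2 ⟨hh, het⟩)

lemma reach_mono_out {U : Finset (Fin n)} {T : Finset (Finset (Fin n))} {l : ℕ} {e : Fin n}
    {s t : Finset (Fin n)} (h : Reach (U.erase e) (T.filter (fun t => e ∉ t)) l s t) :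
    Reach U T l s t :=
  (Relation.ReflTransGen.mono (r := Step (U.erase e) (T.filter (fun t => e ∉ t)) l) (p := Step U T l)
    (fun _ _ hh => step_mono_out hh)) _ _ h

lemma reach_lift_ins {U : Finset (Fin n)} {T : Finset (Finset (Fin n))} {l : ℕ} {e : Fin n}
    (hl : 2 ≤ l) (heU : e ∈ U) {s t : Finset (Fin n)}
    (h : Reach (U.erase e) ((T.filter (fun t => e ∈ t)).image (fun t => t.erase e)) (l-1) s t) :
    Reach U T l (insert e s) (insert e t) := by
  induction h with
  | refl => exact Relation.ReflTransGen.refl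
  | tail _ hstep ih =>
    refine ih.tail ?_
    obtain ⟨⟨hc1, hc2, hc3, hc4⟩, hsU, htU, hsT, htT⟩ := hstep
    rename_i b c _
    have heb : e ∉ b := fun hh => (mem_erase.1 (hsU hh)).1 rfl
    have hec : e ∉ c := fun hh => (mem_erase.1 (htU hh)).1 rfl
    have hni : e ∉ b ∩ c := fun hh => heb (mem_inter.1 hh).1
    refine ⟨⟨?_, ?_, ?_, ?_⟩, ?_, ?_, ?_, ?_⟩
    · rw [card_insert_of_notMem heb, hc1]; omega
    · rw [card_insert_of_notMem hec, hc2]; omega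
    · have : insert e b ∩ insert e c = insert e (b ∩ c) := by
        ext a; simp only [mem_inter, mem_insert]; tauto
      rw [this, card_insert_of_notMem hni, hc3]; omega
    · intro hh
      apply hc4
      have := congrArg (fun t => Finset.erase t e) hh
      simpa [erase_insert heb, erase_insert hec] using this
    · exact insert_subset heU (hsU.trans (erase_subset _ _))
    · exact insert_subset heU (htU.trans (erase_subset _ _))
    · intro hh
      exact hsT (mem_image.2 ⟨insert e b, mem_filter.2 ⟨hh, mem_insert_self _ _⟩, erase_insert heb⟩)
    · intro hh
      exact htT (mem_image.2 ⟨insert e c, mem_filter.2 ⟨hh, mem_insert_self _ _⟩, erase_insert hec⟩)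

lemma reach_props {U : Finset (Fin n)} {T : Finset (Finset (Fin n))} {l : ℕ}
    {a v : Finset (Fin n)} (h : Reach U T l a v)
    (ha : a ⊆ U ∧ a.card = l ∧ a ∉ T) : v ⊆ U ∧ v.card = l ∧ v ∉ T := by
  induction h with
  | refl => exact ha
  | tail _ hstep _ => exact ⟨hstep.2.2.1, hstep.1.2.1, hstep.2.2.2.2⟩

lemma arith1 {l m : ℕ} (hl : 2 ≤ l) (hm : 2 ≤ m) : l * m ≤ (l-1) * m + l * (m-1) := by
  rcases Nat.exists_eq_add_of_le hl with ⟨l', rfl⟩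
  rcases Nat.exists_eq_add_of_le hm with ⟨m', rfl⟩
  have h1 : 2 + l' - 1 = 1 + l' := by omega
  have h2 : 2 + m' - 1 = 1 + m' := by omega
  rw [h1, h2]
  nlinarith

lemma arith2 {l m : ℕ} (hl : 1 ≤ l) : l * m ≤ (l-1) * m + m := by
  have h : (l-1) * m + m = ((l-1)+1) * m := by ring
  rw [h]
  have h2 : l - 1 + 1 = l := by omega
  rw [h2]

lemma arith3 {l m : ℕ} (hm : 1 ≤ m) : l * m ≤ l * (m-1) + l := by
  have h : l * (m-1) + l = l * ((m-1)+1) := by ring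
  rw [h]
  have h2 : m - 1 + 1 = m := by omega
  rw [h2]

theorem lemmaA (M : ℕ) : ∀ (U : Finset (Fin n)) (l : ℕ) (T : Finset (Finset (Fin n)))
    (a b : Finset (Fin n)), U.card = M →
    a ⊆ U → b ⊆ U → a.card = l → b.card = l → a ∉ T → b ∉ T → ¬ Reach U T l a b →
    l * (M - l) ≤ T.card := by
  induction M using Nat.strong_induction_on with
  | _ M IH =>
  intro U l T a b hU haU hbU hal hbl haT hbT hnr
  by_cases hMl : M ≤ l
  · have h0 : M - l = 0 := by omega
    rw [h0, Nat.mul_zero]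
    exact Nat.zero_le _
  push_neg at hMl
  by_cases hl0 : l = 0
  · subst hl0
    have ha : a = ∅ := card_eq_zero.1 hal
    have hb : b = ∅ := card_eq_zero.1 hbl
    exact absurd (ha ▸ hb ▸ Relation.ReflTransGen.refl) hnr
  have hl1 : 1 ≤ l := Nat.one_le_iff_ne_zero.2 hl0
  -- a ≠ b, else contradiction
  have hab : a ≠ b := fun h => hnr (h ▸ Relation.ReflTransGen.refl)
  -- complete graph case l = 1
  by_cases hl1' : l = 1
  · subst hl1'
    exfalso
    apply hnr
    refine Relation.ReflTransGen.single ⟨⟨hal, hbl, ?_, hab⟩, haU, hbU, haT, hbT⟩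
    obtain ⟨p, hp⟩ := card_eq_one.1 hal
    obtain ⟨q, hq⟩ := card_eq_one.1 hbl
    subst hp; subst hq
    have hpq : p ≠ q := fun h => hab (by rw [h])
    have : ({p} : Finset (Fin n)) ∩ {q} = ∅ := by
      ext z; simp only [mem_inter, mem_singleton, notMem_empty, iff_false]
      rintro ⟨rfl, rfl⟩; exact hpq rfl
    rw [this]; rfl
  have hl2 : 2 ≤ l := by omega
  -- complete graph case l = M - 1
  by_cases hlM : l + 1 = M
  · exfalso
    apply hnr
    refine Relation.ReflTransGen.single ⟨⟨hal, hbl, ?_, hab⟩, haU, hbU, haT, hbT⟩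
    have hsub : a ∪ b ⊆ U := union_subset haU hbU
    have h1 : (a ∪ b).card ≤ M := hU ▸ card_le_card hsub
    have h2 : l + 1 ≤ (a ∪ b).card := by
      have : ¬ b ⊆ a := by
        intro hba
        exact hab ((eq_of_subset_of_card_le hba (by omega)).symm)
      obtain ⟨z, hzb, hza⟩ := not_subset.1 this
      have : insert z a ⊆ a ∪ b := insert_subset (mem_union_right _ hzb) subset_union_left
      calc l + 1 = (insert z a).card := by rw [card_insert_of_notMem hza, hal]
        _ ≤ _ := card_le_card this
    have h3 : (a ∪ b).card + (a ∩ b).card = l + l := by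
      rw [card_union_add_card_inter, hal, hbl]
    omega
  have hlM2 : l + 2 ≤ M := by omega
  -- classes
  have hCD : ∀ v, Reach U T l a v → Reach U T l b v → False :=
    fun v hc hd => hnr (hc.trans' hd.symm')
  have hstepC : ∀ v v', Reach U T l a v → Step U T l v v' → Reach U T l a v' :=
    fun v v' hv h => hv.tail h
  -- case: C is a singleton
  by_cases hCs : ∀ v, v ∉ T → Reach U T l a v → v = a
  · set nb := (a ×ˢ (U \ a)).image (fun p => insert p.2 (a.erase p.1)) with hnb
    have hnbT : nb ⊆ T := by
      intro v hv
      obtain ⟨⟨i, c⟩, hm, rfl⟩ := mem_image.1 hv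
      simp only [Finset.mem_product, mem_sdiff] at hm
      obtain ⟨hi, hcU, hca⟩ := hm
      by_contra hvT
      have hstep : Step U T l a (insert c (a.erase i)) :=
        ⟨(adjL_swap hal hi hca).symm', haU,
          insert_subset hcU ((erase_subset _ _).trans haU), haT, hvT⟩
      have := hCs _ hvT (Relation.ReflTransGen.single hstep)
      exact swap_ne hi hca this
    have hcard : nb.card = l * (M - l) := by
      rw [hnb, swap_image_card (fun z hz => (mem_sdiff.1 hz).2), hal, card_sdiff_of_subset haU, hal, hU]
    calc l * (M - l) = nb.card := hcard.symm
      _ ≤ T.card := card_le_card hnbT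
  push_neg at hCs
  obtain ⟨v₀, hv₀T, hv₀R, hv₀ne⟩ := hCs
  have hv₀P := reach_props hv₀R ⟨haU, hal, haT⟩
  obtain ⟨hv₀U, hv₀l, _⟩ := hv₀P
  have hex : (v₀ \ a).Nonempty := by
    rw [sdiff_nonempty]
    intro hsub
    exact hv₀ne (eq_of_subset_of_card_le hsub (by rw [hal, hv₀l]))
  obtain ⟨e, he⟩ := hex
  have hev₀ : e ∈ v₀ := (mem_sdiff.1 he).1
  have hea : e ∉ a := (mem_sdiff.1 he).2
  have heU : e ∈ U := hv₀U hev₀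
  have hTsum : (T.filter (fun t => e ∈ t)).card + (T.filter (fun t => e ∉ t)).card = T.card :=
    card_filter_add_card_filter_not (fun t => e ∈ t)
  -- A-side bound
  have hAside : ∀ d₁, e ∈ d₁ → d₁ ∉ T → Reach U T l b d₁ →
      (l-1) * (M - l) ≤ (T.filter (fun t => e ∈ t)).card := by
    intro d₁ hed₁ hd₁T hd₁R
    obtain ⟨hd₁U, hd₁l, _⟩ := reach_props hd₁R ⟨hbU, hbl, hbT⟩
    have hkey : ¬ Reach (U.erase e) ((T.filter (fun t => e ∈ t)).image (fun t => t.erase e))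
        (l-1) (v₀.erase e) (d₁.erase e) := by
      intro hr
      have hlift := reach_lift_ins (T := T) hl2 heU hr
      rw [insert_erase hev₀, insert_erase hed₁] at hlift
      exact hCD d₁ (hv₀R.trans' hlift) hd₁R
    have hmem : ∀ (w : Finset (Fin n)), e ∈ w → w ∉ T →
        w.erase e ∉ (T.filter (fun t => e ∈ t)).image (fun t => t.erase e) := by
      intro w hew hwT hmem'
      obtain ⟨t, htA, hte⟩ := mem_image.1 hmem'
      have ht : t = w := by
        have h1 : e ∈ t := (mem_filter.1 htA).2
        have h2 := congrArg (insert e) hte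
        rwa [insert_erase h1, insert_erase hew] at h2
      exact hwT (ht ▸ (mem_filter.1 htA).1)
    have hIH := IH (M-1) (by omega) (U.erase e) (l-1)
      ((T.filter (fun t => e ∈ t)).image (fun t => t.erase e)) (v₀.erase e) (d₁.erase e)
      (by rw [card_erase_of_mem heU, hU]) (erase_subset_erase e hv₀U) (erase_subset_erase e hd₁U)
      (by rw [card_erase_of_mem hev₀, hv₀l]) (by rw [card_erase_of_mem hed₁, hd₁l])
      (hmem v₀ hev₀ hv₀T) (hmem d₁ hed₁ hd₁T) hkey
    have harr : (M - 1 - (l-1)) = M - l := by omega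
    rw [harr] at hIH
    exact hIH.trans card_image_le
  -- B-side bound
  have hBside : ∀ d₂, e ∉ d₂ → d₂ ∉ T → Reach U T l b d₂ →
      l * (M - 1 - l) ≤ (T.filter (fun t => e ∉ t)).card := by
    intro d₂ hed₂ hd₂T hd₂R
    obtain ⟨hd₂U, hd₂l, _⟩ := reach_props hd₂R ⟨hbU, hbl, hbT⟩
    have hkey : ¬ Reach (U.erase e) (T.filter (fun t => e ∉ t)) l a d₂ := by
      intro hr
      exact hCD d₂ (reach_mono_out hr) hd₂R
    have hIH := IH (M-1) (by omega) (U.erase e) l (T.filter (fun t => e ∉ t)) a d₂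
      (by rw [card_erase_of_mem heU, hU]) (subset_erase.2 ⟨haU, hea⟩)
      (subset_erase.2 ⟨hd₂U, hed₂⟩) hal hd₂l
      (fun h => haT (mem_filter.1 h).1) (fun h => hd₂T (mem_filter.1 h).1) hkey
    exact hIH
  have harith : ∀ cA cB : ℕ, (l-1) * (M - l) ≤ cA → l * (M - 1 - l) ≤ cB →
      cA + cB = T.card → l * (M-l) ≤ T.card := by
    intro cA cB h1 h2 h3
    have hm : 2 ≤ M - l := by omega
    have hq : M - 1 - l = (M - l) - 1 := by omega
    rw [hq] at h2
    calc l * (M-l) ≤ (l-1) * (M-l) + l * ((M-l)-1) := arith1 hl2 hm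
      _ ≤ cA + cB := Nat.add_le_add h1 h2
      _ = T.card := h3
  by_cases heb : e ∈ b
  · by_cases hDe : ∀ v, v ∉ T → Reach U T l b v → e ∈ v
    · -- all of D contains e : umbrella from b into the B side
      have hA := hAside b heb hbT Relation.ReflTransGen.refl
      have humbT : (U \ b).image (fun c => insert c (b.erase e)) ⊆
          T.filter (fun t => e ∉ t) := by
        intro v hv
        obtain ⟨c, hc, rfl⟩ := mem_image.1 hv
        obtain ⟨hcU, hcb⟩ := mem_sdiff.1 hc
        have hev : e ∉ insert c (b.erase e) := by
          simp only [mem_insert, mem_erase]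
          rintro (rfl | ⟨h1, h2⟩)
          · exact hcb heb
          · exact h1 rfl
        refine mem_filter.2 ⟨?_, hev⟩
        by_contra hvT
        have hstep : Step U T l b (insert c (b.erase e)) :=
          ⟨(adjL_swap hbl heb hcb).symm', hbU,
            insert_subset hcU ((erase_subset _ _).trans hbU), hbT, hvT⟩
        exact hev (hDe _ hvT (Relation.ReflTransGen.single hstep))
      have humbcard : ((U \ b).image (fun c => insert c (b.erase e))).card = M - l := by
        rw [card_image_of_injOn, card_sdiff_of_subset hbU, hbl, hU]
        intro c hc c' hc' hcc
        simp only [Finset.mem_coe, mem_sdiff] at hc hc'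
        simp only at hcc
        have : c ∈ insert c' (b.erase e) := hcc ▸ mem_insert_self c _
        rcases mem_insert.1 this with h | h
        · exact h
        · exact absurd (mem_of_mem_erase h) hc.2
      have hB : M - l ≤ (T.filter (fun t => e ∉ t)).card :=
        humbcard ▸ card_le_card humbT
      have hm : 2 ≤ M - l := by omega
      calc l * (M-l) ≤ (l-1) * (M-l) + (M-l) := arith2 hl1
        _ ≤ _ + _ := Nat.add_le_add hA hB
        _ = T.card := hTsum
    · push_neg at hDe
      obtain ⟨d₂, hd₂T, hd₂R, hed₂⟩ := hDe
      exact harith _ _ (hAside b heb hbT Relation.ReflTransGen.refl)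
        (hBside d₂ hed₂ hd₂T hd₂R) hTsum
  · by_cases hDe : ∀ v, v ∉ T → Reach U T l b v → e ∉ v
    · -- all of D avoids e : umbrella from b into the A side
      have hB := hBside b heb hbT Relation.ReflTransGen.refl
      have humbT : b.image (fun j => insert e (b.erase j)) ⊆
          T.filter (fun t => e ∈ t) := by
        intro v hv
        obtain ⟨j, hj, rfl⟩ := mem_image.1 hv
        have hev : e ∈ insert e (b.erase j) := mem_insert_self _ _
        refine mem_filter.2 ⟨?_, hev⟩
        by_contra hvT
        have hbe : e ∉ b.erase j := fun h => heb (mem_of_mem_erase h)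
        have hib : b ∩ insert e (b.erase j) = b.erase j := by
          ext z
          simp only [mem_inter, mem_insert, mem_erase]
          constructor
          · rintro ⟨hz, (rfl | hz2)⟩
            · exact absurd hz heb
            · exact hz2
          · rintro ⟨h1, h2⟩
            exact ⟨h2, Or.inr ⟨h1, h2⟩⟩
        have hstep : Step U T l b (insert e (b.erase j)) := by
          refine ⟨⟨hbl, ?_, ?_, ?_⟩, hbU, insert_subset heU ((erase_subset _ _).trans hbU),
            hbT, hvT⟩
          · rw [card_insert_of_notMem hbe, card_erase_of_mem hj, hbl]; omega
          · rw [hib, card_erase_of_mem hj, hbl]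
          · intro h
            exact heb (h ▸ hev)
        exact (hDe _ hvT (Relation.ReflTransGen.single hstep)) hev
      have humbcard : (b.image (fun j => insert e (b.erase j))).card = l := by
        rw [card_image_of_injOn, hbl]
        intro j hj j' hj' hjj
        simp only [Finset.mem_coe] at hj hj'
        have hbe : e ∉ b.erase j := fun h => heb (mem_of_mem_erase h)
        have hbe' : e ∉ b.erase j' := fun h => heb (mem_of_mem_erase h)
        have := congrArg (fun t => Finset.erase t e) hjj
        simp only [erase_insert hbe, erase_insert hbe'] at this
        exact erase_eq_erase_self hj this
      have hA : l ≤ (T.filter (fun t => e ∈ t)).card := humbcard ▸ card_le_card humbT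
      have hq : M - 1 - l = (M - l) - 1 := by omega
      rw [hq] at hB
      calc l * (M-l) ≤ l * ((M-l)-1) + l := arith3 (by omega)
        _ ≤ _ + _ := Nat.add_le_add hB hA
        _ = T.card := by rw [Nat.add_comm]; exact hTsum
    · push_neg at hDe
      obtain ⟨d₁, hd₁T, hd₁R, hed₁⟩ := hDe
      exact harith _ _ (hAside d₁ hed₁ hd₁T hd₁R)
        (hBside b heb hbT Relation.ReflTransGen.refl) hTsum

def shadowF (W : Finset (Finset (Fin n))) : Finset (Finset (Fin n)) :=
  W.biUnion (fun w => w.image (fun j => w.erase j))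

def ConnIn (l : ℕ) (W : Finset (Finset (Fin n))) : Prop :=
  ∀ w ∈ W, ∀ w' ∈ W, Relation.ReflTransGen (fun s t => AdjL l s t ∧ s ∈ W ∧ t ∈ W) w w'

lemma mem_shadowF {W : Finset (Finset (Fin n))} {v : Finset (Fin n)} :
    v ∈ shadowF W ↔ ∃ w ∈ W, ∃ j ∈ w, w.erase j = v := by
  simp [shadowF]

lemma sh_single_card {w : Finset (Fin n)} : (w.image (fun j => w.erase j)).card = w.card := by
  rw [card_image_of_injOn]
  intro j hj j' _ h
  exact erase_eq_erase_self hj h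

lemma shadowF_subset_sup {W : Finset (Finset (Fin n))} {v : Finset (Fin n)}
    (h : v ∈ shadowF W) : v ⊆ W.sup id := by
  obtain ⟨w, hwW, j, _, rfl⟩ := mem_shadowF.1 h
  exact (erase_subset _ _).trans (Finset.le_sup (f := id) hwW)

lemma shadowF_mono {W W' : Finset (Finset (Fin n))} (h : W ⊆ W') :
    shadowF W ⊆ shadowF W' := biUnion_subset_biUnion_of_subset_left _ h

lemma first_exit {r : Finset (Fin n) → Finset (Fin n) → Prop} {V : Finset (Finset (Fin n))}
    {a b : Finset (Fin n)} (h : Relation.ReflTransGen r a b) (ha : a ∈ V) (hb : b ∉ V) :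
    ∃ u v, u ∈ V ∧ v ∉ V ∧ r u v := by
  induction h with
  | refl => exact absurd ha hb
  | @tail b' c' _ hr ih =>
    by_cases hb' : b' ∈ V
    · exact ⟨b', c', hb', hb, hr⟩
    · exact ih hb'

theorem growth (l : ℕ) (hl : 1 ≤ l) (W : Finset (Finset (Fin n))) (w₀ : Finset (Fin n))
    (hw₀ : w₀ ∈ W) (hcard : ∀ w ∈ W, w.card = l) (hconn : ConnIn l W) :
    l + (l-1) * ((W.sup id).card - l) ≤ (shadowF W).card := by
  have haux : ∀ m (V : Finset (Finset (Fin n))), V ⊆ W → w₀ ∈ V → (W \ V).card = m →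
      l + (l-1) * ((V.sup id).card - l) ≤ (shadowF V).card →
      l + (l-1) * ((W.sup id).card - l) ≤ (shadowF W).card := by
    intro m
    induction m using Nat.strong_induction_on with
    | _ m IHm =>
    intro V hVW hw₀V hm hbound
    by_cases hWV : W \ V = ∅
    · have hWV' : W ⊆ V := sdiff_eq_empty_iff_subset.1 hWV
      have : V = W := subset_antisymm hVW hWV'
      exact this ▸ hbound
    · obtain ⟨w, hw⟩ := nonempty_iff_ne_empty.2 hWV
      obtain ⟨hwW, hwV⟩ := mem_sdiff.1 hw
      obtain ⟨u, v, huV, hvV, hadj, _, hvW⟩ := first_exit (hconn w₀ (hVW hw₀V) w hwW) hw₀V hwV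
      have hul : u.card = l := hadj.1
      have hvl : v.card = l := hadj.2.1
      have hV' : insert v V ⊆ W := insert_subset hvW hVW
      have hm' : (W \ insert v V).card < m := by
        have heq : W \ insert v V = (W \ V).erase v := by
          ext z
          simp only [mem_sdiff, mem_erase, mem_insert]
          tauto
        rw [heq, ← hm]
        exact card_erase_lt_of_mem (mem_sdiff.2 ⟨hvW, hvV⟩)
      have hvu : (v \ u).card = 1 := by
        have h1 : (v ∩ u).card + (v \ u).card = v.card := card_inter_add_card_sdiff v u
        have h2 : (v ∩ u).card = l - 1 := by rw [inter_comm]; exact hadj.2.2.1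
        omega
      obtain ⟨bx, hbx⟩ := card_eq_one.1 hvu
      have hbxv : bx ∈ v := by
        have : bx ∈ v \ u := hbx ▸ mem_singleton_self bx
        exact (mem_sdiff.1 this).1
      have husub : u ⊆ V.sup id := Finset.le_sup (f := id) huV
      have hssup : l ≤ (V.sup id).card := by
        calc l = w₀.card := (hcard w₀ (hVW hw₀V)).symm
          _ ≤ _ := card_le_card (Finset.le_sup (f := id) hw₀V)
      by_cases hbxV : bx ∈ V.sup id
      · have hvsub : v ⊆ V.sup id := by
          intro z hz
          by_cases hzu : z ∈ u
          · exact husub hzu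
          · have : z ∈ v \ u := mem_sdiff.2 ⟨hz, hzu⟩
            rw [hbx, mem_singleton] at this
            exact this ▸ hbxV
        have hsup : (insert v V).sup id = V.sup id := by
          rw [sup_insert]
          exact sup_eq_right.2 hvsub
        refine IHm _ hm' (insert v V) hV' (mem_insert_of_mem hw₀V) rfl ?_
        rw [hsup]
        exact hbound.trans (card_le_card (shadowF_mono (subset_insert _ _)))
      · have hsupcard : ((insert v V).sup id).card = (V.sup id).card + 1 := by
          rw [sup_insert]
          have heq : (id v ⊔ V.sup id) = insert bx (V.sup id) := by
            ext z
            simp only [id, sup_eq_union, mem_union, mem_insert]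
            constructor
            · rintro (hz | hz)
              · by_cases hzu : z ∈ u
                · exact Or.inr (husub hzu)
                · have : z ∈ v \ u := mem_sdiff.2 ⟨hz, hzu⟩
                  rw [hbx, mem_singleton] at this
                  exact Or.inl this
              · exact Or.inr hz
            · rintro (rfl | hz)
              · exact Or.inl hbxv
              · exact Or.inr hz
          rw [heq, card_insert_of_notMem hbxV]
        have hnewsub : (v.erase bx).image (fun j => v.erase j) ⊆ shadowF (insert v V) := by
          intro z hz
          obtain ⟨j, hj, rfl⟩ := mem_image.1 hz
          exact mem_shadowF.2 ⟨v, mem_insert_self _ _, j, mem_of_mem_erase hj, rfl⟩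
        have hnewdisj : Disjoint ((v.erase bx).image (fun j => v.erase j)) (shadowF V) := by
          rw [disjoint_left]
          intro z hz hzV
          obtain ⟨j, hj, rfl⟩ := mem_image.1 hz
          have : bx ∈ v.erase j := mem_erase.2 ⟨fun h => (mem_erase.1 hj).1 h.symm, hbxv⟩
          exact hbxV (shadowF_subset_sup hzV this)
        have hnewcard : ((v.erase bx).image (fun j => v.erase j)).card = l - 1 := by
          rw [card_image_of_injOn, card_erase_of_mem hbxv, hvl]
          intro j hj j' _ h
          exact erase_eq_erase_self (mem_of_mem_erase hj) h
        have hcard' : (l-1) + (shadowF V).card ≤ (shadowF (insert v V)).card := by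
          rw [← hnewcard, ← card_union_of_disjoint hnewdisj]
          exact card_le_card (union_subset hnewsub (shadowF_mono (subset_insert _ _)))
        refine IHm _ hm' (insert v V) hV' (mem_insert_of_mem hw₀V) rfl ?_
        rw [hsupcard]
        have harr : (V.sup id).card + 1 - l = ((V.sup id).card - l) + 1 := by omega
        rw [harr, Nat.mul_succ]
        omega
  apply haux (W \ {w₀}).card {w₀} (singleton_subset_iff.2 hw₀) (mem_singleton_self _) rfl
  have h1 : ({w₀} : Finset (Finset (Fin n))).sup id = w₀ := by simp
  have h2 : shadowF {w₀} = w₀.image (fun j => w₀.erase j) := by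
    simp [shadowF]
  rw [h1, h2, sh_single_card, hcard w₀ hw₀]
  have : l - l = 0 := by omega
  rw [this, Nat.mul_zero]
  omega

noncomputable def NexcF (U : Finset (Fin n)) (l : ℕ) (x : Finset (Fin n)) (W : Finset (Finset (Fin n))) :
    Finset (Finset (Fin n)) :=
  (U.powersetCard l).filter (fun v => v ∉ W ∧ (v ∩ x).card + 2 ≤ l ∧ ∃ w ∈ W, AdjL l v w)

lemma mem_NexcF {U : Finset (Fin n)} {l : ℕ} {x : Finset (Fin n)} {W} {v : Finset (Fin n)} :
    v ∈ NexcF U l x W ↔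
      (v ⊆ U ∧ v.card = l) ∧ v ∉ W ∧ (v ∩ x).card + 2 ≤ l ∧ ∃ w ∈ W, AdjL l v w := by
  rw [NexcF, mem_filter, mem_powersetCard]

lemma adjL_insert_erase {l : ℕ} {w : Finset (Fin n)} {e j : Fin n} (hwl : w.card = l)
    (hj : j ∈ w) (he : e ∉ w) : AdjL l (insert e (w.erase j)) w := by
  have hew : e ∉ w.erase j := fun h => he (mem_of_mem_erase h)
  have hl1 : 1 ≤ l := hwl ▸ card_pos.2 ⟨j, hj⟩
  refine ⟨?_, hwl, ?_, ?_⟩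
  · rw [card_insert_of_notMem hew, card_erase_of_mem hj, hwl]; omega
  · have hib : (insert e (w.erase j)) ∩ w = w.erase j := by
      ext z
      simp only [mem_inter, mem_insert, mem_erase]
      constructor
      · rintro ⟨(rfl | ⟨h1, h2⟩), h3⟩
        · exact absurd h3 he
        · exact ⟨h1, h3⟩
      · rintro ⟨h1, h2⟩
        exact ⟨Or.inr ⟨h1, h2⟩, h2⟩
    rw [hib, card_erase_of_mem hj, hwl]
  · intro h
    exact he (h ▸ mem_insert_self e _)

lemma insert_erase_inj {w : Finset (Fin n)} {e : Fin n} (he : e ∉ w) {j j' : Fin n}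
    (hj : j ∈ w) (h : insert e (w.erase j) = insert e (w.erase j')) : j = j' := by
  have h1 : e ∉ w.erase j := fun hh => he (mem_of_mem_erase hh)
  have h2 : e ∉ w.erase j' := fun hh => he (mem_of_mem_erase hh)
  have := congrArg (fun t => Finset.erase t e) h
  simp only [erase_insert h1, erase_insert h2] at this
  exact erase_eq_erase_self hj this

lemma sdiff_insert_erase {w x : Finset (Fin n)} {e j : Fin n} (hex : e ∈ x) (hjx : j ∈ x) :
    (insert e (w.erase j)) \ x = w \ x := by
  ext z
  simp only [mem_sdiff, mem_insert, mem_erase]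
  constructor
  · rintro ⟨(rfl | ⟨h1, h2⟩), h3⟩
    · exact absurd hex h3
    · exact ⟨h2, h3⟩
  · rintro ⟨h1, h2⟩
    exact ⟨Or.inr ⟨fun hh => h2 (hh ▸ hjx), h1⟩, h2⟩

lemma inter_card_lt {l : ℕ} {w w' : Finset (Fin n)} (hw : w.card = l) (hw' : w'.card = l)
    (hne : w ≠ w') : (w ∩ w').card ≤ l - 1 := by
  have h1 : (w ∩ w').card ≤ l := hw ▸ card_le_card inter_subset_left
  have h2 : (w ∩ w').card ≠ l := by
    intro hc
    have h3 : w ∩ w' = w := eq_of_subset_of_card_le inter_subset_left (by omega)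
    have h4 : w ⊆ w' := by rw [← h3]; exact inter_subset_right
    exact hne (eq_of_subset_of_card_le h4 (by omega))
  omega

lemma sh_pairwise {l : ℕ} {w w' : Finset (Fin n)} (hw : w.card = l) (hw' : w'.card = l)
    (hne : w ≠ w') :
    ((w.image (fun j => w.erase j)) ∩ (w'.image (fun j => w'.erase j))).card ≤ 1 := by
  have hsub : (w.image (fun j => w.erase j)) ∩ (w'.image (fun j => w'.erase j)) ⊆
      {w ∩ w'} := by
    intro v hv
    obtain ⟨hv1, hv2⟩ := mem_inter.1 hv
    obtain ⟨j, hj, rfl⟩ := mem_image.1 hv1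
    obtain ⟨j', hj', heq⟩ := mem_image.1 hv2
    have hs1 : w.erase j ⊆ w ∩ w' :=
      subset_inter (erase_subset _ _) (heq ▸ erase_subset _ _)
    have hcap : (w ∩ w').card ≤ l - 1 := inter_card_lt hw hw' hne
    have hcv : (w.erase j).card = l - 1 := by rw [card_erase_of_mem hj, hw]
    exact mem_singleton.2 (eq_of_subset_of_card_le hs1 (by omega))
  calc _ ≤ ({w ∩ w'} : Finset (Finset (Fin n))).card := card_le_card hsub
    _ = 1 := card_singleton _

lemma card_pair_bound (c : ℕ) : ∀ (W : Finset (Finset (Fin n)))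
    (F : Finset (Fin n) → Finset (Finset (Fin n))),
    (∀ w ∈ W, c ≤ (F w).card) →
    (∀ w ∈ W, ∀ w' ∈ W, w ≠ w' → ((F w) ∩ (F w')).card ≤ 1) →
    2 * (W.card * c) ≤ 2 * (W.biUnion F).card + W.card * (W.card - 1) := by
  intro W
  induction W using Finset.induction_on with
  | empty => intro F _ _; simp
  | @insert a s ha ih =>
    intro F hc hpair
    have hmc := hc a (mem_insert_self _ _)
    have hbi := ih F (fun w hw => hc w (mem_insert_of_mem hw))
      (fun w hw w' hw' hne => hpair w (mem_insert_of_mem hw) w' (mem_insert_of_mem hw') hne)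
    have hint : (F a ∩ s.biUnion F).card ≤ s.card := by
      have heq : F a ∩ s.biUnion F = s.biUnion (fun w => F a ∩ F w) := by
        ext z
        simp only [mem_inter, mem_biUnion]
        tauto
      rw [heq]
      calc (s.biUnion (fun w => F a ∩ F w)).card ≤ ∑ w ∈ s, (F a ∩ F w).card :=
            card_biUnion_le
        _ ≤ ∑ _w ∈ s, 1 := Finset.sum_le_sum (fun w hw => hpair a (mem_insert_self _ _) w
            (mem_insert_of_mem hw) (fun he => ha (he ▸ hw)))
        _ = s.card := by simp
    have hcup : (F a ∪ s.biUnion F).card + (F a ∩ s.biUnion F).card =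
        (F a).card + (s.biUnion F).card := card_union_add_card_inter _ _
    rw [biUnion_insert, card_insert_of_notMem ha]
    have e : (s.card + 1) * ((s.card + 1) - 1) = s.card * (s.card - 1) + 2 * s.card := by
      rcases Nat.eq_zero_or_pos s.card with h | h
      · rw [h]
      · rcases Nat.exists_eq_add_of_le h with ⟨m, hm⟩
        have h1 : s.card = m + 1 := by omega
        rw [h1]
        have h2 : m + 1 + 1 - 1 = m + 1 := by omega
        have h3 : m + 1 - 1 = m := by omega
        rw [h2, h3]
        ring
    rw [e]
    nlinarith [hbi, hint, hmc, hcup]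

lemma dc_shadow {l : ℕ} (U : Finset (Fin n)) (W : Finset (Finset (Fin n)))
    (hU : U.card = l + 2) (hl : 1 ≤ l) (hWU : ∀ w ∈ W, w ⊆ U) (hWl : ∀ w ∈ W, w.card = l) :
    W.card * l ≤ (shadowF W).card * 3 := by
  apply card_mul_le_card_mul (fun w v => v ⊆ w)
  · intro w hw
    have hsub : w.image (fun j => w.erase j) ⊆ bipartiteAbove (fun w v => v ⊆ w) (shadowF W) w := by
      intro v hv
      obtain ⟨j, hj, rfl⟩ := mem_image.1 hv
      refine mem_filter.2 ⟨mem_shadowF.2 ⟨w, hw, j, hj, rfl⟩, erase_subset _ _⟩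
    calc l = (w.image (fun j => w.erase j)).card := by rw [sh_single_card, hWl w hw]
      _ ≤ _ := card_le_card hsub
  · intro v hv
    obtain ⟨w, hwW, j, hjw, rfl⟩ := mem_shadowF.1 hv
    have hvc : (w.erase j).card = l - 1 := by rw [card_erase_of_mem hjw, hWl w hwW]
    have hsub : bipartiteBelow (fun w v => v ⊆ w) W (w.erase j) ⊆
        (U \ (w.erase j)).image (fun z => insert z (w.erase j)) := by
      intro w' hw'
      obtain ⟨hw'W, hvw'⟩ := mem_filter.1 hw'
      have hd : (w' \ (w.erase j)).card = 1 := by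
        have := card_sdiff_add_card_eq_card hvw'
        rw [hWl w' hw'W] at this
        omega
      obtain ⟨z, hz⟩ := card_eq_one.1 hd
      have hzw' : z ∈ w' \ (w.erase j) := hz ▸ mem_singleton_self z
      refine mem_image.2 ⟨z, ?_, ?_⟩
      · exact mem_sdiff.2 ⟨hWU w' hw'W (mem_sdiff.1 hzw').1, (mem_sdiff.1 hzw').2⟩
      · apply Finset.Subset.antisymm
        · intro q hq
          rcases mem_insert.1 hq with rfl | hq'
          · exact (mem_sdiff.1 hzw').1
          · exact hvw' hq'
        · intro q hq
          by_cases hqv : q ∈ w.erase j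
          · exact mem_insert_of_mem hqv
          · have : q ∈ w' \ (w.erase j) := mem_sdiff.2 ⟨hq, hqv⟩
            rw [hz, mem_singleton] at this
            exact this ▸ mem_insert_self _ _
    calc (bipartiteBelow (fun w v => v ⊆ w) W (w.erase j)).card
        ≤ ((U \ (w.erase j)).image (fun z => insert z (w.erase j))).card := card_le_card hsub
      _ ≤ (U \ (w.erase j)).card := card_image_le
      _ = 3 := by rw [card_sdiff_of_subset ((erase_subset _ _).trans (hWU w hwW)), hU, hvc]; omega

theorem lemmaB_base (U : Finset (Fin n)) (l : ℕ) (x : Finset (Fin n))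
    (W : Finset (Finset (Fin n))) (hU : U.card = l + 2) (hl3 : 3 ≤ l) (hxU : x ⊆ U)
    (hxl : x.card ≤ l) (hWU : ∀ w ∈ W, w ⊆ U) (hWl : ∀ w ∈ W, w.card = l)
    (hW2 : 2 ≤ W.card) (hconn : ConnIn l W) (hWx : ∀ w ∈ W, (w ∩ x).card + 2 ≤ l) :
    (l-1) * 3 ≤ (shadowF W).card + (NexcF U l x W).card := by
  by_cases hdc : l + 3 ≤ W.card
  · -- double counting branch
    have h1 := dc_shadow U W hU (by omega) hWU hWl
    have h2 : (l+3) * l ≤ W.card * l := Nat.mul_le_mul_right l hdc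
    have h3 : 9 * (l-1) ≤ (l+3) * l := by
      rcases Nat.exists_eq_add_of_le hl3 with ⟨l', rfl⟩
      have e1 : 3 + l' - 1 = 2 + l' := by omega
      rw [e1]
      nlinarith
    have h4 : 3 * (3 * (l-1)) ≤ 3 * (shadowF W).card := by
      calc 3 * (3 * (l-1)) = 9 * (l-1) := by ring
        _ ≤ (l+3) * l := h3
        _ ≤ W.card * l := h2
        _ ≤ (shadowF W).card * 3 := h1
        _ = 3 * (shadowF W).card := Nat.mul_comm _ _
    have h5 : 3 * (l-1) ≤ (shadowF W).card := Nat.le_of_mul_le_mul_left h4 (by omega)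
    calc (l-1) * 3 = 3 * (l-1) := Nat.mul_comm _ _
      _ ≤ (shadowF W).card := h5
      _ ≤ _ := Nat.le_add_right _ _
  · by_cases he2 : W.card = 2
    · obtain ⟨w₁, w₂, hw12, hWeq⟩ := card_eq_two.1 he2
      have hw₁ : w₁ ∈ W := hWeq ▸ mem_insert_self _ _
      have hw₂ : w₂ ∈ W := hWeq ▸ mem_insert_of_mem (mem_singleton_self _)
      have hadj : AdjL l w₁ w₂ := by
        rcases (hconn w₁ hw₁ w₂ hw₂).cases_head with h | ⟨c, hc, _⟩
        · exact absurd h hw12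
        · have hcW : c ∈ W := hc.2.2
          rw [hWeq, mem_insert, mem_singleton] at hcW
          rcases hcW with rfl | rfl
          · exact absurd rfl hc.1.2.2.2
          · exact hc.1
      have hw₁l := hWl w₁ hw₁
      have hw₂l := hWl w₂ hw₂
      have hw₁U := hWU w₁ hw₁
      have hw₂U := hWU w₂ hw₂
      -- shadow at least 2l - 1
      have hsh : 2*l - 1 ≤ (shadowF W).card := by
        have heq : shadowF W = (w₁.image (fun j => w₁.erase j)) ∪
            (w₂.image (fun j => w₂.erase j)) := by
          rw [hWeq, shadowF, biUnion_insert, singleton_biUnion]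
        have hcup := card_union_add_card_inter (w₁.image (fun j => w₁.erase j))
          (w₂.image (fun j => w₂.erase j))
        have hint := sh_pairwise hw₁l hw₂l hw12
        have hs1 : (w₁.image (fun j => w₁.erase j)).card = l := by rw [sh_single_card, hw₁l]
        have hs2 : (w₂.image (fun j => w₂.erase j)).card = l := by rw [sh_single_card, hw₂l]
        rw [hs1, hs2] at hcup
        rw [heq]
        omega
      -- special elements
      have hd12 : (w₁ ∩ w₂).card = l - 1 := hadj.2.2.1
      have hαc : (w₂ \ w₁).card = 1 := by
        have h1 : (w₂ ∩ w₁).card + (w₂ \ w₁).card = l := by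
          rw [card_inter_add_card_sdiff, hw₂l]
        rw [inter_comm] at h1
        omega
      obtain ⟨α, hαeq⟩ := card_eq_one.1 hαc
      have hα : α ∈ w₂ ∧ α ∉ w₁ := mem_sdiff.1 (hαeq ▸ mem_singleton_self α)
      have hγc : (w₁ \ w₂).card = 1 := by
        have h1 : (w₁ ∩ w₂).card + (w₁ \ w₂).card = l := by
          rw [card_inter_add_card_sdiff, hw₁l]
        omega
      obtain ⟨γ, hγeq⟩ := card_eq_one.1 hγc
      have hγ : γ ∈ w₁ ∧ γ ∉ w₂ := mem_sdiff.1 (hγeq ▸ mem_singleton_self γ)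
      have hβc : (U \ (w₁ ∪ w₂)).card = 1 := by
        have h1 : (w₁ ∪ w₂).card + (w₁ ∩ w₂).card = l + l := by
          rw [card_union_add_card_inter, hw₁l, hw₂l]
        rw [card_sdiff_of_subset (union_subset hw₁U hw₂U), hU]
        omega
      obtain ⟨β, hβeq⟩ := card_eq_one.1 hβc
      have hβ' := mem_sdiff.1 (hβeq ▸ mem_singleton_self β)
      have hβU : β ∈ U := hβ'.1
      have hβ1 : β ∉ w₁ := fun h => hβ'.2 (mem_union_left _ h)
      have hβ2 : β ∉ w₂ := fun h => hβ'.2 (mem_union_right _ h)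
      -- generic membership of swap candidates from w₁
      have hcand : ∀ z ∈ w₁ ∩ w₂, ((insert α (w₁.erase z)) ∩ x).card + 2 ≤ l →
          insert α (w₁.erase z) ∈ NexcF U l x W := by
        intro z hz hxc
        obtain ⟨hzw₁, hzw₂⟩ := mem_inter.1 hz
        have hne1 : insert α (w₁.erase z) ≠ w₁ := by
          intro h
          exact hα.2 (h ▸ mem_insert_self α _)
        have hne2 : insert α (w₁.erase z) ≠ w₂ := by
          intro h
          apply hγ.2
          rw [← h]
          exact mem_insert_of_mem (mem_erase.2 ⟨fun hh => hγ.2 (hh ▸ hzw₂), hγ.1⟩)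
        refine mem_NexcF.2 ⟨⟨?_, ?_⟩, ?_, hxc, w₁, hw₁, adjL_insert_erase hw₁l hzw₁ hα.2⟩
        · exact insert_subset (hw₂U hα.1) ((erase_subset _ _).trans hw₁U)
        · rw [card_insert_of_notMem (fun h => hα.2 (mem_of_mem_erase h)),
            card_erase_of_mem hzw₁, hw₁l]
          omega
        · rw [hWeq, mem_insert, mem_singleton]
          rintro (h | h)
          · exact hne1 h
          · exact hne2 h
      have hcandinj : ∀ (s : Finset (Fin n)), s ⊆ w₁ ∩ w₂ →
          (s.image (fun z => insert α (w₁.erase z))).card = s.card := by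
        intro s hs
        rw [card_image_of_injOn]
        intro z hz z' _ h
        exact insert_erase_inj hα.2 ((mem_inter.1 (hs (Finset.mem_coe.1 hz))).1) h
      -- Nexc at least l - 2
      have hNx : l - 2 ≤ (NexcF U l x W).card := by
        by_cases hAcase : α ∉ x ∨ (w₁ ∩ x).card + 3 ≤ l
        · -- all candidates work
          have hsub : (w₁ ∩ w₂).image (fun z => insert α (w₁.erase z)) ⊆ NexcF U l x W := by
            intro v hv
            obtain ⟨z, hz, rfl⟩ := mem_image.1 hv
            refine hcand z hz ?_
            rcases hAcase with hax | hwx3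
            · have hsub2 : (insert α (w₁.erase z)) ∩ x ⊆ w₁ ∩ x := by
                intro q hq
                obtain ⟨hq1, hq2⟩ := mem_inter.1 hq
                rcases mem_insert.1 hq1 with rfl | hq1'
                · exact absurd hq2 hax
                · exact mem_inter.2 ⟨mem_of_mem_erase hq1', hq2⟩
              have := card_le_card hsub2
              have := hWx w₁ hw₁
              omega
            · have hsub2 : (insert α (w₁.erase z)) ∩ x ⊆ insert α (w₁ ∩ x) := by
                intro q hq
                obtain ⟨hq1, hq2⟩ := mem_inter.1 hq
                rcases mem_insert.1 hq1 with rfl | hq1'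
                · exact mem_insert_self _ _
                · exact mem_insert_of_mem (mem_inter.2 ⟨mem_of_mem_erase hq1', hq2⟩)
              have h1 := card_le_card hsub2
              have h2 := card_insert_le α (w₁ ∩ x)
              omega
          have h1 := card_le_card hsub
          rw [hcandinj _ Subset.rfl, hd12] at h1
          omega
        · push_neg at hAcase
          obtain ⟨hαx, hwx3⟩ := hAcase
          have hwxeq : (w₁ ∩ x).card + 2 = l := by
            have := hWx w₁ hw₁
            omega
          have hgood : ∀ z ∈ (w₁ ∩ w₂) ∩ x, insert α (w₁.erase z) ∈ NexcF U l x W := by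
            intro z hz
            obtain ⟨hzd, hzx⟩ := mem_inter.1 hz
            refine hcand z hzd ?_
            have hsub2 : (insert α (w₁.erase z)) ∩ x ⊆ insert α ((w₁ ∩ x).erase z) := by
              intro q hq
              obtain ⟨hq1, hq2⟩ := mem_inter.1 hq
              rcases mem_insert.1 hq1 with rfl | hq1'
              · exact mem_insert_self _ _
              · exact mem_insert_of_mem (mem_erase.2 ⟨(mem_erase.1 hq1').1,
                  mem_inter.2 ⟨mem_of_mem_erase hq1', hq2⟩⟩)
            have h1 := card_le_card hsub2
            have h2 := card_insert_le α ((w₁ ∩ x).erase z)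
            have h3 : ((w₁ ∩ x).erase z).card = (w₁ ∩ x).card - 1 :=
              card_erase_of_mem (mem_inter.2 ⟨(mem_inter.1 hzd).1, hzx⟩)
            omega
          by_cases hγx : γ ∈ x
          · -- need the extra vertex insert β (w₁ ∩ w₂)
            have hdx : (w₁ ∩ w₂) ∩ x ⊆ (w₁ ∩ x).erase γ := by
              intro q hq
              obtain ⟨hq1, hq2⟩ := mem_inter.1 hq
              exact mem_erase.2 ⟨fun h => hγ.2 (h ▸ (mem_inter.1 hq1).2),
                mem_inter.2 ⟨(mem_inter.1 hq1).1, hq2⟩⟩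
            have hdx2 : (w₁ ∩ x).erase γ ⊆ (w₁ ∩ w₂) ∩ x := by
              intro q hq
              obtain ⟨hqγ, hq2⟩ := mem_erase.1 hq
              obtain ⟨hqw, hqx⟩ := mem_inter.1 hq2
              have hqw₂ : q ∈ w₂ := by
                by_contra hqw₂
                have : q ∈ w₁ \ w₂ := mem_sdiff.2 ⟨hqw, hqw₂⟩
                rw [hγeq, mem_singleton] at this
                exact hqγ this
              exact mem_inter.2 ⟨mem_inter.2 ⟨hqw, hqw₂⟩, hqx⟩
            have hdxcard : ((w₁ ∩ w₂) ∩ x).card = l - 3 := by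
              have h1 : (w₁ ∩ w₂) ∩ x = (w₁ ∩ x).erase γ := Finset.Subset.antisymm hdx hdx2
              rw [h1, card_erase_of_mem (mem_inter.2 ⟨hγ.1, hγx⟩)]
              omega
            -- the extra vertex
            have hvmem : insert β (w₁ ∩ w₂) ∈ NexcF U l x W := by
              have hβd : β ∉ w₁ ∩ w₂ := fun h => hβ1 (mem_inter.1 h).1
              have hcard : (insert β (w₁ ∩ w₂)).card = l := by
                rw [card_insert_of_notMem hβd, hd12]
                omega
              have hib : (insert β (w₁ ∩ w₂)) ∩ w₁ = w₁ ∩ w₂ := by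
                ext q
                simp only [mem_inter, mem_insert]
                constructor
                · rintro ⟨(rfl | ⟨hq1, hq2⟩), hq3⟩
                  · exact absurd hq3 hβ1
                  · exact ⟨hq1, hq2⟩
                · rintro ⟨hq1, hq2⟩
                  exact ⟨Or.inr ⟨hq1, hq2⟩, hq1⟩
              refine mem_NexcF.2 ⟨⟨?_, hcard⟩, ?_, ?_, w₁, hw₁, ?_⟩
              · exact insert_subset hβU (inter_subset_left.trans hw₁U)
              · rw [hWeq, mem_insert, mem_singleton]
                rintro (h | h)
                · exact hβ1 (h ▸ mem_insert_self β _)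
                · exact hβ2 (h ▸ mem_insert_self β _)
              · have hsub2 : (insert β (w₁ ∩ w₂)) ∩ x ⊆ insert β ((w₁ ∩ w₂) ∩ x) := by
                  intro q hq
                  obtain ⟨hq1, hq2⟩ := mem_inter.1 hq
                  rcases mem_insert.1 hq1 with rfl | hq1'
                  · exact mem_insert_self _ _
                  · exact mem_insert_of_mem (mem_inter.2 ⟨hq1', hq2⟩)
                have h1 := card_le_card hsub2
                have h2 := card_insert_le β ((w₁ ∩ w₂) ∩ x)
                omega
              · refine ⟨hcard, hw₁l, ?_, ?_⟩
                · rw [hib, hd12]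
                · intro h
                  exact hβ1 (h ▸ mem_insert_self β _)
            -- combine
            have hsub : insert (insert β (w₁ ∩ w₂))
                (((w₁ ∩ w₂) ∩ x).image (fun z => insert α (w₁.erase z))) ⊆ NexcF U l x W := by
              intro v hv
              rcases mem_insert.1 hv with rfl | hv'
              · exact hvmem
              · obtain ⟨z, hz, rfl⟩ := mem_image.1 hv'
                exact hgood z hz
            have hnotin : insert β (w₁ ∩ w₂) ∉
                ((w₁ ∩ w₂) ∩ x).image (fun z => insert α (w₁.erase z)) := by
              intro h
              obtain ⟨z, _, heq2⟩ := mem_image.1 h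
              have hαin : α ∈ insert β (w₁ ∩ w₂) := heq2 ▸ mem_insert_self α _
              rcases mem_insert.1 hαin with h' | h'
              · exact hβ2 (h' ▸ hα.1)
              · exact hα.2 (mem_inter.1 h').1
            have h1 := card_le_card hsub
            rw [card_insert_of_notMem hnotin, hcandinj _ inter_subset_left, hdxcard] at h1
            omega
          · -- γ ∉ x : the candidates from (w₁∩w₂)∩x = w₁∩x suffice
            have hdx : (w₁ ∩ w₂) ∩ x = w₁ ∩ x := by
              apply Finset.Subset.antisymm
              · exact inter_subset_inter (inter_subset_left) Subset.rfl
              · intro q hq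
                obtain ⟨hqw, hqx⟩ := mem_inter.1 hq
                have hqw₂ : q ∈ w₂ := by
                  by_contra hqw₂
                  have : q ∈ w₁ \ w₂ := mem_sdiff.2 ⟨hqw, hqw₂⟩
                  rw [hγeq, mem_singleton] at this
                  exact hγx (this ▸ hqx)
                exact mem_inter.2 ⟨mem_inter.2 ⟨hqw, hqw₂⟩, hqx⟩
            have hsub : ((w₁ ∩ w₂) ∩ x).image (fun z => insert α (w₁.erase z)) ⊆
                NexcF U l x W := by
              intro v hv
              obtain ⟨z, hz, rfl⟩ := mem_image.1 hv
              exact hgood z hz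
            have h1 := card_le_card hsub
            rw [hcandinj _ inter_subset_left, hdx] at h1
            omega
      -- conclude
      have hgoal : (l-1) * 3 = 3*l - 3 := by omega
      omega
    · by_cases hpb : W.card ≤ 2*l - 2
      · -- pairwise branch
        have he3 : 3 ≤ W.card := by omega
        have h1 := card_pair_bound (n := n) l W (fun w => w.image (fun j => w.erase j))
          (fun w hw => by rw [sh_single_card, hWl w hw])
          (fun w hw w' hw' hne => sh_pairwise (hWl w hw) (hWl w' hw') hne)
        have h2 : W.biUnion (fun w => w.image (fun j => w.erase j)) = shadowF W := rfl
        rw [h2] at h1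
        have key : 6 * (l-1) + W.card * (W.card - 1) ≤ 2 * (W.card * l) := by
          zify [show (1:ℕ) ≤ l by omega, show (1:ℕ) ≤ W.card by omega]
          have hub : (W.card : ℤ) ≤ 2 * l - 2 := by
            have := hpb
            omega
          have hlb : (3 : ℤ) ≤ W.card := by exact_mod_cast he3
          nlinarith [mul_nonneg (by omega : (0:ℤ) ≤ (W.card:ℤ) - 3)
            (by omega : (0:ℤ) ≤ 2 * (l:ℤ) - 2 - W.card)]
        have h5 : 3 * (l-1) ≤ (shadowF W).card := by omega
        calc (l-1) * 3 = 3 * (l-1) := Nat.mul_comm _ _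
          _ ≤ (shadowF W).card := h5
          _ ≤ _ := Nat.le_add_right _ _
      · -- remaining case : l = 3, W.card = 5
        have hl3' : l = 3 := by omega
        have he5 : W.card = 5 := by omega
        subst hl3'
        have hU5 : U.card = 5 := hU
        -- step (a) : x has at most 2 elements
        have hx2 : x.card ≤ 2 := by
          by_contra hx3
          have hx3' : x.card = 3 := by omega
          have hsub : W ⊆ x.image (fun t => insert t (U \ x)) := by
            intro w hw
            have h1 : (w ∩ x).card ≤ 1 := by have := hWx w hw; omega
            have h2 : (w ∩ x).card + (w \ x).card = 3 := by
              rw [card_inter_add_card_sdiff, hWl w hw]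
            have h3 : w \ x ⊆ U \ x := sdiff_subset_sdiff (hWU w hw) Subset.rfl
            have h4 : (U \ x).card = 2 := by rw [card_sdiff_of_subset hxU, hU5, hx3']
            have h5 := card_le_card h3
            have h6 : w \ x = U \ x := eq_of_subset_of_card_le h3 (by omega)
            have h7 : (w ∩ x).card = 1 := by omega
            obtain ⟨t, ht⟩ := card_eq_one.1 h7
            have htw : t ∈ w ∩ x := ht ▸ mem_singleton_self t
            refine mem_image.2 ⟨t, (mem_inter.1 htw).2, ?_⟩
            apply Finset.Subset.antisymm
            · intro q hq
              rcases mem_insert.1 hq with rfl | hq'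
              · exact (mem_inter.1 htw).1
              · rw [← h6] at hq'
                exact (mem_sdiff.1 hq').1
            · intro q hq
              by_cases hqx : q ∈ x
              · have : q ∈ w ∩ x := mem_inter.2 ⟨hq, hqx⟩
                rw [ht, mem_singleton] at this
                exact this ▸ mem_insert_self _ _
              · exact mem_insert_of_mem (h6 ▸ mem_sdiff.2 ⟨hq, hqx⟩)
          have hb1 := card_le_card hsub
          have hb2 : (x.image (fun t => insert t (U \ x))).card ≤ 3 := by
            calc _ ≤ x.card := card_image_le
              _ = 3 := hx3'
          omega
        -- step (b) : every valid 3-set outside W is adjacent to W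
        have hadjall : ∀ v : Finset (Fin n), v ⊆ U → v.card = 3 → v ∉ W →
            ∃ w ∈ W, AdjL 3 v w := by
          intro v hvU hvc hvW
          by_contra hno
          push_neg at hno
          have hsub : W ⊆ v.image (fun t => insert t (U \ v)) := by
            intro w hw
            have hvw : v ≠ w := fun h => hvW (h ▸ hw)
            have h1 : (v ∩ w).card ≠ 2 := by
              intro hc
              exact (hno w hw) ⟨hvc, hWl w hw, hc, hvw⟩
            have hle : (v ∩ w).card ≤ 2 := by
              have := inter_card_lt hvc (hWl w hw) hvw
              omega
            have h2 : (v ∩ w).card ≤ 1 := by omega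
            have h3 : (w ∩ v).card + (w \ v).card = 3 := by
              rw [card_inter_add_card_sdiff, hWl w hw]
            have h4 : w \ v ⊆ U \ v := sdiff_subset_sdiff (hWU w hw) Subset.rfl
            have h5 : (U \ v).card = 2 := by rw [card_sdiff_of_subset hvU, hU5, hvc]
            have h6 := card_le_card h4
            have h7 : (w ∩ v).card ≤ 1 := by rw [inter_comm]; exact h2
            have h8 : w \ v = U \ v := eq_of_subset_of_card_le h4 (by omega)
            have h9 : (w ∩ v).card = 1 := by omega
            obtain ⟨t, ht⟩ := card_eq_one.1 h9
            have htw : t ∈ w ∩ v := ht ▸ mem_singleton_self t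
            refine mem_image.2 ⟨t, (mem_inter.1 htw).2, ?_⟩
            apply Finset.Subset.antisymm
            · intro q hq
              rcases mem_insert.1 hq with rfl | hq'
              · exact (mem_inter.1 htw).1
              · rw [← h8] at hq'
                exact (mem_sdiff.1 hq').1
            · intro q hq
              by_cases hqv : q ∈ v
              · have : q ∈ w ∩ v := mem_inter.2 ⟨hq, hqv⟩
                rw [ht, mem_singleton] at this
                exact this ▸ mem_insert_self _ _
              · exact mem_insert_of_mem (h8 ▸ mem_sdiff.2 ⟨hq, hqv⟩)
          have hb1 := card_le_card hsub
          have hb2 : (v.image (fun t => insert t (U \ v))).card ≤ 3 := by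
            calc _ ≤ v.card := card_image_le
              _ = 3 := hvc
          omega
        -- step (c) : at most 3 bad 3-sets
        have hbad : ((U.powersetCard 3).filter (fun v => ¬ ((v ∩ x).card + 2 ≤ 3))).card ≤ 3 := by
          by_cases hx2e : x.card = 2
          · have hsub : (U.powersetCard 3).filter (fun v => ¬ ((v ∩ x).card + 2 ≤ 3)) ⊆
                (U \ x).image (fun t => insert t x) := by
              intro v hv
              obtain ⟨hvp, hvbad⟩ := mem_filter.1 hv
              obtain ⟨hvU, hvc⟩ := mem_powersetCard.1 hvp
              push_neg at hvbad
              have h1 : 2 ≤ (v ∩ x).card := by omega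
              have h2 : (v ∩ x).card ≤ 2 := by
                calc (v ∩ x).card ≤ x.card := card_le_card inter_subset_right
                  _ = 2 := hx2e
              have h3 : v ∩ x = x := eq_of_subset_of_card_le inter_subset_right (by omega)
              have hxv : x ⊆ v := by rw [← h3]; exact inter_subset_left
              have h4 : (v \ x).card = 1 := by rw [card_sdiff_of_subset hxv, hvc, hx2e]
              obtain ⟨t, ht⟩ := card_eq_one.1 h4
              have htv : t ∈ v \ x := ht ▸ mem_singleton_self t
              refine mem_image.2 ⟨t, mem_sdiff.2 ⟨hvU (mem_sdiff.1 htv).1, (mem_sdiff.1 htv).2⟩, ?_⟩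
              apply Finset.Subset.antisymm
              · intro q hq
                rcases mem_insert.1 hq with rfl | hq'
                · exact (mem_sdiff.1 htv).1
                · exact hxv hq'
              · intro q hq
                by_cases hqx : q ∈ x
                · exact mem_insert_of_mem hqx
                · have : q ∈ v \ x := mem_sdiff.2 ⟨hq, hqx⟩
                  rw [ht, mem_singleton] at this
                  exact this ▸ mem_insert_self _ _
            calc _ ≤ ((U \ x).image (fun t => insert t x)).card := card_le_card hsub
              _ ≤ (U \ x).card := card_image_le
              _ = 3 := by rw [card_sdiff_of_subset hxU, hU5, hx2e]
          · have hx1 : x.card ≤ 1 := by omega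
            have : (U.powersetCard 3).filter (fun v => ¬ ((v ∩ x).card + 2 ≤ 3)) = ∅ := by
              rw [filter_eq_empty_iff]
              intro v _
              rw [not_not]
              have : (v ∩ x).card ≤ 1 := by
                calc (v ∩ x).card ≤ x.card := card_le_card inter_subset_right
                  _ ≤ 1 := hx1
              omega
            rw [this]
            exact Nat.zero_le _
        have htot := card_filter_add_card_filter_not
          (s := U.powersetCard 3) (p := fun v => (v ∩ x).card + 2 ≤ 3)
        have hpows : (U.powersetCard 3).card = 10 := by
          rw [card_powersetCard, hU5]
          decide
        have hA : 7 ≤ ((U.powersetCard 3).filter (fun v => (v ∩ x).card + 2 ≤ 3)).card := by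
          omega
        -- step (d) : Nexc has at least 2 elements
        have hNsub2 : ((U.powersetCard 3).filter (fun v => (v ∩ x).card + 2 ≤ 3)) \ W ⊆
            NexcF U 3 x W := by
          intro v hv
          obtain ⟨hv1, hvW⟩ := mem_sdiff.1 hv
          obtain ⟨hvp, hvx⟩ := mem_filter.1 hv1
          obtain ⟨hvU, hvc⟩ := mem_powersetCard.1 hvp
          exact mem_NexcF.2 ⟨⟨hvU, hvc⟩, hvW, hvx, hadjall v hvU hvc hvW⟩
        have hN2 : 2 ≤ (NexcF U 3 x W).card := by
          have h1 := le_card_sdiff W ((U.powersetCard 3).filter (fun v => (v ∩ x).card + 2 ≤ 3))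
          have h2 := card_le_card hNsub2
          omega
        -- step (e) : shadow has at least 5 elements
        have hsh : 5 ≤ (shadowF W).card := by
          have h1 := dc_shadow U W hU5 (by omega) hWU hWl
          rw [he5] at h1
          omega
        omega

theorem lemmaB (M : ℕ) : ∀ (U : Finset (Fin n)) (l : ℕ) (x : Finset (Fin n))
    (W : Finset (Finset (Fin n))), U.card = M → 3 ≤ l → l + 2 ≤ M → x ⊆ U → x.card ≤ l →
    (∀ w ∈ W, w ⊆ U) → (∀ w ∈ W, w.card = l) → 2 ≤ W.card → ConnIn l W →
    (∀ w ∈ W, (w ∩ x).card + 2 ≤ l) →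
    (l-1) * (M - l + 1) ≤ (shadowF W).card + (NexcF U l x W).card := by
  induction M using Nat.strong_induction_on with
  | _ M IH =>
  intro U l x W hU hl3 hlM hxU hxl hWU hWl hW2 hconn hWx
  by_cases hbase : M = l + 2
  · subst hbase
    have h3 : l + 2 - l + 1 = 3 := by omega
    rw [h3]
    exact lemmaB_base U l x W hU hl3 hxU hxl hWU hWl hW2 hconn hWx
  have hM3 : l + 3 ≤ M := by omega
  obtain ⟨w₀, hw₀⟩ : W.Nonempty := card_pos.1 (by omega)
  -- generic fact for fresh elements
  have hfresh_mem : ∀ (e : Fin n) (wi : Finset (Fin n)) (j : Fin n), e ∈ U → e ∉ W.sup id →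
      wi ∈ W → j ∈ wi → ((insert e (wi.erase j)) ∩ x).card + 2 ≤ l →
      insert e (wi.erase j) ∈ NexcF U l x W := by
    intro e wi j heU hesup hwi hj hxc
    have hew : e ∉ wi := fun hh => hesup (Finset.le_sup (f := id) hwi hh)
    refine mem_NexcF.2 ⟨⟨?_, ?_⟩, ?_, hxc, wi, hwi, adjL_insert_erase (hWl wi hwi) hj hew⟩
    · exact insert_subset heU ((erase_subset _ _).trans (hWU wi hwi))
    · rw [card_insert_of_notMem (fun hh => hew (mem_of_mem_erase hh)),
        card_erase_of_mem hj, hWl wi hwi]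
      have : 1 ≤ l := by omega
      omega
    · intro hmem
      exact hesup (Finset.le_sup (f := id) hmem (mem_insert_self e _))
  have hdisj_e : ∀ (e : Fin n) (x' : Finset (Fin n)) (F : Finset (Finset (Fin n))),
      (∀ v ∈ F, e ∈ v) → Disjoint (NexcF (U.erase e) l x' W) F := by
    intro e x' F hF
    rw [disjoint_right]
    intro v hvF hvN
    have : v ⊆ U.erase e := (mem_NexcF.1 hvN).1.1
    exact (mem_erase.1 (this (hF v hvF))).1 rfl
  have hcombine : ∀ (e : Fin n) (x' : Finset (Fin n)) (F : Finset (Finset (Fin n))),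
      NexcF (U.erase e) l x' W ⊆ NexcF U l x W → F ⊆ NexcF U l x W → (∀ v ∈ F, e ∈ v) →
      l - 1 ≤ F.card →
      (l-1) * ((M-1) - l + 1) ≤ (shadowF W).card + (NexcF (U.erase e) l x' W).card →
      (l-1) * (M - l + 1) ≤ (shadowF W).card + (NexcF U l x W).card := by
    intro e x' F hsub hFsub hFe hFcard hIH'
    have hN : (NexcF (U.erase e) l x' W).card + F.card ≤ (NexcF U l x W).card := by
      rw [← card_union_of_disjoint (hdisj_e e x' F hFe)]
      exact card_le_card (union_subset hsub hFsub)
    have e1 : M - l + 1 = ((M-1) - l + 1) + 1 := by omega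
    rw [e1, Nat.mul_succ]
    omega
  by_cases hcase1 : ∃ e ∈ U, e ∉ x ∧ e ∉ W.sup id
  · obtain ⟨e, heU, hex, hesup⟩ := hcase1
    have hIH' := IH (M-1) (by omega) (U.erase e) l x W
      (by rw [card_erase_of_mem heU, hU]) hl3 (by omega)
      (subset_erase.2 ⟨hxU, hex⟩) hxl
      (fun w hw => subset_erase.2 ⟨hWU w hw, fun hh => hesup (Finset.le_sup (f := id) hw hh)⟩)
      hWl hW2 hconn hWx
    refine hcombine e x (w₀.image (fun j => insert e (w₀.erase j))) ?_ ?_ ?_ ?_ hIH'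
    · intro v hv
      rw [mem_NexcF] at hv ⊢
      exact ⟨⟨hv.1.1.trans (erase_subset _ _), hv.1.2⟩, hv.2⟩
    · intro v hv
      obtain ⟨j, hj, rfl⟩ := mem_image.1 hv
      refine hfresh_mem e w₀ j heU hesup hw₀ hj ?_
      have hsub : (insert e (w₀.erase j)) ∩ x ⊆ w₀ ∩ x := by
        intro z hz
        obtain ⟨hz1, hz2⟩ := mem_inter.1 hz
        rcases mem_insert.1 hz1 with rfl | hz1'
        · exact absurd hz2 hex
        · exact mem_inter.2 ⟨mem_of_mem_erase hz1', hz2⟩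
      exact le_trans (Nat.add_le_add_right (card_le_card hsub) 2) (hWx w₀ hw₀)
    · intro v hv
      obtain ⟨j, hj, rfl⟩ := mem_image.1 hv
      exact mem_insert_self e _
    · have hew : e ∉ w₀ := fun hh => hesup (Finset.le_sup (f := id) hw₀ hh)
      have : (w₀.image (fun j => insert e (w₀.erase j))).card = l := by
        rw [card_image_of_injOn, hWl w₀ hw₀]
        intro j hj j' _ h
        exact insert_erase_inj hew (Finset.mem_coe.1 hj) h
      omega
  · by_cases hcase2 : ∃ e ∈ x, e ∉ W.sup id
    · obtain ⟨e, hex, hesup⟩ := hcase2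
      have heU : e ∈ U := hxU hex
      have hIH' := IH (M-1) (by omega) (U.erase e) l (x.erase e) W
        (by rw [card_erase_of_mem heU, hU]) hl3 (by omega)
        (erase_subset_erase e hxU) (le_trans (card_le_card (erase_subset _ _)) hxl)
        (fun w hw => subset_erase.2 ⟨hWU w hw, fun hh => hesup (Finset.le_sup (f := id) hw hh)⟩)
        hWl hW2 hconn
        (fun w hw => le_trans (Nat.add_le_add_right
          (card_le_card (inter_subset_inter Subset.rfl (erase_subset _ _))) 2) (hWx w hw))
      have hNsub : NexcF (U.erase e) l (x.erase e) W ⊆ NexcF U l x W := by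
        intro v hv
        rw [mem_NexcF] at hv ⊢
        obtain ⟨⟨hvU, hvl⟩, hvW, hvx, hadj⟩ := hv
        have hev : e ∉ v := fun hh => (mem_erase.1 (hvU hh)).1 rfl
        have : v ∩ x = v ∩ (x.erase e) := by
          ext z
          simp only [mem_inter, mem_erase]
          constructor
          · rintro ⟨h1, h2⟩
            exact ⟨h1, fun hh => hev (hh ▸ h1), h2⟩
          · rintro ⟨h1, _, h2⟩
            exact ⟨h1, h2⟩
        rw [this]
        exact ⟨⟨hvU.trans (erase_subset _ _), hvl⟩, hvW, hvx, hadj⟩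
      by_cases hsubA : ∃ w₁ ∈ W, (w₁ ∩ x).card + 3 ≤ l
      · obtain ⟨w₁, hw₁, hw₁x⟩ := hsubA
        refine hcombine e (x.erase e) (w₁.image (fun j => insert e (w₁.erase j))) hNsub ?_ ?_ ?_ hIH'
        · intro v hv
          obtain ⟨j, hj, rfl⟩ := mem_image.1 hv
          refine hfresh_mem e w₁ j heU hesup hw₁ hj ?_
          have hsub : (insert e (w₁.erase j)) ∩ x ⊆ insert e (w₁ ∩ x) := by
            intro z hz
            obtain ⟨hz1, hz2⟩ := mem_inter.1 hz
            rcases mem_insert.1 hz1 with rfl | hz1'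
            · exact mem_insert_self _ _
            · exact mem_insert_of_mem (mem_inter.2 ⟨mem_of_mem_erase hz1', hz2⟩)
          calc ((insert e (w₁.erase j)) ∩ x).card + 2 ≤ (insert e (w₁ ∩ x)).card + 2 :=
                Nat.add_le_add_right (card_le_card hsub) 2
            _ ≤ ((w₁ ∩ x).card + 1) + 2 := Nat.add_le_add_right (card_insert_le _ _) 2
            _ ≤ l := by omega
        · intro v hv
          obtain ⟨j, hj, rfl⟩ := mem_image.1 hv
          exact mem_insert_self e _
        · have hew : e ∉ w₁ := fun hh => hesup (Finset.le_sup (f := id) hw₁ hh)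
          have : (w₁.image (fun j => insert e (w₁.erase j))).card = l := by
            rw [card_image_of_injOn, hWl w₁ hw₁]
            intro j hj j' _ h
            exact insert_erase_inj hew (Finset.mem_coe.1 hj) h
          omega
      · push_neg at hsubA
        have hall : ∀ w ∈ W, (w ∩ x).card + 2 = l := by
          intro w hw
          have := hsubA w hw
          have := hWx w hw
          omega
        by_cases hsame : ∀ w ∈ W, w \ x = w₀ \ x
        · exfalso
          have hw₀diff : (w₀ \ x).card = 2 := by
            have h1 : (w₀ ∩ x).card + (w₀ \ x).card = l := by
              rw [card_inter_add_card_sdiff, hWl w₀ hw₀]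
            have h2 := hall w₀ hw₀
            omega
          have hUsub : U ⊆ x ∪ (w₀ \ x) := by
            intro z hz
            by_cases hzx : z ∈ x
            · exact mem_union_left _ hzx
            · by_cases hzs : z ∈ W.sup id
              · obtain ⟨w, hw, hzw⟩ := Finset.mem_sup.1 hzs
                have : z ∈ w \ x := mem_sdiff.2 ⟨hzw, hzx⟩
                exact mem_union_right _ (hsame w hw ▸ this)
              · exact absurd ⟨z, hz, hzx, hzs⟩ hcase1
          have := card_le_card hUsub
          have := card_union_le x (w₀ \ x)
          omega
        · push_neg at hsame
          obtain ⟨w₁, hw₁, hne⟩ := hsame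
          -- two fresh families from w₁ and w₀
          have hfreshmem2 : ∀ (wi : Finset (Fin n)), wi ∈ W →
              ∀ v ∈ (wi ∩ x).image (fun j => insert e (wi.erase j)), v ∈ NexcF U l x W := by
            intro wi hwi v hv
            obtain ⟨j, hj, rfl⟩ := mem_image.1 hv
            obtain ⟨hjw, hjx⟩ := mem_inter.1 hj
            refine hfresh_mem e wi j heU hesup hwi hjw ?_
            have hsub : (insert e (wi.erase j)) ∩ x ⊆ insert e ((wi ∩ x).erase j) := by
              intro z hz
              obtain ⟨hz1, hz2⟩ := mem_inter.1 hz
              rcases mem_insert.1 hz1 with rfl | hz1'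
              · exact mem_insert_self _ _
              · exact mem_insert_of_mem (mem_erase.2 ⟨(mem_erase.1 hz1').1,
                  mem_inter.2 ⟨mem_of_mem_erase hz1', hz2⟩⟩)
            have h2 : ((wi ∩ x).erase j).card = (wi ∩ x).card - 1 := card_erase_of_mem hj
            have h3 := hall wi hwi
            calc ((insert e (wi.erase j)) ∩ x).card + 2
                ≤ (insert e ((wi ∩ x).erase j)).card + 2 :=
                  Nat.add_le_add_right (card_le_card hsub) 2
              _ ≤ (((wi ∩ x).erase j).card + 1) + 2 :=
                  Nat.add_le_add_right (card_insert_le _ _) 2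
              _ ≤ l := by omega
          have hfreshdiff : ∀ (wi : Finset (Fin n)), wi ∈ W →
              ∀ v ∈ (wi ∩ x).image (fun j => insert e (wi.erase j)), v \ x = wi \ x := by
            intro wi hwi v hv
            obtain ⟨j, hj, rfl⟩ := mem_image.1 hv
            exact sdiff_insert_erase hex (mem_inter.1 hj).2
          have hfreshcard : ∀ (wi : Finset (Fin n)), wi ∈ W →
              ((wi ∩ x).image (fun j => insert e (wi.erase j))).card = l - 2 := by
            intro wi hwi
            have hew : e ∉ wi := fun hh => hesup (Finset.le_sup (f := id) hwi hh)
            rw [card_image_of_injOn]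
            · have := hall wi hwi; omega
            · intro j hj j' _ h
              exact insert_erase_inj hew ((mem_inter.1 (Finset.mem_coe.1 hj)).1) h
          set F := ((w₀ ∩ x).image (fun j => insert e (w₀.erase j))) ∪
            ((w₁ ∩ x).image (fun j => insert e (w₁.erase j))) with hF
          refine hcombine e (x.erase e) F hNsub ?_ ?_ ?_ hIH'
          · intro v hv
            rcases mem_union.1 hv with h | h
            · exact hfreshmem2 w₀ hw₀ v h
            · exact hfreshmem2 w₁ hw₁ v h
          · intro v hv
            rcases mem_union.1 hv with h | h <;>
            · obtain ⟨j, _, rfl⟩ := mem_image.1 h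
              exact mem_insert_self e _
          · have hdisjF : Disjoint ((w₀ ∩ x).image (fun j => insert e (w₀.erase j)))
                ((w₁ ∩ x).image (fun j => insert e (w₁.erase j))) := by
              rw [disjoint_left]
              intro v hv0 hv1
              exact hne ((hfreshdiff w₁ hw₁ v hv1).symm.trans (hfreshdiff w₀ hw₀ v hv0))
            rw [hF, card_union_of_disjoint hdisjF, hfreshcard w₀ hw₀, hfreshcard w₁ hw₁]
            omega
    · -- case 3 : sup W = U, use growth
      push_neg at hcase1 hcase2
      have hsupU : W.sup id = U := by
        apply subset_antisymm
        · exact Finset.sup_le (fun w hw => hWU w hw)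
        · intro z hz
          by_cases hzx : z ∈ x
          · exact hcase2 z hzx
          · by_contra hzs
            exact hzs (hcase1 z hz hzx)
      have hgrowth := growth l (by omega) W w₀ hw₀ hWl hconn
      rw [hsupU, hU] at hgrowth
      have e1 : M - l + 1 = (M - l) + 1 := rfl
      calc (l-1) * (M - l + 1) = (l-1) * (M-l) + (l-1) := by rw [Nat.mul_succ]
        _ ≤ l + (l-1) * (M-l) := by omega
        _ ≤ (shadowF W).card := hgrowth
        _ ≤ _ := Nat.le_add_right _ _

lemma arith_final {k m : ℕ} (hk : 3 ≤ k) (hm : 3 ≤ m) :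
    (2*k - 1) * m - k ≤ (k-1) * m + k * (m-1) := by
  rcases Nat.exists_eq_add_of_le hk with ⟨k', rfl⟩
  rcases Nat.exists_eq_add_of_le hm with ⟨m', rfl⟩
  have h1 : 2 * (3+k') - 1 = 5 + 2*k' := by omega
  have h2 : 3 + k' - 1 = 2 + k' := by omega
  have h3 : 3 + m' - 1 = 2 + m' := by omega
  rw [h1, h2, h3]
  have h4 : (5 + 2*k') * (3+m') ≤ ((2 + k') * (3 + m') + (3 + k') * (2 + m')) + (3+k') := by
    ring_nf
    omega
  omega

end JS

open SimpleGraph Finset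

/-- If `S` is a minimum super vertex-cut of `J(n,k)` (`k ≥ 3`, `n ≥ k+3`) and
some vertex `x` of `G - S` not containing `r` has all its neighbours in `G - S`
containing `r`, then `|S| ≥ (2k-1)(n-k) - k`. -/
theorem card_ge_of_all_neighbors_contain (n k : ℕ) (hk : 3 ≤ k) (hn : k + 3 ≤ n)
    (S : Finset (JV n k)) (hS : IsMinSuperVertexCut (johnsonGraph n k) S)
    (r : Fin n) (x : JV n k) (hx : x ∉ S) (hrx : r ∉ x.val)
    (hnb : ∀ y : JV n k, y ∉ S → (johnsonGraph n k).Adj x y → r ∈ y.val) :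
    (2 * k - 1) * (n - k) - k ≤ S.card := by
  classical
  set G := johnsonGraph n k with hG
  set Tv : Finset (Finset (Fin n)) := S.image (fun v => v.val) with hTv
  have hmemTv : ∀ v : JV n k, v.val ∈ Tv ↔ v ∈ S := by
    intro v
    constructor
    · intro h
      obtain ⟨u, huS, hu⟩ := Finset.mem_image.1 h
      exact (Subtype.ext hu : u = v) ▸ huS
    · intro h
      exact Finset.mem_image_of_mem _ h
  have hTvcard : Tv.card = S.card := Finset.card_image_of_injective S Subtype.val_injective
  -- membership in the complement set
  have hcompl : ∀ v : JV n k, v ∉ S → v ∈ ((↑S : Set (JV n k))ᶜ) := by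
    intro v hv
    simp only [Set.mem_compl_iff, Finset.mem_coe]
    exact hv
  -- abstract reach implies graph reachability
  have toGraph : ∀ {s t : Finset (Fin n)}, JS.Reach Finset.univ Tv k s t →
      s ∉ Tv → ∀ (hs : s.card = k) (ht : t.card = k) (hsS : (⟨s, hs⟩ : JV n k) ∈ ((↑S : Set (JV n k))ᶜ)) (htS : (⟨t, ht⟩ : JV n k) ∈ ((↑S : Set (JV n k))ᶜ)),
      (G.induce ((↑S : Set (JV n k))ᶜ)).Reachable ⟨⟨s, hs⟩, hsS⟩ ⟨⟨t, ht⟩, htS⟩ := by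
    intro s t h
    induction h with
    | refl =>
      intro _ hs ht hsS htS
      have : (⟨⟨s, hs⟩, hsS⟩ : ↥((↑S : Set (JV n k))ᶜ)) = ⟨⟨s, ht⟩, htS⟩ := by
        apply Subtype.ext; apply Subtype.ext; rfl
      rw [this]
    | @tail b t' hab hstep ih =>
      intro hsT hs ht' hsS htS
      have hbc : b.card = k := hstep.1.1
      have hbT : b ∉ Tv := hstep.2.2.2.1
      have hbS : (⟨b, hbc⟩ : JV n k) ∈ ((↑S : Set (JV n k))ᶜ) := by
        simp only [Set.mem_compl_iff, Finset.mem_coe]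
        intro hmem
        exact hbT ((hmemTv ⟨b, hbc⟩).2 hmem)
      refine (ih hsT hs hbc hsS hbS).trans (SimpleGraph.Adj.reachable ?_)
      show G.Adj ⟨b, hbc⟩ ⟨t', ht'⟩
      exact ⟨fun h => hstep.1.2.2.2 (congrArg Subtype.val h), hstep.1.2.2.1⟩
  -- graph reachability implies abstract reach
  have fromGraph : ∀ (a b : ↥((↑S : Set (JV n k))ᶜ)),
      (G.induce ((↑S : Set (JV n k))ᶜ)).Reachable a b →
      JS.Reach Finset.univ Tv k a.val.val b.val.val := by
    intro a b hab
    obtain ⟨p⟩ := hab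
    induction p with
    | nil => exact Relation.ReflTransGen.refl
    | @cons u v w huv _ ih =>
      refine Relation.ReflTransGen.head ?_ ih
      have hGuv : G.Adj u.val v.val := huv
      have huT : u.val.val ∉ Tv := fun h => u.prop ((hmemTv u.val).1 h)
      have hvT : v.val.val ∉ Tv := fun h => v.prop ((hmemTv v.val).1 h)
      exact ⟨⟨u.val.prop, v.val.prop, hGuv.2, fun h => hGuv.1 (Subtype.ext h)⟩,
        Finset.subset_univ _, Finset.subset_univ _, huT, hvT⟩
  -- all swap-neighbours of x avoiding r are deleted
  have hΦsub : (x.val ×ˢ ((Finset.univ \ x.val).erase r)).image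
      (fun p => insert p.2 (x.val.erase p.1)) ⊆ Tv.filter (fun t => r ∉ t) := by
    intro v hv
    obtain ⟨⟨i, c⟩, hm, rfl⟩ := Finset.mem_image.1 hv
    simp only [Finset.mem_product, Finset.mem_erase, Finset.mem_sdiff] at hm
    obtain ⟨hi, hcr, _, hcx⟩ := hm
    have hcard : (insert c (x.val.erase i)).card = k := by rw [JS.card_swap hi hcx, x.prop]
    have hrv : r ∉ insert c (x.val.erase i) := by
      simp only [Finset.mem_insert, Finset.mem_erase]
      rintro (rfl | ⟨_, h2⟩)
      · exact hcr rfl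
      · exact hrx h2
    refine Finset.mem_filter.2 ⟨?_, hrv⟩
    by_contra hvT
    have hyS : (⟨insert c (x.val.erase i), hcard⟩ : JV n k) ∉ S :=
      fun h => hvT ((hmemTv _).2 h)
    have hadj : G.Adj x ⟨insert c (x.val.erase i), hcard⟩ := by
      refine ⟨fun h => JS.swap_ne hi hcx (congrArg Subtype.val h).symm, ?_⟩
      rw [Finset.inter_comm]
      show ((insert c (x.val.erase i)) ∩ x.val).card = k - 1
      rw [JS.inter_swap hcx, Finset.card_erase_of_mem hi, x.prop]
    exact hrv (hnb _ hyS hadj)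
  have hΦcard : ((x.val ×ˢ ((Finset.univ \ x.val).erase r)).image
      (fun p => insert p.2 (x.val.erase p.1))).card = k * (n - k - 1) := by
    rw [JS.swap_image_card, x.prop]
    · congr 1
      rw [Finset.card_erase_of_mem, Finset.card_sdiff_of_subset (Finset.subset_univ _)]
      · rw [Finset.card_univ, Fintype.card_fin, x.prop]
      · exact Finset.mem_sdiff.2 ⟨Finset.mem_univ _, hrx⟩
    · intro a ha
      exact (Finset.mem_sdiff.1 (Finset.mem_of_mem_erase ha)).2
  have hΦbound : k * (n - k - 1) ≤ (Tv.filter (fun t => r ∉ t)).card := by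
    rw [← hΦcard]
    exact Finset.card_le_card hΦsub
  -- a neighbour y of x outside S, containing r
  obtain ⟨yv, hyadj⟩ := hS.1.2 ⟨x, hcompl x hx⟩
  have hyS : yv.val ∉ S := yv.prop
  have hGxy : G.Adj x yv.val := hyadj
  have hry : r ∈ yv.val.val := hnb yv.val hyS hGxy
  have hxT : x.val ∉ Tv := fun h => hx ((hmemTv x).1 h)
  have hyT : yv.val.val ∉ Tv := fun h => hyS ((hmemTv yv.val).1 h)
  have hxyabs : JS.Reach Finset.univ Tv k x.val yv.val.val :=
    Relation.ReflTransGen.single ⟨⟨x.prop, yv.val.prop, hGxy.2,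
      fun h => hGxy.1 (Subtype.ext h)⟩,
      Finset.subset_univ _, Finset.subset_univ _, hxT, hyT⟩
  -- find an unreachable vertex w
  obtain ⟨w, hxw⟩ : ∃ w : ↥((↑S : Set (JV n k))ᶜ),
      ¬ (G.induce ((↑S : Set (JV n k))ᶜ)).Reachable ⟨x, hcompl x hx⟩ w := by
    have hcut := hS.1.1
    rw [IsVertexCut] at hcut
    have : ∃ u v : ↥((↑S : Set (JV n k))ᶜ),
        ¬ (G.induce ((↑S : Set (JV n k))ᶜ)).Reachable u v := by
      by_contra h
      push_neg at h
      exact hcut (fun u v => h u v)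
    obtain ⟨u, v, hnuv⟩ := this
    by_cases h1 : (G.induce ((↑S : Set (JV n k))ᶜ)).Reachable ⟨x, hcompl x hx⟩ u
    · by_cases h2 : (G.induce ((↑S : Set (JV n k))ᶜ)).Reachable ⟨x, hcompl x hx⟩ v
      · exact absurd (h1.symm.trans h2) hnuv
      · exact ⟨v, h2⟩
    · exact ⟨u, h1⟩
  have hwT : w.val.val ∉ Tv := fun h => w.prop ((hmemTv w.val).1 h)
  have hnwabs : ¬ JS.Reach Finset.univ Tv k x.val w.val.val := by
    intro h
    apply hxw
    have hres := toGraph h hxT x.prop w.val.prop (hcompl x hx) (by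
      simp only [Set.mem_compl_iff, Finset.mem_coe]
      intro hmem
      exact hwT ((hmemTv w.val).2 hmem))
    convert hres using 1
  have hwcompl : (⟨w.val.val, w.val.prop⟩ : JV n k) ∈ ((↑S : Set (JV n k))ᶜ) := by
    simp only [Set.mem_compl_iff, Finset.mem_coe]
    intro hmem
    exact hwT ((hmemTv w.val).2 hmem)
  -- helper : erased sets outside the image filter
  have hmem' : ∀ (q : Finset (Fin n)), r ∈ q → q ∉ Tv →
      q.erase r ∉ (Tv.filter (fun t => r ∈ t)).image (fun t => t.erase r) := by
    intro q hrq hqT hmemq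
    obtain ⟨t, htA, hte⟩ := Finset.mem_image.1 hmemq
    have ht : t = q := by
      have h1 : r ∈ t := (Finset.mem_filter.1 htA).2
      have h2 := congrArg (insert r) hte
      rwa [Finset.insert_erase h1, Finset.insert_erase hrq] at h2
    exact hqT (ht ▸ (Finset.mem_filter.1 htA).1)
  have hfinal : k * (n - k - 1) + (k-1) * (n - k) ≤ Tv.card → (2 * k - 1) * (n - k) - k ≤ S.card := by
    intro h
    rw [hTvcard] at h
    have hm : 3 ≤ n - k := by omega
    have := JS.arith_final hk hm
    have e1 : n - k - 1 = (n - k) - 1 := rfl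
    omega
  by_cases hcaseI : ∃ z : JV n k, z ∉ S ∧ r ∈ z.val ∧
      ¬ JS.Reach Finset.univ Tv k yv.val.val z.val
  · -- Case I : apply the connectivity lemma inside β_r
    obtain ⟨z, hzS, hrz, hnyz⟩ := hcaseI
    have hzT : z.val ∉ Tv := fun h => hzS ((hmemTv z).1 h)
    have hklift : 2 ≤ k := by omega
    have hkey : ¬ JS.Reach (Finset.univ.erase r)
        ((Tv.filter (fun t => r ∈ t)).image (fun t => t.erase r)) (k-1)
        (yv.val.val.erase r) (z.val.erase r) := by
      intro hreach
      have hlift := JS.reach_lift_ins (T := Tv) hklift (Finset.mem_univ r) hreach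
      rw [Finset.insert_erase hry, Finset.insert_erase hrz] at hlift
      exact hnyz hlift
    have hA := JS.lemmaA (n-1) (Finset.univ.erase r) (k-1)
      ((Tv.filter (fun t => r ∈ t)).image (fun t => t.erase r))
      (yv.val.val.erase r) (z.val.erase r)
      (by rw [Finset.card_erase_of_mem (Finset.mem_univ r), Finset.card_univ, Fintype.card_fin])
      (Finset.erase_subset_erase r (Finset.subset_univ _))
      (Finset.erase_subset_erase r (Finset.subset_univ _))
      (by rw [Finset.card_erase_of_mem hry, yv.val.prop])
      (by rw [Finset.card_erase_of_mem hrz, z.prop])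
      (hmem' yv.val.val hry hyT) (hmem' z.val hrz hzT) hkey
    have hT'le : ((Tv.filter (fun t => r ∈ t)).image (fun t => t.erase r)).card ≤
        (Tv.filter (fun t => r ∈ t)).card := Finset.card_image_le
    have hsplit := Finset.card_filter_add_card_filter_not (s := Tv) (p := fun t => r ∈ t)
    apply hfinal
    have harr : (n-1) - (k-1) = n - k := by omega
    rw [harr] at hA
    omega
  · push_neg at hcaseI
    -- Case II : the reach-class of w avoids β_r; apply lemmaB
    set Wf : Finset (Finset (Fin n)) := ((Finset.univ : Finset (JV n k)).filter
      (fun z => z ∉ S ∧ JS.Reach Finset.univ Tv k w.val.val z.val)).image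
      (fun z => z.val) with hWfdef
    have hmemWf : ∀ v : Finset (Fin n), v ∈ Wf ↔ ∃ z : JV n k, z ∉ S ∧
        JS.Reach Finset.univ Tv k w.val.val z.val ∧ z.val = v := by
      intro v
      rw [hWfdef]
      constructor
      · intro h
        obtain ⟨z, hz, rfl⟩ := Finset.mem_image.1 h
        obtain ⟨_, hz1, hz2⟩ := Finset.mem_filter.1 hz
        exact ⟨z, hz1, hz2, rfl⟩
      · rintro ⟨z, hz1, hz2, rfl⟩
        exact Finset.mem_image_of_mem _ (Finset.mem_filter.2 ⟨Finset.mem_univ _, hz1, hz2⟩)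
    have hWfT : ∀ v ∈ Wf, v ∉ Tv := by
      intro v hv
      obtain ⟨z, hz1, _, rfl⟩ := (hmemWf v).1 hv
      exact fun h => hz1 ((hmemTv z).1 h)
    have hWfl : ∀ v ∈ Wf, v.card = k := by
      intro v hv
      obtain ⟨z, _, _, rfl⟩ := (hmemWf v).1 hv
      exact z.prop
    have hWfr : ∀ v ∈ Wf, r ∉ v := by
      intro v hv hrv
      obtain ⟨z, hz1, hz2, rfl⟩ := (hmemWf v).1 hv
      have h1 : JS.Reach Finset.univ Tv k yv.val.val z.val := hcaseI z hz1 hrv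
      exact hnwabs ((hxyabs.trans' h1).trans' hz2.symm')
    have hWfU : ∀ v ∈ Wf, v ⊆ Finset.univ.erase r := by
      intro v hv
      exact Finset.subset_erase.2 ⟨Finset.subset_univ _, hWfr v hv⟩
    have hclosure : ∀ v v', v ∈ Wf → JS.Step Finset.univ Tv k v v' → v' ∈ Wf := by
      intro v v' hv hstep
      obtain ⟨z, hzS, hzR, rfl⟩ := (hmemWf v).1 hv
      have hc : v'.card = k := hstep.1.2.1
      refine (hmemWf v').2 ⟨⟨v', hc⟩, ?_, hzR.tail hstep, rfl⟩
      intro hmem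
      exact hstep.2.2.2.2 ((hmemTv _).2 hmem)
    have hw0Wf : w.val.val ∈ Wf :=
      (hmemWf _).2 ⟨w.val, fun h => w.prop h, Relation.ReflTransGen.refl, rfl⟩
    have hW2 : 2 ≤ Wf.card := by
      obtain ⟨w2, hw2adj⟩ := hS.1.2 w
      have hGw : G.Adj w.val w2.val := hw2adj
      have hw2T : w2.val.val ∉ Tv := fun h => w2.prop ((hmemTv w2.val).1 h)
      have hstep : JS.Step Finset.univ Tv k w.val.val w2.val.val :=
        ⟨⟨w.val.prop, w2.val.prop, hGw.2, fun h => hGw.1 (Subtype.ext h)⟩,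
          Finset.subset_univ _, Finset.subset_univ _, hwT, hw2T⟩
      have hw2Wf : w2.val.val ∈ Wf := hclosure _ _ hw0Wf hstep
      have hne : w.val.val ≠ w2.val.val := fun h => hGw.1 (Subtype.ext h)
      exact Finset.one_lt_card.2 ⟨_, hw0Wf, _, hw2Wf, hne⟩
    have hchain : ∀ s t, JS.Reach Finset.univ Tv k s t → s ∈ Wf →
        Relation.ReflTransGen (fun a b => JS.AdjL k a b ∧ a ∈ Wf ∧ b ∈ Wf) s t ∧ t ∈ Wf := by
      intro s t h hs
      induction h with
      | refl => exact ⟨Relation.ReflTransGen.refl, hs⟩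
      | tail hab hstep ih =>
        obtain ⟨hch, hbW⟩ := ih
        have hcW := hclosure _ _ hbW hstep
        exact ⟨hch.tail ⟨hstep.1, hbW, hcW⟩, hcW⟩
    have hconn : JS.ConnIn k Wf := by
      intro v hv v' hv'
      obtain ⟨z, hz1, hz2, rfl⟩ := (hmemWf v).1 hv
      obtain ⟨z', hz1', hz2', rfl⟩ := (hmemWf v').1 hv'
      have h1 := (hchain _ _ hz2 hw0Wf).1
      have h2 := (hchain _ _ hz2' hw0Wf).1
      have hsym : Symmetric (fun a b => JS.AdjL k a b ∧ a ∈ Wf ∧ b ∈ Wf) :=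
        fun a b h => ⟨h.1.symm', h.2.2, h.2.1⟩
      exact (haveI : Std.Symm (fun a b => JS.AdjL k a b ∧ a ∈ Wf ∧ b ∈ Wf) := ⟨fun _ _ hh => hsym hh⟩
        Std.Symm.symm _ _ h1).trans h2
    have hWx : ∀ v ∈ Wf, (v ∩ x.val).card + 2 ≤ k := by
      intro v hv
      obtain ⟨z, hz1, hz2, rfl⟩ := (hmemWf v).1 hv
      have hzT : z.val ∉ Tv := fun h => hz1 ((hmemTv z).1 h)
      have hvx : z.val ≠ x.val := by
        intro h
        exact hnwabs ((h ▸ hz2 : JS.Reach Finset.univ Tv k w.val.val x.val)).symm'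
      have hnadj : (z.val ∩ x.val).card ≠ k - 1 := by
        intro hc
        have hstep : JS.Step Finset.univ Tv k z.val x.val :=
          ⟨⟨z.prop, x.prop, hc, hvx⟩, Finset.subset_univ _, Finset.subset_univ _, hzT, hxT⟩
        exact hnwabs (JS.Reach.symm' (hz2.tail hstep))
      have hle : (z.val ∩ x.val).card ≤ k := by
        calc (z.val ∩ x.val).card ≤ z.val.card := Finset.card_le_card Finset.inter_subset_left
          _ = k := z.prop
      have hnek : (z.val ∩ x.val).card ≠ k := by
        intro hc
        apply hvx
        have h1 : z.val ∩ x.val = z.val := Finset.eq_of_subset_of_card_le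
          Finset.inter_subset_left (le_of_eq (by rw [hc, z.prop]))
        have h2 : z.val ⊆ x.val := by
          rw [← h1]
          exact Finset.inter_subset_right
        exact Finset.eq_of_subset_of_card_le h2 (by rw [x.prop, z.prop])
      omega
    have hB := JS.lemmaB (n-1) (Finset.univ.erase r) k x.val Wf
      (by rw [Finset.card_erase_of_mem (Finset.mem_univ r), Finset.card_univ, Fintype.card_fin])
      hk (by omega)
      (Finset.subset_erase.2 ⟨Finset.subset_univ _, hrx⟩) (le_of_eq x.prop)
      hWfU hWfl hW2 hconn hWx
    have harr : (n-1) - k + 1 = n - k := by omega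
    rw [harr] at hB
    -- map the shadow into Tv ∩ β_r
    have hShsub : (JS.shadowF Wf).image (insert r) ⊆ Tv.filter (fun t => r ∈ t) := by
      intro q hq
      obtain ⟨v, hvsh, rfl⟩ := Finset.mem_image.1 hq
      obtain ⟨ws, hws, j, hjws, rfl⟩ := JS.mem_shadowF.1 hvsh
      have hrws : r ∉ ws := hWfr ws hws
      have hrv : r ∉ ws.erase j := fun h => hrws (Finset.mem_of_mem_erase h)
      have hk1 : 1 ≤ k := by omega
      have hcard : (insert r (ws.erase j)).card = k := by
        rw [Finset.card_insert_of_notMem hrv, Finset.card_erase_of_mem hjws, hWfl ws hws]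
        omega
      refine Finset.mem_filter.2 ⟨?_, Finset.mem_insert_self r _⟩
      by_contra hqT
      have hib : ws ∩ insert r (ws.erase j) = ws.erase j := by
        ext zz
        simp only [Finset.mem_inter, Finset.mem_insert, Finset.mem_erase]
        constructor
        · rintro ⟨h1, (rfl | h2)⟩
          · exact absurd h1 hrws
          · exact h2
        · rintro ⟨h1, h2⟩
          exact ⟨h2, Or.inr ⟨h1, h2⟩⟩
      have hstep : JS.Step Finset.univ Tv k ws (insert r (ws.erase j)) := by
        refine ⟨⟨hWfl ws hws, hcard, ?_, ?_⟩, Finset.subset_univ _, Finset.subset_univ _,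
          hWfT ws hws, hqT⟩
        · rw [hib, Finset.card_erase_of_mem hjws, hWfl ws hws]
        · intro h
          exact hrws (h ▸ Finset.mem_insert_self r _)
      have hmem := hclosure _ _ hws hstep
      exact hrws (by simpa using hWfr _ hmem (Finset.mem_insert_self r _) : False).elim
    have hShcard : ((JS.shadowF Wf).image (insert r)).card = (JS.shadowF Wf).card := by
      rw [Finset.card_image_of_injOn]
      intro v hv v' hv' h
      have h1 : r ∉ v := by
        intro hrv
        obtain ⟨ws, hws, j, _, rfl⟩ := JS.mem_shadowF.1 (Finset.mem_coe.1 hv)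
        exact hWfr ws hws (Finset.mem_of_mem_erase hrv)
      have h2 : r ∉ v' := by
        intro hrv
        obtain ⟨ws, hws, j, _, rfl⟩ := JS.mem_shadowF.1 (Finset.mem_coe.1 hv')
        exact hWfr ws hws (Finset.mem_of_mem_erase hrv)
      have := congrArg (fun t => Finset.erase t r) h
      simpa [Finset.erase_insert h1, Finset.erase_insert h2] using this
    -- map Nexc into Tv avoiding r
    have hNsub : JS.NexcF (Finset.univ.erase r) k x.val Wf ⊆ Tv.filter (fun t => r ∉ t) := by
      intro v hv
      obtain ⟨⟨hvU, hvc⟩, hvW, hvx, ws, hws, hadj⟩ := JS.mem_NexcF.1 hv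
      have hrv : r ∉ v := fun h => (Finset.mem_erase.1 (hvU h)).1 rfl
      refine Finset.mem_filter.2 ⟨?_, hrv⟩
      by_contra hvT
      have hstep : JS.Step Finset.univ Tv k ws v :=
        ⟨hadj.symm', Finset.subset_univ _, Finset.subset_univ _, hWfT ws hws, hvT⟩
      exact hvW (hclosure _ _ hws hstep)
    -- Φ and Nexc are disjoint
    have hdisjΦN : Disjoint ((x.val ×ˢ ((Finset.univ \ x.val).erase r)).image
        (fun p => insert p.2 (x.val.erase p.1))) (JS.NexcF (Finset.univ.erase r) k x.val Wf) := by
      rw [Finset.disjoint_left]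
      intro φ hφ hφN
      obtain ⟨⟨i, c⟩, hm, rfl⟩ := Finset.mem_image.1 hφ
      simp only [Finset.mem_product, Finset.mem_erase, Finset.mem_sdiff] at hm
      obtain ⟨hi, hcr, _, hcx⟩ := hm
      have h1 : (insert c (x.val.erase i)) ∩ x.val = x.val.erase i := JS.inter_swap hcx
      have h2 := (JS.mem_NexcF.1 hφN).2.2.1
      rw [h1, Finset.card_erase_of_mem hi, x.prop] at h2
      omega
    -- final counting
    apply hfinal
    have hsplit := Finset.card_filter_add_card_filter_not (s := Tv) (p := fun t => r ∈ t)
    have hrIn : (JS.shadowF Wf).card ≤ (Tv.filter (fun t => r ∈ t)).card := by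
      rw [← hShcard]
      exact Finset.card_le_card hShsub
    have hrOut : k * (n - k - 1) + (JS.NexcF (Finset.univ.erase r) k x.val Wf).card ≤
        (Tv.filter (fun t => r ∉ t)).card := by
      rw [← hΦcard, ← Finset.card_union_of_disjoint hdisjΦN]
      exact Finset.card_le_card (Finset.union_subset hΦsub hNsub)
    omega
end
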